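/- arXiv:math/0610030 — 5 statements merged into one kernel-verified Lean document; each statement's English description precedes it below -/
import Mathlib

section
/- Let A be a finite nonempty set of positive integers and let τ be the POP 1'-2-1''. Then in the formal power series ring ℚ⟦x,y⟧ one has Σ_{n,m≥0} |C_{n;m}^A(τ)| x^n y^m = 1/∏_{a∈A}(1−x^a y)² − Σ_{a∈A} x^a y / ∏_{b∈A, b≥a}(1−x^b y)², where each factor (1−x^a y) is invertible in ℚ⟦x,y⟧. -/
/-- A composition of `n` with `m` parts, all parts in `A`. -/
def IsCompOf (A : Finset ℕ) (n m : ℕ) (σ : List ℕ) : Prop :=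
  (∀ x ∈ σ, x ∈ A) ∧ σ.sum = n ∧ σ.length = m

/-- `σ` contains the POP 1'-2-1'': there are indices `i < j` with `j+1` still a valid
position, such that `σ i < σ j` and `σ (j+1) < σ j` (0-indexed). -/
def Contains121 (σ : List ℕ) : Prop :=
  ∃ i j : ℕ, i < j ∧ j + 1 < σ.length ∧
    σ.getD i 0 < σ.getD j 0 ∧ σ.getD (j + 1) 0 < σ.getD j 0

/-- The number of compositions of `n` with `m` parts in `A` avoiding 1'-2-1''. -/
noncomputable def count121 (A : Finset ℕ) (n m : ℕ) : ℕ :=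
  Set.ncard {σ : List ℕ | IsCompOf A n m σ ∧ ¬ Contains121 σ}

namespace POP121

open MvPowerSeries

abbrev PS := MvPowerSeries (Fin 2) ℚ

noncomputable def mk2 (f : ℕ → ℕ → ℚ) : PS := fun d => f (d 0) (d 1)

noncomputable def sg (n m : ℕ) : Fin 2 →₀ ℕ := Finsupp.single 0 n + Finsupp.single 1 m

@[simp] lemma sg_apply0 (n m : ℕ) : sg n m 0 = n := by
  simp [sg, Finsupp.single_apply]

@[simp] lemma sg_apply1 (n m : ℕ) : sg n m 1 = m := by
  simp [sg, Finsupp.single_apply]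

lemma coeff_mk2 (f : ℕ → ℕ → ℚ) (n m : ℕ) :
    MvPowerSeries.coeff (sg n m) (mk2 f) = f n m := by
  rw [MvPowerSeries.coeff_apply]
  show f (sg n m 0) (sg n m 1) = f n m
  rw [sg_apply0, sg_apply1]

lemma sg_decomp (d : Fin 2 →₀ ℕ) : d = sg (d 0) (d 1) := by
  ext x
  fin_cases x
  · simp
  · simp

lemma ps_ext {f g : PS} (h : ∀ n m, MvPowerSeries.coeff (sg n m) f
    = MvPowerSeries.coeff (sg n m) g) : f = g := by
  apply MvPowerSeries.ext
  intro d
  rw [sg_decomp d]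
  exact h _ _

lemma sg_eq_zero_iff (n m : ℕ) : sg n m = 0 ↔ n = 0 ∧ m = 0 := by
  constructor
  · intro h
    constructor
    · have := congrArg (fun d : Fin 2 →₀ ℕ => d 0) h; simpa using this
    · have := congrArg (fun d : Fin 2 →₀ ℕ => d 1) h; simpa using this
  · rintro ⟨rfl, rfl⟩; simp [sg]

lemma coeff_one_sg (n m : ℕ) :
    MvPowerSeries.coeff (sg n m) (1 : PS) = if n = 0 ∧ m = 0 then 1 else 0 := by
  classical
  rw [MvPowerSeries.coeff_one]
  simp only [sg_eq_zero_iff]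

lemma XX_eq_monomial (a : ℕ) :
    (X 0 : PS) ^ a * X 1 = MvPowerSeries.monomial (sg a 1) 1 := by
  rw [MvPowerSeries.X_pow_eq, MvPowerSeries.X, MvPowerSeries.monomial_mul_monomial, one_mul, sg]

lemma sg_le_iff (a b n m : ℕ) : sg a b ≤ sg n m ↔ a ≤ n ∧ b ≤ m := by
  constructor
  · intro h
    exact ⟨by simpa using h 0, by simpa using h 1⟩
  · rintro ⟨h1, h2⟩ x
    fin_cases x
    · simpa using h1
    · simpa using h2

lemma sg_sub (a b n m : ℕ) : sg n m - sg a b = sg (n - a) (m - b) := by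
  ext x
  rw [Finsupp.tsub_apply]
  fin_cases x
  · simp
  · simp

lemma coeff_mul_XX (f : PS) (a n m : ℕ) :
    MvPowerSeries.coeff (sg n m) (f * ((X 0 : PS) ^ a * X 1))
      = if a ≤ n ∧ 1 ≤ m then MvPowerSeries.coeff (sg (n - a) (m - 1)) f else 0 := by
  rw [XX_eq_monomial, MvPowerSeries.coeff_mul_monomial]
  simp only [sg_le_iff, sg_sub]
  split <;> simp

lemma coeff_XX_mul (f : PS) (a n m : ℕ) :
    MvPowerSeries.coeff (sg n m) (((X 0 : PS) ^ a * X 1) * f)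
      = if a ≤ n ∧ 1 ≤ m then MvPowerSeries.coeff (sg (n - a) (m - 1)) f else 0 := by
  rw [XX_eq_monomial, MvPowerSeries.coeff_monomial_mul]
  simp only [sg_le_iff, sg_sub]
  split <;> simp

/-- key recurrence lemma at series level -/
lemma mk2_mul_one_sub_XX (f g : ℕ → ℕ → ℚ) (a : ℕ)
    (hrec : ∀ n m, f n m = g n m + if a ≤ n ∧ 1 ≤ m then f (n - a) (m - 1) else 0) :
    mk2 f * (1 - (X 0 : PS) ^ a * X 1) = mk2 g := by
  apply ps_ext
  intro n m
  rw [mul_sub, mul_one, map_sub, coeff_mul_XX, coeff_mk2, coeff_mk2, coeff_mk2]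
  rw [hrec n m]
  split <;> ring


/-! ### Finsets of lists -/

def lists (S : Finset ℕ) : ℕ → Finset (List ℕ)
  | 0 => {[]}
  | m + 1 => (S ×ˢ lists S m).image fun p => p.1 :: p.2

lemma mem_lists (S : Finset ℕ) : ∀ (m : ℕ) (c : List ℕ),
    c ∈ lists S m ↔ c.length = m ∧ ∀ x ∈ c, x ∈ S := by
  intro m
  induction m with
  | zero =>
    intro c
    constructor
    · intro h
      simp only [lists, Finset.mem_singleton] at h
      subst h; simp
    · rintro ⟨h, -⟩
      rw [List.length_eq_zero_iff] at h
      subst h; simp [lists]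
  | succ m ih =>
    intro c
    cases c with
    | nil =>
      simp [lists]
    | cons a l =>
      simp only [lists, Finset.mem_image, Finset.mem_product, List.length_cons,
        Nat.succ.injEq, List.mem_cons]
      constructor
      · rintro ⟨⟨x, y⟩, ⟨hx, hy⟩, h⟩
        injection h with h1 h2
        subst h1; subst h2
        rw [ih] at hy
        refine ⟨hy.1, ?_⟩
        rintro z (rfl | hz)
        · exact hx
        · exact hy.2 z hz
      · rintro ⟨hl, hmem⟩
        refine ⟨(a, l), ⟨hmem a (Or.inl rfl), ?_⟩, rfl⟩
        rw [ih]
        exact ⟨hl, fun z hz => hmem z (Or.inr hz)⟩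

/-- Pairs of weakly increasing lists over `S1`, `S2` resp., total sum `n`, total length `m`. -/
def PF (S1 S2 : Finset ℕ) (n m : ℕ) : Finset (List ℕ × List ℕ) :=
  ((Finset.range (m + 1)).biUnion fun k => lists S1 k ×ˢ lists S2 (m - k)).filter
    fun p => p.1.Pairwise (· ≤ ·) ∧ p.2.Pairwise (· ≤ ·) ∧
      p.1.sum + p.2.sum = n ∧ p.1.length + p.2.length = m

lemma mem_PF {S1 S2 : Finset ℕ} {n m : ℕ} {p : List ℕ × List ℕ} :
    p ∈ PF S1 S2 n m ↔ (∀ x ∈ p.1, x ∈ S1) ∧ (∀ x ∈ p.2, x ∈ S2) ∧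
      p.1.Pairwise (· ≤ ·) ∧ p.2.Pairwise (· ≤ ·) ∧
      p.1.sum + p.2.sum = n ∧ p.1.length + p.2.length = m := by
  rw [PF, Finset.mem_filter, Finset.mem_biUnion]
  constructor
  · rintro ⟨⟨k, -, hk⟩, h1, h2, h3, h4⟩
    rw [Finset.mem_product, mem_lists, mem_lists] at hk
    exact ⟨hk.1.2, hk.2.2, h1, h2, h3, h4⟩
  · rintro ⟨m1, m2, h1, h2, h3, h4⟩
    refine ⟨⟨p.1.length, ?_, ?_⟩, h1, h2, h3, h4⟩
    · rw [Finset.mem_range]; omega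
    · rw [Finset.mem_product, mem_lists, mem_lists]
      exact ⟨⟨rfl, m1⟩, ⟨by omega, m2⟩⟩

/-- number of pairs of weakly increasing lists -/
def pc (S1 S2 : Finset ℕ) (n m : ℕ) : ℕ := (PF S1 S2 n m).card

lemma pc_empty (n m : ℕ) : pc ∅ ∅ n m = if n = 0 ∧ m = 0 then 1 else 0 := by
  rcases Classical.em (n = 0 ∧ m = 0) with ⟨rfl, rfl⟩ | h
  · rw [if_pos ⟨rfl, rfl⟩, pc]
    have hset : PF ∅ ∅ 0 0 = {([], [])} := by
      ext p
      rw [mem_PF]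
      simp only [Finset.notMem_empty, Finset.mem_singleton]
      constructor
      · rintro ⟨h1, h2, -, -, -, h6⟩
        have e1 : p.1 = [] := by
          cases hp : p.1 with
          | nil => rfl
          | cons a l => exact absurd (h1 a (by rw [hp]; simp)) (by simp)
        have e2 : p.2 = [] := by
          cases hp : p.2 with
          | nil => rfl
          | cons a l => exact absurd (h2 a (by rw [hp]; simp)) (by simp)
        rw [Prod.ext_iff]; exact ⟨e1, e2⟩
      · rintro rfl
        simp
    rw [hset, Finset.card_singleton]
  · rw [if_neg h, pc, Finset.card_eq_zero]
    ext p
    rw [mem_PF]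
    simp only [Finset.notMem_empty, Finset.notMem_empty, iff_false]
    rintro ⟨h1, h2, -, -, h5, h6⟩
    have e1 : p.1 = [] := by
      cases hp : p.1 with
      | nil => rfl
      | cons a l => exact absurd (h1 a (by rw [hp]; simp)) (by simp)
    have e2 : p.2 = [] := by
      cases hp : p.2 with
      | nil => rfl
      | cons a l => exact absurd (h2 a (by rw [hp]; simp)) (by simp)
    rw [e1, e2] at h5 h6
    simp at h5 h6
    exact h ⟨h5.symm ▸ rfl, by omega⟩

lemma pc_swap (S1 S2 : Finset ℕ) (n m : ℕ) : pc S1 S2 n m = pc S2 S1 n m := by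
  apply Finset.card_bij (fun p _ => (p.2, p.1))
  · intro p hp
    rw [mem_PF] at hp ⊢
    obtain ⟨h1, h2, h3, h4, h5, h6⟩ := hp
    exact ⟨h2, h1, h4, h3, by dsimp only; omega, by dsimp only; omega⟩
  · intro p hp q hq h
    rw [Prod.ext_iff] at h ⊢
    exact ⟨h.2, h.1⟩
  · intro p hp
    refine ⟨(p.2, p.1), ?_, rfl⟩
    rw [mem_PF] at hp ⊢
    obtain ⟨h1, h2, h3, h4, h5, h6⟩ := hp
    exact ⟨h2, h1, h4, h3, by dsimp only; omega, by dsimp only; omega⟩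


lemma cons_of_mem_sorted {a : ℕ} {l : List ℕ} (hs : l.Pairwise (· ≤ ·)) (hmem : a ∈ l)
    (hall : ∀ x ∈ l, a ≤ x) : l = a :: l.tail := by
  cases l with
  | nil => simp at hmem
  | cons b t =>
    rw [List.pairwise_cons] at hs
    have hba : b = a := by
      rcases List.mem_cons.1 hmem with rfl | h
      · rfl
      · exact (le_antisymm (hall b (List.mem_cons_self)) (hs.1 a h)).symm
    rw [hba]
    rfl

lemma pc_peel {a : ℕ} {S T : Finset ℕ} (haS : a ∉ S) (ha : ∀ x ∈ S, a ≤ x) (n m : ℕ) :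
    pc (insert a S) T n m
      = pc S T n m + if a ≤ n ∧ 1 ≤ m then pc (insert a S) T (n - a) (m - 1) else 0 := by
  classical
  have hins : ∀ x ∈ insert a S, a ≤ x := by
    intro x hx
    rcases Finset.mem_insert.1 hx with rfl | h
    · exact le_rfl
    · exact ha x h
  have hsplit := Finset.card_filter_add_card_filter_not
    (s := PF (insert a S) T n m) (p := fun p => a ∈ p.1)
  have h1 : (PF (insert a S) T n m).filter (fun p => ¬ a ∈ p.1) = PF S T n m := by
    ext p
    rw [Finset.mem_filter, mem_PF, mem_PF]
    constructor
    · rintro ⟨⟨h1, h2, h3, h4, h5, h6⟩, hna⟩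
      refine ⟨fun x hx => ?_, h2, h3, h4, h5, h6⟩
      rcases Finset.mem_insert.1 (h1 x hx) with rfl | h
      · exact absurd hx hna
      · exact h
    · rintro ⟨h1, h2, h3, h4, h5, h6⟩
      exact ⟨⟨fun x hx => Finset.mem_insert_of_mem (h1 x hx), h2, h3, h4, h5, h6⟩,
        fun hmem => haS (h1 a hmem)⟩
  have h2 : ((PF (insert a S) T n m).filter (fun p => a ∈ p.1)).card
      = if a ≤ n ∧ 1 ≤ m then pc (insert a S) T (n - a) (m - 1) else 0 := by
    split
    case isTrue hg =>
      apply Finset.card_bij (fun p _ => (p.1.tail, p.2))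
      · intro p hp
        rw [Finset.mem_filter, mem_PF] at hp
        obtain ⟨⟨h1, h2, h3, h4, h5, h6⟩, hmem⟩ := hp
        have hcons := cons_of_mem_sorted h3 hmem (fun x hx => hins x (h1 x hx))
        have hsum : p.1.sum = a + p.1.tail.sum := by
          conv_lhs => rw [hcons]
          rw [List.sum_cons]
        have hlen : p.1.length = p.1.tail.length + 1 := by
          conv_lhs => rw [hcons]
          rw [List.length_cons]
        have htsort : p.1.tail.Pairwise (· ≤ ·) := by
          have := hcons ▸ h3
          exact (List.pairwise_cons.1 this).2
        rw [mem_PF]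
        refine ⟨fun x hx => h1 x (by rw [hcons]; exact List.mem_cons_of_mem _ hx), h2,
          htsort, h4, by dsimp only; omega, by dsimp only; omega⟩
      · intro p hp q hq hpq
        rw [Finset.mem_filter, mem_PF] at hp hq
        obtain ⟨⟨p1, p2, p3, -, -, -⟩, pmem⟩ := hp
        obtain ⟨⟨q1, q2, q3, -, -, -⟩, qmem⟩ := hq
        have hp' := cons_of_mem_sorted p3 pmem (fun x hx => hins x (p1 x hx))
        have hq' := cons_of_mem_sorted q3 qmem (fun x hx => hins x (q1 x hx))
        injection hpq with h1 h2
        have : p.1 = q.1 := by rw [hp', hq', h1]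
        exact Prod.ext this h2
      · intro q hq
        rw [mem_PF] at hq
        obtain ⟨q1, q2, q3, q4, q5, q6⟩ := hq
        refine ⟨(a :: q.1, q.2), ?_, ?_⟩
        · rw [Finset.mem_filter, mem_PF]
          refine ⟨⟨?_, q2, ?_, q4, ?_, ?_⟩, List.mem_cons_self⟩
          · rintro x hx
            rcases List.mem_cons.1 hx with rfl | h
            · exact Finset.mem_insert_self _ _
            · exact q1 x h
          · rw [List.pairwise_cons]
            exact ⟨fun b hb => hins b (q1 b hb), q3⟩
          · dsimp only
            rw [List.sum_cons]
            omega
          · dsimp only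
            rw [List.length_cons]
            omega
        · rfl
    case isFalse hg =>
      rw [Finset.card_eq_zero]
      ext p
      simp only [Finset.mem_filter, Finset.notMem_empty, iff_false, not_and]
      intro hp hmem
      rw [mem_PF] at hp
      obtain ⟨h1, h2, h3, h4, h5, h6⟩ := hp
      have hcons := cons_of_mem_sorted h3 hmem (fun x hx => hins x (h1 x hx))
      have hsum : p.1.sum = a + p.1.tail.sum := by
        conv_lhs => rw [hcons]
        rw [List.sum_cons]
      have hlen : p.1.length = p.1.tail.length + 1 := by
        conv_lhs => rw [hcons]
        rw [List.length_cons]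
      exact hg ⟨by omega, by omega⟩
  rw [pc, ← hsplit, h2, h1, add_comm]
  rfl


lemma series_inverse (S : Finset ℕ) :
    mk2 (fun n m => (pc S S n m : ℚ)) * ∏ b ∈ S, (1 - (X 0 : PS) ^ b * X 1) ^ 2 = 1 := by
  induction S using Finset.induction_on_min with
  | empty =>
    rw [Finset.prod_empty, mul_one]
    apply ps_ext
    intro n m
    rw [coeff_mk2, coeff_one_sg, pc_empty]
    split <;> simp
  | insert a S hlt ih =>
    have haS : a ∉ S := fun h => lt_irrefl a (hlt a h)
    have ha : ∀ x ∈ S, a ≤ x := fun x hx => le_of_lt (hlt x hx)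
    have hrec1 : mk2 (fun n m => (pc (insert a S) (insert a S) n m : ℚ))
        * (1 - (X 0 : PS) ^ a * X 1)
        = mk2 (fun n m => (pc S (insert a S) n m : ℚ)) := by
      apply mk2_mul_one_sub_XX
      intro n m
      rw [pc_peel haS ha n m]
      push_cast [apply_ite (fun x : ℕ => (x : ℚ))]
      ring
    have hrec2 : mk2 (fun n m => (pc (insert a S) S n m : ℚ)) * (1 - (X 0 : PS) ^ a * X 1)
        = mk2 (fun n m => (pc S S n m : ℚ)) := by
      apply mk2_mul_one_sub_XX
      intro n m
      rw [pc_peel haS ha n m]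
      push_cast [apply_ite (fun x : ℕ => (x : ℚ))]
      ring
    have hswap : mk2 (fun n m => (pc S (insert a S) n m : ℚ))
        = mk2 (fun n m => (pc (insert a S) S n m : ℚ)) :=
      congrArg mk2 (funext fun n => funext fun m => by rw [pc_swap])
    rw [Finset.prod_insert haS]
    have hassoc : mk2 (fun n m => (pc (insert a S) (insert a S) n m : ℚ)) *
        ((1 - (X 0 : PS) ^ a * X 1) ^ 2 * ∏ b ∈ S, (1 - (X 0 : PS) ^ b * X 1) ^ 2)
        = ((mk2 (fun n m => (pc (insert a S) (insert a S) n m : ℚ))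
            * (1 - (X 0 : PS) ^ a * X 1)) * (1 - (X 0 : PS) ^ a * X 1))
          * ∏ b ∈ S, (1 - (X 0 : PS) ^ b * X 1) ^ 2 := by ring
    rw [hassoc, hrec1, hswap, hrec2, ih]

lemma cc_prod (S : Finset ℕ) :
    MvPowerSeries.constantCoeff (∏ b ∈ S, (1 - (X 0 : PS) ^ b * X 1) ^ 2) = 1 := by
  rw [map_prod]
  apply Finset.prod_eq_one
  intro b _
  simp

lemma inv_prod (S : Finset ℕ) :
    (∏ b ∈ S, (1 - (X 0 : PS) ^ b * X 1) ^ 2)⁻¹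
      = mk2 (fun n m => (pc S S n m : ℚ)) := by
  rw [eq_comm, MvPowerSeries.eq_inv_iff_mul_eq_one]
  · exact series_inverse S
  · rw [cc_prod]
    exact one_ne_zero

lemma isUnit_one_sub_XX (a : ℕ) : IsUnit (1 - (X 0 : PS) ^ a * X 1) := by
  have h := series_inverse {a}
  rw [Finset.prod_singleton] at h
  have : IsUnit ((1 - (X 0 : PS) ^ a * X 1) ^ 2) :=
    IsUnit.of_mul_eq_one _ (by rw [mul_comm] at h; exact h)
  exact (isUnit_pow_iff (two_ne_zero)).mp this


/-! ### maximal weakly decreasing prefix -/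

def dpl : List ℕ → ℕ
  | [] => 0
  | [_] => 1
  | x :: y :: t => if y ≤ x then 1 + dpl (y :: t) else 1

lemma dpl_pos {σ : List ℕ} (h : σ ≠ []) : 1 ≤ dpl σ := by
  match σ with
  | [x] => simp [dpl]
  | x :: y :: t => simp only [dpl]; split <;> omega

lemma dpl_le : ∀ σ : List ℕ, dpl σ ≤ σ.length
  | [] => by simp [dpl]
  | [x] => by simp [dpl]
  | x :: y :: t => by
    have ih := dpl_le (y :: t)
    simp only [dpl]
    split
    · simp only [List.length_cons] at ih ⊢
      omega
    · simp only [List.length_cons]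
      omega

lemma sorted_ge_head {x : ℕ} {l : List ℕ} (h : (x :: l).Pairwise (· ≥ ·)) :
    ∀ b ∈ x :: l, b ≤ x := by
  rw [List.pairwise_cons] at h
  intro b hb
  rcases List.mem_cons.1 hb with rfl | hb'
  · exact le_rfl
  · exact h.1 b hb'

lemma take_dpl_sorted : ∀ σ : List ℕ, (σ.take (dpl σ)).Pairwise (· ≥ ·)
  | [] => by simp [dpl]
  | [x] => by simp [dpl]
  | x :: y :: t => by
    have ih := take_dpl_sorted (y :: t)
    simp only [dpl]
    split
    case isTrue hyx =>
      have h1 : 1 ≤ dpl (y :: t) := dpl_pos (by simp)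
      have hshape : (y :: t).take (dpl (y :: t)) = y :: t.take (dpl (y :: t) - 1) := by
        conv_lhs => rw [show dpl (y :: t) = (dpl (y :: t) - 1) + 1 by omega]
        rw [List.take_succ_cons]
      rw [show 1 + dpl (y :: t) = (dpl (y :: t)) + 1 by omega, List.take_succ_cons]
      rw [List.pairwise_cons]
      constructor
      · intro b hb
        rw [hshape] at hb
        have hb' : b ≤ y := sorted_ge_head (hshape ▸ ih) b (hshape ▸ hb)
        exact le_trans hb' hyx
      · exact ih
    case isFalse h =>
      simp

lemma dpl_ascent : ∀ σ : List ℕ, dpl σ < σ.length →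
    σ.getD (dpl σ - 1) 0 < σ.getD (dpl σ) 0
  | [] => by simp [dpl]
  | [x] => by simp [dpl]
  | x :: y :: t => by
    intro hlen
    have h1 : 1 ≤ dpl (y :: t) := dpl_pos (by simp)
    simp only [dpl] at hlen ⊢
    split
    case isTrue hyx =>
      rw [if_pos hyx] at hlen
      have ih := dpl_ascent (y :: t) (by simp only [List.length_cons] at hlen ⊢; omega)
      rw [show 1 + dpl (y :: t) - 1 = (dpl (y :: t) - 1) + 1 by omega,
          show 1 + dpl (y :: t) = dpl (y :: t) + 1 by omega]
      rw [List.getD_cons_succ, List.getD_cons_succ]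
      exact ih
    case isFalse hxy =>
      have e1 : (x :: y :: t).getD (1 - 1) 0 = x := rfl
      have e2 : (x :: y :: t).getD 1 0 = y := rfl
      rw [e1, e2]
      omega

lemma dpl_spec : ∀ (δ ι : List ℕ), δ.Pairwise (· ≥ ·) → ι.Pairwise (· ≤ ·) →
    (ι = [] ∨ ∃ w ∈ δ, w < ι.headI) → dpl (δ ++ ι) = δ.length
  | [], ι, _, _, hJ => by
    rcases hJ with rfl | ⟨w, hw, -⟩
    · simp [dpl]
    · simp at hw
  | [x], ι, _, hι, hJ => by
    rcases hJ with rfl | ⟨w, hw, hlt⟩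
    · simp [dpl]
    · simp only [List.mem_singleton] at hw
      subst hw
      cases ι with
      | nil => simp [dpl]
      | cons h t =>
        show dpl (w :: h :: t) = 1
        have : ¬ h ≤ w := by
          simp only [List.headI] at hlt
          omega
        simp only [dpl, if_neg this, List.length_singleton]
  | x :: y :: δ', ι, hδ, hι, hJ => by
    have hyx : y ≤ x := by
      rw [List.pairwise_cons] at hδ
      exact hδ.1 y (List.mem_cons_self)
    have hJ' : ι = [] ∨ ∃ w ∈ y :: δ', w < ι.headI := by
      rcases hJ with rfl | ⟨w, hw, hlt⟩
      · exact Or.inl rfl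
      · rcases List.mem_cons.1 hw with rfl | hw'
        · exact Or.inr ⟨y, List.mem_cons_self, lt_of_le_of_lt hyx hlt⟩
        · exact Or.inr ⟨w, hw', hlt⟩
    have ih := dpl_spec (y :: δ') ι (List.pairwise_cons.1 hδ).2 hι hJ'
    have e : (x :: y :: δ') ++ ι = x :: y :: (δ' ++ ι) := rfl
    rw [List.cons_append] at ih
    rw [e]
    simp only [dpl]
    rw [if_pos hyx, ih]
    simp only [List.length_cons]
    omega


/-! ### avoidance characterization -/

lemma avoid_of_split {δ ι : List ℕ} (hδ : δ.Pairwise (· ≥ ·)) (hι : ι.Pairwise (· ≤ ·)) :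
    ¬ Contains121 (δ ++ ι) := by
  rintro ⟨i, j, hij, hj1, h1, h2⟩
  have hlen : (δ ++ ι).length = δ.length + ι.length := List.length_append
  have hi : i < (δ ++ ι).length := by omega
  have hj : j < (δ ++ ι).length := by omega
  rw [List.getD_eq_getElem _ _ hi, List.getD_eq_getElem _ _ hj] at h1
  rw [List.getD_eq_getElem _ _ hj1, List.getD_eq_getElem _ _ hj] at h2
  by_cases hjk : j < δ.length
  · have e1 : (δ ++ ι)[i]'hi = δ[i]'(by omega) := List.getElem_append_left (by omega)
    have e2 : (δ ++ ι)[j]'hj = δ[j]'hjk := List.getElem_append_left hjk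
    have hge := (List.pairwise_iff_getElem.1 hδ) i j (by omega) hjk hij
    rw [e1, e2] at h1
    exact absurd h1 (not_lt.2 hge)
  · push_neg at hjk
    have hjι : j - δ.length < ι.length := by omega
    have hjι1 : j + 1 - δ.length < ι.length := by omega
    have e2 : (δ ++ ι)[j]'hj = ι[j - δ.length]'hjι := List.getElem_append_right hjk
    have e3 : (δ ++ ι)[j+1]'hj1 = ι[j + 1 - δ.length]'hjι1 :=
      List.getElem_append_right (by omega)
    have hle := (List.pairwise_iff_getElem.1 hι) (j - δ.length) (j + 1 - δ.length)
      hjι hjι1 (by omega)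
    rw [e2, e3] at h2
    exact absurd h2 (not_lt.2 hle)

lemma not_sorted_exists_descent {l : List ℕ} (h : ¬ l.Pairwise (· ≤ ·)) :
    ∃ i, i + 1 < l.length ∧ l.getD (i + 1) 0 < l.getD i 0 := by
  rw [← List.isChain_iff_pairwise, List.isChain_iff_getElem] at h
  push_neg at h
  obtain ⟨i, hi, hlt⟩ := h
  have hi' : i + 1 < l.length := by omega
  refine ⟨i, hi', ?_⟩
  rw [List.getD_eq_getElem _ _ (show i < l.length by omega), List.getD_eq_getElem _ _ hi']
  omega

lemma drop_sorted_of_avoid {σ : List ℕ} (h : ¬ Contains121 σ) :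
    (σ.drop (dpl σ)).Pairwise (· ≤ ·) := by
  classical
  by_contra hns
  obtain ⟨i, hi1, hdesc⟩ := not_sorted_exists_descent hns
  have hdl : (σ.drop (dpl σ)).length = σ.length - dpl σ := List.length_drop
  have hkl : dpl σ < σ.length := by omega
  have hk1 : 1 ≤ dpl σ := dpl_pos (by rintro rfl; simp at hkl)
  have hlt1 : dpl σ + i < σ.length := by omega
  have hlt2 : dpl σ + i + 1 < σ.length := by omega
  have e1 : (σ.drop (dpl σ)).getD i 0 = σ.getD (dpl σ + i) 0 := by
    rw [List.getD_eq_getElem _ _ (show i < (σ.drop (dpl σ)).length by omega),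
        List.getD_eq_getElem _ _ hlt1]
    exact List.getElem_drop
  have e2 : (σ.drop (dpl σ)).getD (i + 1) 0 = σ.getD (dpl σ + (i + 1)) 0 := by
    rw [List.getD_eq_getElem _ _ (show i + 1 < (σ.drop (dpl σ)).length by omega),
        List.getD_eq_getElem _ _ (show dpl σ + (i + 1) < σ.length by omega)]
    exact List.getElem_drop
  rw [e1, e2, show dpl σ + (i + 1) = dpl σ + i + 1 from by omega] at hdesc
  have hD : ∃ j, j + 1 < σ.length ∧ dpl σ ≤ j ∧ σ.getD (j + 1) 0 < σ.getD j 0 :=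
    ⟨dpl σ + i, by omega, by omega, hdesc⟩
  set j0 := Nat.find hD with hj0
  obtain ⟨hj0len, hj0k, hj0desc⟩ := Nat.find_spec hD
  have chain : ∀ t, dpl σ ≤ t → t ≤ j0 → σ.getD (dpl σ) 0 ≤ σ.getD t 0 := by
    intro t
    induction t with
    | zero =>
      intro h1 h2
      have : dpl σ = 0 := by omega
      rw [this]
    | succ t iht =>
      intro h1 h2
      rcases Nat.lt_or_ge (dpl σ) (t + 1) with hlt | hge
      · have ht : dpl σ ≤ t := by omega
        have h3 := iht ht (by omega)
        have hnd := Nat.find_min hD (show t < j0 by omega)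
        have hle : ¬ (σ.getD (t + 1) 0 < σ.getD t 0) := fun hc => hnd ⟨by omega, ht, hc⟩
        omega
      · have : dpl σ = t + 1 := by omega
        rw [this]
  have hchain := chain j0 hj0k le_rfl
  have hasc := dpl_ascent σ hkl
  exact h ⟨dpl σ - 1, j0, by omega, hj0len, by omega, hj0desc⟩


/-! ### the avoider finset and the master identity -/

open scoped Classical

noncomputable def AV (A : Finset ℕ) (n m : ℕ) : Finset (List ℕ) :=
  (lists A m).filter (fun σ => σ.sum = n ∧ ¬ Contains121 σ)

lemma mem_AV {A : Finset ℕ} {n m : ℕ} {σ : List ℕ} :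
    σ ∈ AV A n m ↔ (∀ x ∈ σ, x ∈ A) ∧ σ.sum = n ∧ σ.length = m ∧ ¬ Contains121 σ := by
  rw [AV, Finset.mem_filter, mem_lists]
  tauto

lemma count121_eq (A : Finset ℕ) (n m : ℕ) : count121 A n m = (AV A n m).card := by
  rw [count121]
  have hset : {σ : List ℕ | IsCompOf A n m σ ∧ ¬ Contains121 σ} = ↑(AV A n m) := by
    ext σ
    rw [Set.mem_setOf_eq, Finset.mem_coe, mem_AV, IsCompOf]
    tauto
  rw [hset, Set.ncard_coe_finset]

def GoodP (p : List ℕ × List ℕ) : Prop := p.2 = [] ∨ ∃ w ∈ p.1, w < p.2.headI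

lemma headI_drop {σ : List ℕ} {k : ℕ} (h : k < σ.length) :
    (σ.drop k).headI = σ.getD k 0 := by
  have h0 : 0 < (σ.drop k).length := by
    rw [List.length_drop]
    omega
  have e : (σ.drop k).headI = (σ.drop k).getD 0 0 := by
    cases hd : σ.drop k with
    | nil => rw [hd] at h0; simp at h0
    | cons a t => rfl
  rw [e, List.getD_eq_getElem _ _ h0, List.getD_eq_getElem _ _ h]
  have := List.getElem_drop (xs := σ) (i := k) (j := 0) (h := h0)
  simpa using this

lemma sorted_rev_ge {l : List ℕ} (h : l.Pairwise (· ≤ ·)) : l.reverse.Pairwise (· ≥ ·) := by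
  rw [List.pairwise_reverse]
  exact h

lemma sorted_rev_le {l : List ℕ} (h : l.Pairwise (· ≥ ·)) : l.reverse.Pairwise (· ≤ ·) := by
  rw [List.pairwise_reverse]
  exact h

lemma good_card (A : Finset ℕ) (n m : ℕ) :
    ((PF A A n m).filter GoodP).card = (AV A n m).card := by
  apply Finset.card_nbij' (fun p => p.1.reverse ++ p.2)
    (fun σ => ((σ.take (dpl σ)).reverse, σ.drop (dpl σ)))
  · -- forward membership
    intro p hp
    rw [Finset.mem_coe, Finset.mem_filter] at hp
    obtain ⟨hp, hgood⟩ := hp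
    rw [mem_PF] at hp
    obtain ⟨h1, h2, h3, h4, h5, h6⟩ := hp
    rw [Finset.mem_coe, mem_AV]
    refine ⟨?_, ?_, ?_, avoid_of_split (sorted_rev_ge h3) h4⟩
    · intro x hx
      rcases List.mem_append.1 hx with hx | hx
      · exact h1 x (List.mem_reverse.1 hx)
      · exact h2 x hx
    · rw [List.sum_append, List.sum_reverse]
      exact h5
    · rw [List.length_append, List.length_reverse]
      exact h6
  · -- backward membership
    intro σ hσ
    rw [Finset.mem_coe, mem_AV] at hσ
    obtain ⟨h1, h2, h3, h4⟩ := hσ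
    rw [Finset.mem_coe, Finset.mem_filter, mem_PF]
    have htake : ∀ x ∈ σ.take (dpl σ), x ∈ σ := fun x hx => List.mem_of_mem_take hx
    have hdrop : ∀ x ∈ σ.drop (dpl σ), x ∈ σ := fun x hx => List.mem_of_mem_drop hx
    refine ⟨⟨?_, ?_, sorted_rev_le (take_dpl_sorted σ), drop_sorted_of_avoid h4, ?_, ?_⟩, ?_⟩
    · intro x hx
      exact h1 x (htake x (List.mem_reverse.1 hx))
    · intro x hx
      exact h1 x (hdrop x hx)
    · dsimp only
      rw [List.sum_reverse, ← List.sum_append, List.take_append_drop]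
      exact h2
    · dsimp only
      rw [List.length_reverse, ← List.length_append, List.take_append_drop]
      exact h3
    · -- goodness
      rcases Classical.em (σ.drop (dpl σ) = []) with hd | hd
      · exact Or.inl hd
      · right
        have hlen0 : σ ≠ [] := by
          intro he
          rw [he] at hd
          simp [dpl] at hd
        have hkl : dpl σ < σ.length := by
          rcases Nat.lt_or_ge (dpl σ) σ.length with h | h
          · exact h
          · exact absurd (List.drop_eq_nil_of_le h) hd
        have hk1 : 1 ≤ dpl σ := dpl_pos hlen0
        refine ⟨σ.getD (dpl σ - 1) 0, ?_, ?_⟩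
        · rw [List.mem_reverse]
          have hlt : dpl σ - 1 < (σ.take (dpl σ)).length := by
            rw [List.length_take]
            omega
          have e : (σ.take (dpl σ))[dpl σ - 1]'hlt = σ[dpl σ - 1]'(by omega) :=
            List.getElem_take
          rw [List.getD_eq_getElem _ _ (show dpl σ - 1 < σ.length by omega), ← e]
          exact List.getElem_mem hlt
        · rw [headI_drop hkl]
          exact dpl_ascent σ hkl
  · -- left inverse
    intro p hp
    rw [Finset.mem_coe, Finset.mem_filter] at hp
    obtain ⟨hp, hgood⟩ := hp
    rw [mem_PF] at hp
    obtain ⟨h1, h2, h3, h4, h5, h6⟩ := hp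
    have hJ : p.2 = [] ∨ ∃ w ∈ p.1.reverse, w < p.2.headI := by
      rcases hgood with hg | ⟨w, hw, hlt⟩
      · exact Or.inl hg
      · exact Or.inr ⟨w, List.mem_reverse.2 hw, hlt⟩
    have hdpl : dpl (p.1.reverse ++ p.2) = p.1.reverse.length :=
      dpl_spec p.1.reverse p.2 (sorted_rev_ge h3) h4 hJ
    dsimp only
    rw [hdpl, List.take_left, List.drop_left, List.reverse_reverse]
  · -- right inverse
    intro σ hσ
    dsimp only
    rw [List.reverse_reverse, List.take_append_drop]

lemma bad_card (A : Finset ℕ) (n m a : ℕ) (ha : a ∈ A) :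
    ((PF A A n m).filter (fun p => ¬ GoodP p ∧ p.2.headI = a)).card
      = if a ≤ n ∧ 1 ≤ m then
          pc (A.filter (a ≤ ·)) (A.filter (a ≤ ·)) (n - a) (m - 1) else 0 := by
  have key : ∀ p ∈ PF A A n m, ¬ GoodP p → p.2.headI = a →
      p.2 = a :: p.2.tail ∧ (∀ w ∈ p.1, a ≤ w) := by
    intro p hp hng hhead
    rw [GoodP] at hng
    push_neg at hng
    obtain ⟨hne, hall⟩ := hng
    constructor
    · cases hd : p.2 with
      | nil => exact absurd hd hne
      | cons b t =>
        rw [hd, List.headI_cons] at hhead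
        subst hhead
        rfl
    · intro w hw
      have h1 := hall w hw
      omega
  split
  case isTrue hg =>
    apply Finset.card_nbij' (fun p => (p.1, p.2.tail)) (fun p => (p.1, a :: p.2))
    · -- forward membership
      intro p hp
      rw [Finset.mem_coe, Finset.mem_filter] at hp
      obtain ⟨hpf, hng, hhead⟩ := hp
      obtain ⟨hcons, hge⟩ := key p hpf hng hhead
      rw [mem_PF] at hpf
      obtain ⟨h1, h2, h3, h4, h5, h6⟩ := hpf
      have h4' : (a :: p.2.tail).Pairwise (· ≤ ·) := hcons ▸ h4
      rw [List.pairwise_cons] at h4'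
      have hsum : p.2.sum = a + p.2.tail.sum := by
        conv_lhs => rw [hcons]
        rw [List.sum_cons]
      have hlen : p.2.length = p.2.tail.length + 1 := by
        conv_lhs => rw [hcons]
        rw [List.length_cons]
      rw [Finset.mem_coe, mem_PF]
      refine ⟨?_, ?_, h3, h4'.2, by dsimp only; omega, by dsimp only; omega⟩
      · intro x hx
        rw [Finset.mem_filter]
        exact ⟨h1 x hx, hge x hx⟩
      · intro x hx
        rw [Finset.mem_filter]
        refine ⟨h2 x (by rw [hcons]; exact List.mem_cons_of_mem _ hx), h4'.1 x hx⟩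
    · -- backward membership
      intro p hp
      rw [Finset.mem_coe, mem_PF] at hp
      obtain ⟨h1, h2, h3, h4, h5, h6⟩ := hp
      have h1' : ∀ x ∈ p.1, x ∈ A ∧ a ≤ x := by
        intro x hx
        have hm := h1 x hx
        rw [Finset.mem_filter] at hm
        exact hm
      have h2' : ∀ x ∈ p.2, x ∈ A ∧ a ≤ x := by
        intro x hx
        have hm := h2 x hx
        rw [Finset.mem_filter] at hm
        exact hm
      rw [Finset.mem_coe, Finset.mem_filter, mem_PF]
      refine ⟨⟨?_, ?_, h3, ?_, by dsimp only; rw [List.sum_cons]; omega,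
        by dsimp only; rw [List.length_cons]; omega⟩, ?_, by rw [List.headI_cons]⟩
      · intro x hx
        exact (h1' x hx).1
      · rintro x hx
        rcases List.mem_cons.1 hx with rfl | hx'
        · exact ha
        · exact (h2' x hx').1
      · rw [List.pairwise_cons]
        exact ⟨fun b hb => (h2' b hb).2, h4⟩
      · rw [GoodP]
        push_neg
        refine ⟨by simp, ?_⟩
        intro w hw
        have hge := (h1' w hw).2
        rw [List.headI_cons]
        omega
    · -- left inverse
      intro p hp
      rw [Finset.mem_coe, Finset.mem_filter] at hp
      obtain ⟨hpf, hng, hhead⟩ := hp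
      obtain ⟨hcons, -⟩ := key p hpf hng hhead
      dsimp only
      rw [Prod.ext_iff]
      exact ⟨rfl, hcons.symm⟩
    · -- right inverse
      intro p hp
      dsimp only
      rw [Prod.ext_iff]
      exact ⟨rfl, rfl⟩
  case isFalse hg =>
    rw [Finset.card_eq_zero]
    ext p
    simp only [Finset.mem_filter, Finset.notMem_empty, iff_false, not_and]
    intro hpf hng hhead
    obtain ⟨hcons, -⟩ := key p hpf hng hhead
    rw [mem_PF] at hpf
    obtain ⟨-, -, -, -, h5, h6⟩ := hpf
    have hsum : p.2.sum = a + p.2.tail.sum := by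
      conv_lhs => rw [hcons]
      rw [List.sum_cons]
    have hlen : p.2.length = p.2.tail.length + 1 := by
      conv_lhs => rw [hcons]
      rw [List.length_cons]
    exact hg ⟨by omega, by omega⟩

lemma master (A : Finset ℕ) (n m : ℕ) :
    pc A A n m = count121 A n m + ∑ a ∈ A,
      (if a ≤ n ∧ 1 ≤ m then
        pc (A.filter (a ≤ ·)) (A.filter (a ≤ ·)) (n - a) (m - 1) else 0) := by
  have hsplit := Finset.card_filter_add_card_filter_not
    (s := PF A A n m) (p := GoodP)
  have hbadsplit : (PF A A n m).filter (fun p => ¬ GoodP p)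
      = A.biUnion (fun a => (PF A A n m).filter (fun p => ¬ GoodP p ∧ p.2.headI = a)) := by
    ext p
    simp only [Finset.mem_biUnion, Finset.mem_filter]
    constructor
    · rintro ⟨hp, hng⟩
      refine ⟨p.2.headI, ?_, hp, hng, rfl⟩
      have hne : p.2 ≠ [] := fun he => hng (Or.inl he)
      rw [mem_PF] at hp
      cases hd : p.2 with
      | nil => exact absurd hd hne
      | cons b t =>
        rw [List.headI_cons]
        exact hp.2.1 b (by rw [hd]; exact List.mem_cons_self)
    · rintro ⟨x, hx, hp, hng, -⟩
      exact ⟨hp, hng⟩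
  have hdisj : ∀ x ∈ A, ∀ y ∈ A, x ≠ y →
      Disjoint ((PF A A n m).filter (fun p => ¬ GoodP p ∧ p.2.headI = x))
        ((PF A A n m).filter (fun p => ¬ GoodP p ∧ p.2.headI = y)) := by
    intro x hx y hy hxy
    rw [Finset.disjoint_left]
    intro p hp hq
    rw [Finset.mem_filter] at hp hq
    exact hxy (hp.2.2.symm.trans hq.2.2)
  have hbad : ((PF A A n m).filter (fun p => ¬ GoodP p)).card
      = ∑ a ∈ A, (if a ≤ n ∧ 1 ≤ m then
          pc (A.filter (a ≤ ·)) (A.filter (a ≤ ·)) (n - a) (m - 1) else 0) := by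
    rw [hbadsplit, Finset.card_biUnion hdisj]
    exact Finset.sum_congr rfl (fun a ha => bad_card A n m a ha)
  rw [count121_eq, pc, ← hsplit, good_card A n m, hbad]

end POP121

open MvPowerSeries in
theorem stmt0 (A : Finset ℕ) (hA : A.Nonempty) (hpos : ∀ a ∈ A, 0 < a)
    (F : MvPowerSeries (Fin 2) ℚ)
    (hF : ∀ n m : ℕ,
      (MvPowerSeries.coeff (Finsupp.single 0 n + Finsupp.single 1 m)) F
        = (count121 A n m : ℚ)) :
    (∀ a ∈ A, IsUnit (1 - (X 0 : MvPowerSeries (Fin 2) ℚ) ^ a * X 1)) ∧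
    F = (∏ a ∈ A, (1 - (X 0 : MvPowerSeries (Fin 2) ℚ) ^ a * X 1) ^ 2)⁻¹
        - ∑ a ∈ A, (X 0 : MvPowerSeries (Fin 2) ℚ) ^ a * X 1 *
            (∏ b ∈ A.filter (fun b => a ≤ b),
              (1 - (X 0 : MvPowerSeries (Fin 2) ℚ) ^ b * X 1) ^ 2)⁻¹ := by
  constructor
  · intro a _
    exact POP121.isUnit_one_sub_XX a
  · apply POP121.ps_ext
    intro n m
    have hF' : MvPowerSeries.coeff (POP121.sg n m) F = (count121 A n m : ℚ) := hF n m
    rw [hF', map_sub, POP121.inv_prod, POP121.coeff_mk2, map_sum]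
    have hterm : ∀ a ∈ A,
        MvPowerSeries.coeff (POP121.sg n m)
          ((X 0 : MvPowerSeries (Fin 2) ℚ) ^ a * X 1 *
            (∏ b ∈ A.filter (fun b => a ≤ b),
              (1 - (X 0 : MvPowerSeries (Fin 2) ℚ) ^ b * X 1) ^ 2)⁻¹)
        = if a ≤ n ∧ 1 ≤ m then
            (POP121.pc (A.filter (fun b => a ≤ b)) (A.filter (fun b => a ≤ b))
              (n - a) (m - 1) : ℚ) else 0 := by
      intro a _
      rw [POP121.inv_prod, POP121.coeff_XX_mul]
      simp only [POP121.coeff_mk2]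
    rw [Finset.sum_congr rfl hterm]
    have h := POP121.master A n m
    have h2 : (POP121.pc A A n m : ℚ) = (count121 A n m : ℚ)
        + ∑ a ∈ A, (if a ≤ n ∧ 1 ≤ m then
            (POP121.pc (A.filter (fun b => a ≤ b)) (A.filter (fun b => a ≤ b))
              (n - a) (m - 1) : ℚ) else 0) := by
      rw [h]
      push_cast [apply_ite (fun x : ℕ => (x : ℚ))]
      ring
    rw [h2]
    ring
end

section
/- Let A be a finite nonempty set of positive integers and let τ be a nonempty consecutive pattern (a word over a partially ordered alphabet forming a single block). Then in ℚ⟦x,y⟧: D_τ^A(x,y) = 1 + C_τ^A(x,y)·( y·Σ_{a∈A} x^a − 1 ). -/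
/-- An occurrence, starting at position `i`, of the consecutive pattern
`p : Fin ℓ → α` (a word of length `ℓ` over a partially ordered alphabet `α`)
in the composition `σ`: a contiguous factor of length `ℓ` whose letters respect
the strict inequalities and the equalities among the letters of the pattern. -/
def OccAt {α : Type*} [PartialOrder α] {ℓ : ℕ} (p : Fin ℓ → α)
    (σ : List ℕ) (i : ℕ) : Prop :=
  i + ℓ ≤ σ.length ∧ ∀ s t : Fin ℓ,
    (p s < p t → σ.getD (i + s) 0 < σ.getD (i + t) 0) ∧
    (p s = p t → σ.getD (i + s) 0 = σ.getD (i + t) 0)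

/-- `σ` avoids the consecutive pattern `p`. -/
def AvoidsPat {α : Type*} [PartialOrder α] {ℓ : ℕ} (p : Fin ℓ → α)
    (σ : List ℕ) : Prop :=
  ∀ i : ℕ, ¬ OccAt p σ i

/-- `σ` quasi-avoids the consecutive pattern `p`: it has exactly one occurrence of
`p`, consisting of the `ℓ` rightmost letters of `σ`. -/
def QuasiAvoidsPat {α : Type*} [PartialOrder α] {ℓ : ℕ} (p : Fin ℓ → α)
    (σ : List ℕ) : Prop :=
  {i : ℕ | OccAt p σ i} = {σ.length - ℓ}

section Aux
variable {α : Type*} [PartialOrder α] {ℓ : ℕ} (p : Fin ℓ → α)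

lemma getD_dropLast (σ : List ℕ) (k : ℕ) (h : k + 1 < σ.length) :
    σ.dropLast.getD k 0 = σ.getD k 0 := by
  have h1 : k < σ.dropLast.length := by rw [List.length_dropLast]; omega
  have h2 : k < σ.length := by omega
  rw [List.getD_eq_getElem _ _ h1, List.getD_eq_getElem _ _ h2]
  exact List.getElem_dropLast ..

lemma occAt_dropLast_iff (σ : List ℕ) (i : ℕ) (h : i + ℓ + 1 ≤ σ.length) :
    OccAt p σ.dropLast i ↔ OccAt p σ i := by
  have key : ∀ s : Fin ℓ, σ.dropLast.getD (i + s) 0 = σ.getD (i + s) 0 := fun s =>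
    getD_dropLast σ _ (by have := s.isLt; omega)
  have hlen : σ.dropLast.length = σ.length - 1 := List.length_dropLast
  constructor <;> rintro ⟨hl, hst⟩ <;>
    exact ⟨by omega, fun s t => by
      have := hst s t; rw [key s, key t] at *; exact this⟩

lemma quasi_length_le {σ : List ℕ} (hq : QuasiAvoidsPat p σ) : ℓ ≤ σ.length := by
  have h0 : (σ.length - ℓ) ∈ {i | OccAt p σ i} := by rw [hq]; rfl
  rcases h0 with ⟨hl, -⟩
  omega

lemma key_split (hℓ : 0 < ℓ) (σ : List ℕ) (hσ : σ ≠ []) :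
    (AvoidsPat p σ ∨ QuasiAvoidsPat p σ) ↔ AvoidsPat p σ.dropLast := by
  have hlen : σ.dropLast.length = σ.length - 1 := List.length_dropLast
  have hσlen : 0 < σ.length := List.length_pos_iff.mpr hσ
  constructor
  · rintro (hav | hq)
    · intro i hocc
      obtain ⟨hl, hst⟩ := hocc
      exact hav i ((occAt_dropLast_iff p σ i (by omega)).mp ⟨hl, hst⟩)
    · intro i hocc
      have hl : i + ℓ + 1 ≤ σ.length := by rcases hocc with ⟨hl, -⟩; omega
      have hoccσ : OccAt p σ i := (occAt_dropLast_iff p σ i hl).mp hocc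
      have : i ∈ {j : ℕ | OccAt p σ j} := hoccσ
      rw [hq] at this
      have hle : ℓ ≤ σ.length := quasi_length_le p hq
      have : i = σ.length - ℓ := this
      omega
  · intro hav
    by_cases h : AvoidsPat p σ
    · exact Or.inl h
    · right
      unfold AvoidsPat at h
      push_neg at h
      obtain ⟨i, hi⟩ := h
      have hkey : ∀ j, OccAt p σ j → j = σ.length - ℓ := by
        intro j hj
        rcases hj with ⟨hl, hst⟩
        by_contra hne
        have hl' : j + ℓ + 1 ≤ σ.length := by
          rcases Nat.lt_or_ge (j + ℓ) σ.length with h' | h'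
          · omega
          · omega
        exact hav j ((occAt_dropLast_iff p σ j hl').mpr ⟨hl, hst⟩)
      have hieq := hkey i hi
      ext j
      simp only [Set.mem_setOf_eq, Set.mem_singleton_iff]
      exact ⟨hkey j, fun h => h ▸ (hieq ▸ hi)⟩

lemma finite_comps (A : Finset ℕ) (n m : ℕ) (P : List ℕ → Prop) :
    {σ : List ℕ | IsCompOf A n m σ ∧ P σ}.Finite := by
  have hsub : {σ : List ℕ | IsCompOf A n m σ ∧ P σ} ⊆
      (fun f : Fin m → ℕ => List.ofFn f) '' (Set.univ.pi fun _ => (A : Set ℕ)) := by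
    rintro σ ⟨⟨hmem, -, hlen⟩, -⟩
    subst hlen
    exact ⟨σ.get, fun i _ => hmem _ (σ.get_mem ..), List.ofFn_get σ⟩
  exact ((Set.Finite.pi fun _ => A.finite_toSet).image _).subset hsub

lemma ncard_biUnion {ι β : Type*} (s : Finset ι) (f : ι → Set β)
    (hfin : ∀ i ∈ s, (f i).Finite)
    (hdisj : ∀ i ∈ s, ∀ j ∈ s, i ≠ j → Disjoint (f i) (f j)) :
    (⋃ i ∈ s, f i).ncard = ∑ i ∈ s, (f i).ncard := by
  classical
  induction s using Finset.induction_on with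
  | empty => simp
  | @insert a s h ih =>
    rw [Finset.sum_insert h]
    have hU : (⋃ i ∈ insert a s, f i) = f a ∪ ⋃ i ∈ s, f i := by
      simp [Set.biUnion_insert]
    have hfa := hfin a (Finset.mem_insert_self a s)
    have hfU : (⋃ i ∈ s, f i).Finite := Set.Finite.biUnion s.finite_toSet
        (fun i hi => hfin i (Finset.mem_insert_of_mem hi))
    have hdis : Disjoint (f a) (⋃ i ∈ s, f i) :=
      Set.disjoint_iUnion₂_right.mpr fun i hi =>
        hdisj a (Finset.mem_insert_self a s) i (Finset.mem_insert_of_mem hi)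
          (by rintro rfl; exact h hi)
    rw [hU, Set.ncard_union_eq hdis hfa hfU, ih (fun i hi => hfin i (Finset.mem_insert_of_mem hi))
      (fun i hi j hj hij => hdisj i (Finset.mem_insert_of_mem hi) j
        (Finset.mem_insert_of_mem hj) hij)]

end Aux

section Count
variable {α : Type*} [PartialOrder α] {ℓ : ℕ} (p : Fin ℓ → α)

lemma count_split (hℓ : 0 < ℓ) (A : Finset ℕ) (n m : ℕ) :
    ∑ a ∈ A.filter (· ≤ n), {τ : List ℕ | IsCompOf A (n - a) m τ ∧ AvoidsPat p τ}.ncard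
      = {σ : List ℕ | IsCompOf A n (m+1) σ ∧ AvoidsPat p σ}.ncard
        + {σ : List ℕ | IsCompOf A n (m+1) σ ∧ QuasiAvoidsPat p σ}.ncard := by
  classical
  have hSU : {σ : List ℕ | IsCompOf A n (m+1) σ ∧ AvoidsPat p σ.dropLast}
      = ⋃ a ∈ A.filter (· ≤ n),
          (fun τ => τ ++ [a]) '' {τ : List ℕ | IsCompOf A (n-a) m τ ∧ AvoidsPat p τ} := by
    ext σ
    simp only [Set.mem_iUnion, Set.mem_image, Finset.mem_filter, Set.mem_setOf_eq, exists_prop]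
    constructor
    · rintro ⟨⟨hmem, hsum, hlen⟩, hav⟩
      have hne : σ ≠ [] := by intro h; rw [h] at hlen; simp at hlen
      have hdec : σ.dropLast ++ [σ.getLast hne] = σ := List.dropLast_append_getLast hne
      have hsum' : σ.dropLast.sum + σ.getLast hne = n := by
        have := congrArg List.sum hdec
        simp only [List.sum_append, List.sum_cons, List.sum_nil, add_zero] at this
        omega
      refine ⟨σ.getLast hne, ⟨hmem _ (List.getLast_mem hne), by omega⟩, σ.dropLast,
        ⟨⟨fun x hx => hmem x (List.dropLast_subset σ hx), by omega, ?_⟩, hav⟩, hdec⟩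
      simp [List.length_dropLast, hlen]
    · rintro ⟨a, ⟨haA, han⟩, τ, ⟨⟨hmem, hsum, hlen⟩, hav⟩, rfl⟩
      refine ⟨⟨?_, ?_, ?_⟩, ?_⟩
      · intro x hx
        rcases List.mem_append.mp hx with h | h
        · exact hmem x h
        · simp only [List.mem_singleton] at h; exact h ▸ haA
      · simp only [List.sum_append, List.sum_cons, List.sum_nil, add_zero]; omega
      · simp [List.length_append, hlen]
      · rwa [List.dropLast_concat]
  have hcard1 : {σ : List ℕ | IsCompOf A n (m+1) σ ∧ AvoidsPat p σ.dropLast}.ncard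
      = ∑ a ∈ A.filter (· ≤ n),
          {τ : List ℕ | IsCompOf A (n-a) m τ ∧ AvoidsPat p τ}.ncard := by
    rw [hSU, ncard_biUnion]
    · refine Finset.sum_congr rfl fun a _ => ?_
      exact Set.ncard_image_of_injective _ (List.append_left_injective [a])
    · exact fun a _ => (finite_comps A (n-a) m _).image _
    · intro a _ b _ hab
      rw [Set.disjoint_left]
      rintro σ ⟨τ1, -, rfl⟩ ⟨τ2, -, heq⟩
      have := congrArg List.getLast? heq
      simp only [List.getLast?_concat] at this
      exact hab (Option.some.inj this).symm
  have hsplit : {σ : List ℕ | IsCompOf A n (m+1) σ ∧ AvoidsPat p σ.dropLast}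
      = {σ : List ℕ | IsCompOf A n (m+1) σ ∧ AvoidsPat p σ}
        ∪ {σ : List ℕ | IsCompOf A n (m+1) σ ∧ QuasiAvoidsPat p σ} := by
    ext σ
    simp only [Set.mem_union, Set.mem_setOf_eq]
    have hne : IsCompOf A n (m+1) σ → σ ≠ [] := by
      rintro ⟨-, -, hlen⟩ h; rw [h] at hlen; simp at hlen
    constructor
    · rintro ⟨hc, hav⟩
      rcases (key_split p hℓ σ (hne hc)).mpr hav with h | h
      · exact Or.inl ⟨hc, h⟩
      · exact Or.inr ⟨hc, h⟩
    · rintro (⟨hc, h⟩ | ⟨hc, h⟩)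
      · exact ⟨hc, (key_split p hℓ σ (hne hc)).mp (Or.inl h)⟩
      · exact ⟨hc, (key_split p hℓ σ (hne hc)).mp (Or.inr h)⟩
  have hdis : Disjoint {σ : List ℕ | IsCompOf A n (m+1) σ ∧ AvoidsPat p σ}
      {σ : List ℕ | IsCompOf A n (m+1) σ ∧ QuasiAvoidsPat p σ} := by
    rw [Set.disjoint_left]
    rintro σ ⟨-, hav⟩ ⟨-, hq⟩
    have h0 : (σ.length - ℓ) ∈ {i | OccAt p σ i} := by rw [hq]; rfl
    exact hav _ h0
  rw [← hcard1, hsplit, Set.ncard_union_eq hdis (finite_comps A n (m+1) _)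
    (finite_comps A n (m+1) _)]

end Count

section Small
variable {α : Type*} [PartialOrder α] {ℓ : ℕ} (p : Fin ℓ → α)

lemma avoids_nil (hℓ : 0 < ℓ) : AvoidsPat p ([] : List ℕ) := by
  rintro i ⟨hl, -⟩
  simp only [List.length_nil] at hl
  omega

lemma not_quasi_nil (hℓ : 0 < ℓ) : ¬ QuasiAvoidsPat p ([] : List ℕ) := by
  intro h
  have h0 : ((List.length ([] : List ℕ)) - ℓ) ∈ {i | OccAt p ([] : List ℕ) i} := by
    rw [h]; rfl
  rcases h0 with ⟨hl, -⟩
  simp only [List.length_nil] at hl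
  omega

lemma isCompOf_zero_parts {A : Finset ℕ} {n₀ : ℕ} {σ : List ℕ}
    (h : IsCompOf A n₀ 0 σ) : σ = [] ∧ n₀ = 0 := by
  obtain ⟨-, hsum, hlen⟩ := h
  have h0 : σ = [] := List.length_eq_zero_iff.mp hlen
  subst h0
  simp only [List.sum_nil] at hsum
  exact ⟨rfl, hsum.symm⟩

lemma card_avoid_zero (hℓ : 0 < ℓ) (A : Finset ℕ) :
    {σ : List ℕ | IsCompOf A 0 0 σ ∧ AvoidsPat p σ}.ncard = 1 := by
  have : {σ : List ℕ | IsCompOf A 0 0 σ ∧ AvoidsPat p σ} = {[]} := by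
    ext σ
    simp only [Set.mem_setOf_eq, Set.mem_singleton_iff]
    constructor
    · rintro ⟨hc, -⟩; exact (isCompOf_zero_parts hc).1
    · rintro rfl
      exact ⟨⟨by simp, rfl, rfl⟩, avoids_nil p hℓ⟩
  rw [this, Set.ncard_singleton]

lemma card_quasi_zero (hℓ : 0 < ℓ) (A : Finset ℕ) (n₀ : ℕ) :
    {σ : List ℕ | IsCompOf A n₀ 0 σ ∧ QuasiAvoidsPat p σ}.ncard = 0 := by
  have : {σ : List ℕ | IsCompOf A n₀ 0 σ ∧ QuasiAvoidsPat p σ} = ∅ := by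
    ext σ
    simp only [Set.mem_setOf_eq, Set.mem_empty_iff_false, iff_false, not_and]
    intro hc hq
    rw [(isCompOf_zero_parts hc).1] at hq
    exact not_quasi_nil p hℓ hq
  rw [this, Set.ncard_empty]

lemma card_avoid_pos (A : Finset ℕ) (n₀ : ℕ) (hn : n₀ ≠ 0) :
    {σ : List ℕ | IsCompOf A n₀ 0 σ ∧ AvoidsPat p σ}.ncard = 0 := by
  have : {σ : List ℕ | IsCompOf A n₀ 0 σ ∧ AvoidsPat p σ} = ∅ := by
    ext σ
    simp only [Set.mem_setOf_eq, Set.mem_empty_iff_false, iff_false, not_and]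
    intro hc _
    exact hn (isCompOf_zero_parts hc).2
  rw [this, Set.ncard_empty]

end Small

open MvPowerSeries in
theorem stmt3 {α : Type*} [PartialOrder α] {ℓ : ℕ} (hℓ : 0 < ℓ) (p : Fin ℓ → α)
    (A : Finset ℕ) (hA : A.Nonempty) (hpos : ∀ a ∈ A, 0 < a)
    (C D : MvPowerSeries (Fin 2) ℚ)
    (hC : ∀ n m : ℕ,
      (MvPowerSeries.coeff (R := ℚ) (Finsupp.single (0 : Fin 2) n + Finsupp.single 1 m)) C
        = (Set.ncard {σ : List ℕ | IsCompOf A n m σ ∧ AvoidsPat p σ} : ℚ))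
    (hD : ∀ n m : ℕ,
      (MvPowerSeries.coeff (R := ℚ) (Finsupp.single (0 : Fin 2) n + Finsupp.single 1 m)) D
        = (Set.ncard {σ : List ℕ | IsCompOf A n m σ ∧ QuasiAvoidsPat p σ} : ℚ)) :
    D = 1 + C * ((X 1 : MvPowerSeries (Fin 2) ℚ) * (∑ a ∈ A, (X 0) ^ a) - 1) := by
  classical
  ext d
  obtain ⟨n, m, rfl⟩ : ∃ n m : ℕ, d = Finsupp.single 0 n + Finsupp.single 1 m :=
    ⟨d 0, d 1, by ext i; fin_cases i <;> simp [Finsupp.single_apply]⟩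
  set d : Fin 2 →₀ ℕ := Finsupp.single 0 n + Finsupp.single 1 m with hd
  have hd0 : d 0 = n := by simp [hd, Finsupp.single_apply]
  have hd1 : d 1 = m := by simp [hd, Finsupp.single_apply]
  -- rewrite X 1 * sum as sum of monomials
  have hXS : (X 1 : MvPowerSeries (Fin 2) ℚ) * (∑ a ∈ A, (X 0) ^ a)
      = ∑ a ∈ A, monomial (R := ℚ) (Finsupp.single 1 1 + Finsupp.single 0 a) 1 := by
    rw [Finset.mul_sum]
    refine Finset.sum_congr rfl fun a _ => ?_
    rw [X_pow_eq, X, monomial_mul_monomial, one_mul]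
  have hterm : ∀ a : ℕ,
      (coeff (R := ℚ) d) (C * monomial (R := ℚ) (Finsupp.single 1 1 + Finsupp.single 0 a) 1)
      = if a ≤ n ∧ 1 ≤ m then
          ({σ : List ℕ | IsCompOf A (n-a) (m-1) σ ∧ AvoidsPat p σ}.ncard : ℚ) else 0 := by
    intro a
    rw [coeff_mul_monomial]
    by_cases h : a ≤ n ∧ 1 ≤ m
    · rw [if_pos, if_pos h, mul_one]
      · have hsub : d - (Finsupp.single 1 1 + Finsupp.single 0 a)
            = Finsupp.single 0 (n - a) + Finsupp.single 1 (m - 1) := by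
          ext i
          rw [Finsupp.tsub_apply]
          fin_cases i <;> simp [hd, Finsupp.single_apply]
        rw [hsub, hC]
      · rw [Finsupp.le_def]
        intro i
        fin_cases i <;> simp [hd, Finsupp.single_apply] <;> omega
    · rw [if_neg, if_neg h]
      intro hle
      rw [Finsupp.le_def] at hle
      have h0 := hle 0
      have h1 := hle 1
      simp [hd, Finsupp.single_apply] at h0 h1
      exact h ⟨h0, h1⟩
  have hRHS : (coeff (R := ℚ) d) (1 + C * ((X 1 : MvPowerSeries (Fin 2) ℚ)
        * (∑ a ∈ A, (X 0) ^ a) - 1))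
      = (if d = 0 then (1 : ℚ) else 0)
        + ((∑ a ∈ A, if a ≤ n ∧ 1 ≤ m then
            ({σ : List ℕ | IsCompOf A (n-a) (m-1) σ ∧ AvoidsPat p σ}.ncard : ℚ) else 0)
          - ({σ : List ℕ | IsCompOf A n m σ ∧ AvoidsPat p σ}.ncard : ℚ)) := by
    rw [map_add, coeff_one, mul_sub, mul_one, map_sub, hXS, Finset.mul_sum, map_sum]
    rw [hC n m]
    congr 1
    congr 1
    exact Finset.sum_congr rfl fun a _ => hterm a
  rw [hD n m, hRHS]
  have h0iff : d = 0 ↔ n = 0 ∧ m = 0 := by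
    constructor
    · intro h
      constructor
      · rw [← hd0, h]; rfl
      · rw [← hd1, h]; rfl
    · rintro ⟨rfl, rfl⟩; simp [hd]
  rcases m with _ | m'
  · -- m = 0
    have hsum0 : (∑ a ∈ A, if a ≤ n ∧ 1 ≤ 0 then
        ({σ : List ℕ | IsCompOf A (n-a) (0-1) σ ∧ AvoidsPat p σ}.ncard : ℚ) else 0) = 0 :=
      Finset.sum_eq_zero fun a _ => if_neg (by omega)
    rw [hsum0]
    rcases n with _ | n'
    · rw [if_pos (h0iff.mpr ⟨rfl, rfl⟩), card_quasi_zero p hℓ A 0, card_avoid_zero p hℓ A]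
      norm_num
    · rw [if_neg (fun h => by simpa using (h0iff.mp h).1),
        card_quasi_zero p hℓ A (n'+1), card_avoid_pos p A (n'+1) (by omega)]
      norm_num
  · -- m = m' + 1
    rw [if_neg (fun h => by simpa using (h0iff.mp h).2)]
    have hsum : (∑ a ∈ A, if a ≤ n ∧ 1 ≤ m' + 1 then
        ({σ : List ℕ | IsCompOf A (n-a) (m'+1-1) σ ∧ AvoidsPat p σ}.ncard : ℚ) else 0)
        = ∑ a ∈ A.filter (· ≤ n),
            ({τ : List ℕ | IsCompOf A (n-a) m' τ ∧ AvoidsPat p τ}.ncard : ℚ) := by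
      rw [Finset.sum_filter]
      refine Finset.sum_congr rfl fun a _ => ?_
      simp only [Nat.add_sub_cancel]
      congr 1
      exact propext ⟨fun h => h.1, fun h => ⟨h, Nat.le_add_left 1 m'⟩⟩
    rw [hsum]
    have hcount := count_split p hℓ A n m'
    have : (∑ a ∈ A.filter (· ≤ n),
        ({τ : List ℕ | IsCompOf A (n-a) m' τ ∧ AvoidsPat p τ}.ncard : ℚ))
        = ({σ : List ℕ | IsCompOf A n (m'+1) σ ∧ AvoidsPat p σ}.ncard : ℚ)
          + ({σ : List ℕ | IsCompOf A n (m'+1) σ ∧ QuasiAvoidsPat p σ}.ncard : ℚ) := by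
      rw [← Nat.cast_sum, hcount]
      push_cast
      ring
    rw [this]
    ring
end

section
/- Let A = {a₁ < ⋯ < a_k} be a finite set of positive integers with k ≥ 2, let A' = A ∖ {a_k}, and let φ = τ-ℓ-ν be a shuffle pattern whose middle letter ℓ is strictly greater than every letter of the nonempty words τ and ν. Then in ℚ⟦x,y⟧: C_φ^A(x,y)·(1 − x^{a_k} y·C_τ^{A'}(x,y))·(1 − x^{a_k} y·C_ν^{A'}(x,y)) = C_φ^{A'}(x,y) − x^{a_k} y·C_τ^{A'}(x,y)·C_ν^{A'}(x,y). -/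
/-- The contiguous factor of `σ` of length `w.length` starting at position `i` is
order-isomorphic to the word `w`. -/
def WordIsoAt (w σ : List ℕ) (i : ℕ) : Prop :=
  i + w.length ≤ σ.length ∧ ∀ s t : ℕ, s < w.length → t < w.length →
    (w.getD s 0 < w.getD t 0 ↔ σ.getD (i + s) 0 < σ.getD (i + t) 0)

/-- `σ` avoids the word `w` (as a consecutive pattern). -/
def AvoidsWord (w σ : List ℕ) : Prop := ∀ i : ℕ, ¬ WordIsoAt w σ i

/-- An occurrence of the shuffle pattern `τ-ℓ-ν` (middle letter greater than all
letters of `τ` and `ν`) in `σ`: a contiguous factor order-isomorphic to `τ`, then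
(strictly later) a single letter strictly greater than every letter of the two
factors, then (strictly later) a contiguous factor order-isomorphic to `ν`. -/
def ShuffleTopOccurs (τ ν σ : List ℕ) : Prop :=
  ∃ i p j : ℕ, WordIsoAt τ σ i ∧ i + τ.length ≤ p ∧ p + 1 ≤ j ∧ WordIsoAt ν σ j ∧
    (∀ s : ℕ, s < τ.length → σ.getD (i + s) 0 < σ.getD p 0) ∧
    (∀ t : ℕ, t < ν.length → σ.getD (j + t) 0 < σ.getD p 0)

namespace Stmt5Aux

/-- no factor order-isomorphic to `ν` consisting of letters `< b`. -/
def SmallFree (b : ℕ) (ν σ : List ℕ) : Prop :=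
  ∀ j : ℕ, ¬ (WordIsoAt ν σ j ∧ ∀ t : ℕ, t < ν.length → σ.getD (j + t) 0 < b)

/-- generating function of a set of lists, graded by (sum, length). -/
noncomputable def gfL (𝒮 : Set (List ℕ)) : MvPowerSeries (Fin 2) ℚ :=
  fun d => ((Set.ncard {σ | σ ∈ 𝒮 ∧ σ.sum = d 0 ∧ σ.length = d 1} : ℕ) : ℚ)

lemma gfL_coeff (𝒮 : Set (List ℕ)) (d : Fin 2 →₀ ℕ) :
    MvPowerSeries.coeff d (gfL 𝒮)
      = ((Set.ncard {σ | σ ∈ 𝒮 ∧ σ.sum = d 0 ∧ σ.length = d 1} : ℕ) : ℚ) := rfl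

lemma fin2_cases (i : Fin 2) : i = 0 ∨ i = 1 := by
  fin_cases i
  · exact Or.inl rfl
  · exact Or.inr rfl

lemma fin2_le_iff {f g : Fin 2 →₀ ℕ} : f ≤ g ↔ f 0 ≤ g 0 ∧ f 1 ≤ g 1 := by
  rw [Finsupp.le_def]
  constructor
  · intro h; exact ⟨h 0, h 1⟩
  · rintro ⟨h0, h1⟩ i
    rcases fin2_cases i with rfl | rfl <;> assumption

lemma fin2_finsupp_ext {f g : Fin 2 →₀ ℕ} (h0 : f 0 = g 0) (h1 : f 1 = g 1) : f = g := by
  ext i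
  fin_cases i <;> assumption

lemma fin2_finsupp_decomp (d : Fin 2 →₀ ℕ) :
    d = Finsupp.single 0 (d 0) + Finsupp.single 1 (d 1) := by
  apply fin2_finsupp_ext <;> simp [Finsupp.single_apply]

lemma finite_lists (B : Finset ℕ) (m : ℕ) :
    {l : List ℕ | l.length = m ∧ ∀ x ∈ l, x ∈ B}.Finite := by
  induction m with
  | zero =>
    apply Set.Finite.subset (Set.finite_singleton ([] : List ℕ))
    rintro l ⟨hl, -⟩
    simp [List.length_eq_zero_iff.mp hl]
  | succ m ih =>
    apply Set.Finite.subset ((B.finite_toSet.biUnion (fun a _ => ih.image (a :: ·))))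
    rintro l ⟨hl, hmem⟩
    match l with
    | x :: l' =>
      refine Set.mem_biUnion (hmem x (by simp)) ⟨l', ⟨by simpa using hl, fun y hy => hmem y (by simp [hy])⟩, rfl⟩

lemma slice_finite {B : Finset ℕ} {𝒮 : Set (List ℕ)} (hS : ∀ σ ∈ 𝒮, ∀ x ∈ σ, x ∈ B)
    (n m : ℕ) : {σ | σ ∈ 𝒮 ∧ σ.sum = n ∧ σ.length = m}.Finite := by
  apply Set.Finite.subset (finite_lists B m)
  rintro σ ⟨hσ, -, hlen⟩
  exact ⟨hlen, hS σ hσ⟩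

lemma ncard_biUnion' {ι α : Type*} (t : Finset ι) (f : ι → Set α)
    (hfin : ∀ i ∈ t, (f i).Finite)
    (hdis : ∀ i ∈ t, ∀ j ∈ t, i ≠ j → Disjoint (f i) (f j)) :
    (⋃ i ∈ t, f i).ncard = ∑ i ∈ t, (f i).ncard := by
  classical
  induction t using Finset.induction with
  | empty => simp
  | @insert a s ha ih =>
    rw [Finset.set_biUnion_insert, Finset.sum_insert ha,
      Set.ncard_union_eq ?_ (hfin a (by simp)) ?_,
      ih (fun i hi => hfin i (by simp [hi])) (fun i hi j hj hij => hdis i (by simp [hi]) j (by simp [hj]) hij)]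
    · rw [Set.disjoint_iUnion_right]
      intro i
      rw [Set.disjoint_iUnion_right]
      intro hi
      have hi' : i ∈ s := hi
      refine hdis a (by simp) i ?_ ?_
      · exact Finset.mem_insert_of_mem hi'
      · rintro rfl; exact ha hi'
    · exact Set.Finite.biUnion s.finite_toSet (fun i hi => hfin i (Finset.mem_insert_of_mem hi))

lemma ncard_prod {α β : Type*} (s : Set α) (t : Set β) :
    (s ×ˢ t).ncard = s.ncard * t.ncard := by
  rw [← Nat.card_coe_set_eq, ← Nat.card_coe_set_eq, ← Nat.card_coe_set_eq,
    Nat.card_congr (Equiv.Set.prod s t), Nat.card_prod]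

lemma append_cons_inj {a : ℕ} : ∀ {α1 α2 β1 β2 : List ℕ}, a ∉ α1 → a ∉ α2 →
    α1 ++ a :: β1 = α2 ++ a :: β2 → α1 = α2 ∧ β1 = β2 := by
  intro α1
  induction α1 with
  | nil =>
    intro α2 β1 β2 _ h2 heq
    match α2 with
    | [] => simpa using heq
    | y :: α2' =>
      simp only [List.nil_append, List.cons_append, List.cons.injEq] at heq
      exact (h2 (by rw [heq.1]; exact List.mem_cons_self)).elim
  | cons x α1' ih =>
    intro α2 β1 β2 h1 h2 heq
    match α2 with
    | [] =>
      simp only [List.nil_append, List.cons_append, List.cons.injEq] at heq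
      exact absurd (heq.1 ▸ (show x ∈ x :: α1' from List.mem_cons_self)) h1
    | y :: α2' =>
      simp only [List.cons_append, List.cons.injEq] at heq
      obtain ⟨rfl, heq⟩ := heq
      obtain ⟨rfl, rfl⟩ := ih (fun h => h1 (List.mem_cons_of_mem _ h))
        (fun h => h2 (List.mem_cons_of_mem _ h)) heq
      exact ⟨rfl, rfl⟩

lemma exists_split {a : ℕ} {σ : List ℕ} (h : a ∈ σ) :
    ∃ α β : List ℕ, σ = α ++ a :: β ∧ a ∉ α := by
  induction σ with
  | nil => simp at h
  | cons x l ih =>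
    by_cases hx : x = a
    · exact ⟨[], l, by simp [hx], by simp⟩
    · have hl : a ∈ l := by
        rcases List.mem_cons.mp h with h | h
        · exact absurd h.symm hx
        · exact h
      obtain ⟨α, β, rfl, hα⟩ := ih hl
      exact ⟨x :: α, β, rfl, by simp [hα, Ne.symm, hx]⟩

section GetD

variable {α b β : List ℕ} {L : ℕ}

lemma getD_left {σ α : List ℕ} {b : ℕ} {β : List ℕ} (h : σ = α ++ b :: β) {s : ℕ}
    (hs : s < α.length) : σ.getD s 0 = α.getD s 0 := by
  subst h; exact List.getD_append _ _ _ _ hs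

lemma getD_mid {σ α : List ℕ} {b : ℕ} {β : List ℕ} (h : σ = α ++ b :: β) :
    σ.getD α.length 0 = b := by
  subst h
  rw [List.getD_append_right _ _ _ _ le_rfl]
  simp

lemma getD_right {σ α : List ℕ} {b : ℕ} {β : List ℕ} (h : σ = α ++ b :: β) (t : ℕ) :
    σ.getD (α.length + 1 + t) 0 = β.getD t 0 := by
  subst h
  rw [List.getD_append_right _ _ _ _ (by omega)]
  have : α.length + 1 + t - α.length = t + 1 := by omega
  rw [this]
  rfl

lemma length_split {σ α : List ℕ} {b : ℕ} {β : List ℕ} (h : σ = α ++ b :: β) :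
    σ.length = α.length + 1 + β.length := by
  subst h; simp; omega

lemma wordIso_left {σ α : List ℕ} {b : ℕ} {β : List ℕ} (h : σ = α ++ b :: β) {w : List ℕ} {i : ℕ}
    (hle : i + w.length ≤ α.length) : WordIsoAt w σ i ↔ WordIsoAt w α i := by
  constructor
  · rintro ⟨_, hiso⟩
    exact ⟨hle, fun s t hs ht => by
      rw [← getD_left h (by omega), ← getD_left h (by omega)]; exact hiso s t hs ht⟩
  · rintro ⟨_, hiso⟩
    refine ⟨by rw [length_split h]; omega, fun s t hs ht => ?_⟩
    rw [getD_left h (by omega), getD_left h (by omega)]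
    exact hiso s t hs ht

lemma wordIso_right {σ α : List ℕ} {b : ℕ} {β : List ℕ} (h : σ = α ++ b :: β) {w : List ℕ} {j : ℕ} :
    WordIsoAt w σ (α.length + 1 + j) ↔ WordIsoAt w β j := by
  constructor
  · rintro ⟨hlen, hiso⟩
    refine ⟨by rw [length_split h] at hlen; omega, fun s t hs ht => ?_⟩
    have e1 : α.length + 1 + j + s = α.length + 1 + (j + s) := by omega
    have e2 : α.length + 1 + j + t = α.length + 1 + (j + t) := by omega
    rw [← getD_right h (j + s), ← getD_right h (j + t), ← e1, ← e2]
    exact hiso s t hs ht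
  · rintro ⟨hlen, hiso⟩
    refine ⟨by rw [length_split h]; omega, fun s t hs ht => ?_⟩
    have e1 : α.length + 1 + j + s = α.length + 1 + (j + s) := by omega
    have e2 : α.length + 1 + j + t = α.length + 1 + (j + t) := by omega
    rw [e1, e2, getD_right h (j + s), getD_right h (j + t)]
    exact hiso s t hs ht

lemma getD_mem {σ : List ℕ} {p : ℕ} (hp : p < σ.length) : σ.getD p 0 ∈ σ := by
  rw [List.getD_eq_getElem _ _ hp]
  exact List.getElem_mem _

/-- a block of consecutive letters all `< b` cannot contain the position `α.length`
where the letter is `b`. -/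
lemma block_split {σ α : List ℕ} {b : ℕ} {β : List ℕ} (h : σ = α ++ b :: β) {i k : ℕ}
    (_hk : 1 ≤ k) (hsm : ∀ s, s < k → σ.getD (i + s) 0 < b) :
    i + k ≤ α.length ∨ ∃ j, i = α.length + 1 + j := by
  by_cases hi : α.length + 1 ≤ i
  · exact Or.inr ⟨i - (α.length + 1), by omega⟩
  · left
    by_contra hik
    have hs : α.length - i < k := by omega
    have := hsm (α.length - i) hs
    rw [show i + (α.length - i) = α.length by omega, getD_mid h] at this
    omega

end GetD

-- gf lemmas

lemma gfL_union {B : Finset ℕ} {𝒜 ℬ : Set (List ℕ)}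
    (hA : ∀ σ ∈ 𝒜, ∀ x ∈ σ, x ∈ B) (hB : ∀ σ ∈ ℬ, ∀ x ∈ σ, x ∈ B)
    (hdis : Disjoint 𝒜 ℬ) : gfL (𝒜 ∪ ℬ) = gfL 𝒜 + gfL ℬ := by
  apply MvPowerSeries.ext; intro d
  rw [map_add, gfL_coeff, gfL_coeff, gfL_coeff]
  have hset : {σ | σ ∈ 𝒜 ∪ ℬ ∧ σ.sum = d 0 ∧ σ.length = d 1}
      = {σ | σ ∈ 𝒜 ∧ σ.sum = d 0 ∧ σ.length = d 1}
        ∪ {σ | σ ∈ ℬ ∧ σ.sum = d 0 ∧ σ.length = d 1} := by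
    ext σ; simp only [Set.mem_setOf_eq, Set.mem_union]; tauto
  rw [hset, Set.ncard_union_eq (hdis.mono (fun σ h => h.1) (fun σ h => h.1))
    (slice_finite hA _ _) (slice_finite hB _ _)]
  push_cast; ring

lemma gfL_append {B : Finset ℕ} {a : ℕ} {𝒜 ℬ : Set (List ℕ)}
    (hAB : ∀ σ ∈ 𝒜, ∀ x ∈ σ, x ∈ B) (hBB : ∀ σ ∈ ℬ, ∀ x ∈ σ, x ∈ B)
    (hAa : ∀ α ∈ 𝒜, a ∉ α) :
    gfL {σ | ∃ α ∈ 𝒜, ∃ β ∈ ℬ, σ = α ++ a :: β}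
      = MvPowerSeries.monomial (Finsupp.single 0 a + Finsupp.single 1 1) 1
        * (gfL 𝒜 * gfL ℬ) := by
  classical
  apply MvPowerSeries.ext; intro d
  set e : Fin 2 →₀ ℕ := Finsupp.single 0 a + Finsupp.single 1 1 with he
  have he0 : e 0 = a := by simp [he, Finsupp.single_apply]
  have he1 : e 1 = 1 := by simp [he, Finsupp.single_apply]
  rw [MvPowerSeries.coeff_monomial_mul]
  by_cases hed : e ≤ d
  · rw [if_pos hed, one_mul, MvPowerSeries.coeff_mul, gfL_coeff]
    have hd0 : a ≤ d 0 := by have := (fin2_le_iff.mp hed).1; rwa [he0] at this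
    have hd1 : 1 ≤ d 1 := by have := (fin2_le_iff.mp hed).2; rwa [he1] at this
    have hde0 : (d - e) 0 = d 0 - a := by rw [Finsupp.tsub_apply, he0]
    have hde1 : (d - e) 1 = d 1 - 1 := by rw [Finsupp.tsub_apply, he1]
    -- the family of pieces
    set F : (Fin 2 →₀ ℕ) × (Fin 2 →₀ ℕ) → Set (List ℕ) := fun p =>
      (fun q : List ℕ × List ℕ => q.1 ++ a :: q.2) ''
        ({α | α ∈ 𝒜 ∧ α.sum = p.1 0 ∧ α.length = p.1 1} ×ˢ
         {β | β ∈ ℬ ∧ β.sum = p.2 0 ∧ β.length = p.2 1}) with hF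
    have hslice : {σ | σ ∈ {σ | ∃ α ∈ 𝒜, ∃ β ∈ ℬ, σ = α ++ a :: β}
        ∧ σ.sum = d 0 ∧ σ.length = d 1}
        = ⋃ p ∈ Finset.HasAntidiagonal.antidiagonal (d - e), F p := by
      ext σ
      constructor
      · rintro ⟨⟨α, hα, β, hβ, rfl⟩, hsum, hlen⟩
        rw [List.sum_append, List.sum_cons] at hsum
        rw [List.length_append, List.length_cons] at hlen
        refine Set.mem_iUnion₂.mpr
          ⟨(Finsupp.single 0 α.sum + Finsupp.single 1 α.length,
            Finsupp.single 0 β.sum + Finsupp.single 1 β.length), ?_, ?_⟩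
        · rw [Finset.HasAntidiagonal.mem_antidiagonal]
          apply fin2_finsupp_ext
          · simp only [Finsupp.add_apply, Finsupp.single_apply, hde0]
            simp; omega
          · simp only [Finsupp.add_apply, Finsupp.single_apply, hde1]
            simp; omega
        · exact ⟨(α, β), ⟨⟨hα, by simp [Finsupp.single_apply], by simp [Finsupp.single_apply]⟩,
            ⟨hβ, by simp [Finsupp.single_apply], by simp [Finsupp.single_apply]⟩⟩, rfl⟩
      · intro hσ
        obtain ⟨p, hp, hσ⟩ := Set.mem_iUnion₂.mp hσ
        rw [Finset.HasAntidiagonal.mem_antidiagonal] at hp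
        obtain ⟨⟨α, β⟩, ⟨⟨hα, hαs, hαl⟩, ⟨hβ, hβs, hβl⟩⟩, rfl⟩ := hσ
        have hps : p.1 0 + p.2 0 = d 0 - a := by
          rw [← hde0, ← hp]; simp [Finsupp.add_apply]
        have hpl : p.1 1 + p.2 1 = d 1 - 1 := by
          rw [← hde1, ← hp]; simp [Finsupp.add_apply]
        refine ⟨⟨α, hα, β, hβ, rfl⟩, ?_, ?_⟩
        · rw [List.sum_append, List.sum_cons]; omega
        · rw [List.length_append, List.length_cons]; omega
    have hfin : ∀ p ∈ Finset.HasAntidiagonal.antidiagonal (d - e), (F p).Finite := fun p _ =>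
      ((slice_finite hAB (p.1 0) (p.1 1)).prod (slice_finite hBB (p.2 0) (p.2 1))).image _
    have hinj : ∀ p : (Fin 2 →₀ ℕ) × (Fin 2 →₀ ℕ),
        Set.InjOn (fun q : List ℕ × List ℕ => q.1 ++ a :: q.2)
          ({α | α ∈ 𝒜 ∧ α.sum = p.1 0 ∧ α.length = p.1 1} ×ˢ
           {β | β ∈ ℬ ∧ β.sum = p.2 0 ∧ β.length = p.2 1}) := by
      rintro p ⟨α1, β1⟩ hq1 ⟨α2, β2⟩ hq2 heq
      obtain ⟨h1, h2⟩ := append_cons_inj (hAa α1 hq1.1.1) (hAa α2 hq2.1.1) heq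
      exact Prod.ext h1 h2
    have hdisj : ∀ p ∈ Finset.HasAntidiagonal.antidiagonal (d - e), ∀ q ∈ Finset.HasAntidiagonal.antidiagonal (d - e),
        p ≠ q → Disjoint (F p) (F q) := by
      intro p _ q _ hne
      rw [Set.disjoint_left]
      rintro σ ⟨⟨α1, β1⟩, ⟨⟨hα1, hs1, hl1⟩, ⟨hβ1, hs1', hl1'⟩⟩, rfl⟩
        ⟨⟨α2, β2⟩, ⟨⟨hα2, hs2, hl2⟩, ⟨hβ2, hs2', hl2'⟩⟩, heq⟩
      obtain ⟨h1, h2⟩ := append_cons_inj (hAa α2 hα2) (hAa α1 hα1) heq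
      apply hne
      refine Prod.ext (fin2_finsupp_ext ?_ ?_) (fin2_finsupp_ext ?_ ?_)
      · rw [← hs1, ← hs2, h1]
      · rw [← hl1, ← hl2, h1]
      · rw [← hs1', ← hs2', h2]
      · rw [← hl1', ← hl2', h2]
    rw [hslice, ncard_biUnion' _ _ hfin hdisj, Nat.cast_sum]
    apply Finset.sum_congr rfl
    intro p _
    rw [gfL_coeff, gfL_coeff, hF]
    simp only []
    rw [Set.ncard_image_of_injOn (hinj p), ncard_prod]
    push_cast; ring
  · rw [if_neg hed, gfL_coeff]
    have hempty : {σ | σ ∈ {σ | ∃ α ∈ 𝒜, ∃ β ∈ ℬ, σ = α ++ a :: β}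
        ∧ σ.sum = d 0 ∧ σ.length = d 1} = ∅ := by
      rw [Set.eq_empty_iff_forall_notMem]
      rintro σ ⟨⟨α, hα, β, hβ, rfl⟩, hsum, hlen⟩
      apply hed
      rw [fin2_le_iff, he0, he1]
      rw [List.sum_append, List.sum_cons] at hsum
      rw [List.length_append, List.length_cons] at hlen
      omega
    rw [hempty]
    simp

-- core combinatorial lemmas

variable {τ ν : List ℕ}

lemma getD_le_of_mem {b : ℕ} {σ : List ℕ} (hσb : ∀ x ∈ σ, x ≤ b) {p : ℕ}
    (hp : p < σ.length) : σ.getD p 0 ≤ b := hσb _ (getD_mem hp)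

lemma occ_of_prefix {σ α : List ℕ} {b : ℕ} {β : List ℕ} (h : σ = α ++ b :: β) (hν : ν ≠ [])
    (hocc : ShuffleTopOccurs τ ν α) : ShuffleTopOccurs τ ν σ := by
  obtain ⟨i, p, j, hti, hip, hpj, hvj, hts, hvs⟩ := hocc
  have hνl : 1 ≤ ν.length := List.length_pos_iff.mpr hν
  have hjν : j + ν.length ≤ α.length := hvj.1
  have hiτ : i + τ.length ≤ α.length := by have := hti.1; omega
  have hpα : p < α.length := by omega
  refine ⟨i, p, j, (wordIso_left h hiτ).mpr hti, hip, hpj, (wordIso_left h (by omega)).mpr hvj,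
    fun s hs => ?_, fun t ht => ?_⟩
  · rw [getD_left h (by omega), getD_left h hpα]
    exact hts s hs
  · rw [getD_left h (by omega), getD_left h hpα]
    exact hvs t ht

lemma occ_of_suffix {σ α : List ℕ} {b : ℕ} {β : List ℕ} (h : σ = α ++ b :: β)
    (hocc : ShuffleTopOccurs τ ν β) : ShuffleTopOccurs τ ν σ := by
  obtain ⟨i, p, j, hti, hip, hpj, hvj, hts, hvs⟩ := hocc
  set L := α.length with hL
  refine ⟨L + 1 + i, L + 1 + p, L + 1 + j, (wordIso_right h).mpr hti, by omega, by omega,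
    (wordIso_right h).mpr hvj, fun s hs => ?_, fun t ht => ?_⟩
  · rw [show L + 1 + i + s = L + 1 + (i + s) by omega, getD_right h, getD_right h]
    exact hts s hs
  · rw [show L + 1 + j + t = L + 1 + (j + t) by omega, getD_right h, getD_right h]
    exact hvs t ht

lemma avoids_imp_noOcc {σ : List ℕ} (hav : AvoidsWord τ σ) : ¬ ShuffleTopOccurs τ ν σ := by
  rintro ⟨i, p, j, hti, -, -, -, -, -⟩
  exact hav i hti

lemma smallFree_iff_avoids {b : ℕ} {σ : List ℕ} (hσb : ∀ x ∈ σ, x < b) :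
    SmallFree b ν σ ↔ AvoidsWord ν σ := by
  constructor
  · intro hsf i hvi
    exact hsf i ⟨hvi, fun t ht => hσb _ (getD_mem (by have := hvi.1; omega))⟩
  · rintro hav j ⟨hvj, -⟩
    exact hav j hvj

lemma core2 {σ α : List ℕ} {b : ℕ} {β : List ℕ} (h : σ = α ++ b :: β) (hν : ν ≠ [])
    (hαb : ∀ x ∈ α, x < b) :
    SmallFree b ν σ ↔ (AvoidsWord ν α ∧ SmallFree b ν β) := by
  set L := α.length with hL
  have hνl : 1 ≤ ν.length := List.length_pos_iff.mpr hν
  constructor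
  · intro hsf
    constructor
    · intro i hvi
      refine hsf i ⟨(wordIso_left h hvi.1).mpr hvi, fun t ht => ?_⟩
      rw [getD_left h (by have := hvi.1; omega)]
      exact hαb _ (getD_mem (by have := hvi.1; omega))
    · rintro j ⟨hvj, hsm⟩
      refine hsf (L + 1 + j) ⟨(wordIso_right h).mpr hvj, fun t ht => ?_⟩
      rw [show L + 1 + j + t = L + 1 + (j + t) by omega, getD_right h]
      exact hsm t ht
  · rintro ⟨hav, hsf⟩ j ⟨hvj, hsm⟩
    rcases block_split h hνl hsm with hle | ⟨j', rfl⟩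
    · exact hav j ((wordIso_left h hle).mp hvj)
    · refine hsf j' ⟨(wordIso_right h).mp hvj, fun t ht => ?_⟩
      rw [← getD_right h (j' + t), show L + 1 + (j' + t) = L + 1 + j' + t by omega]
      exact hsm t ht

lemma core1 {σ α : List ℕ} {b : ℕ} {β : List ℕ} (h : σ = α ++ b :: β)
    (hτ : τ ≠ []) (hν : ν ≠ [])
    (hαb : ∀ x ∈ α, x < b) (hβb : ∀ x ∈ β, x ≤ b) :
    ¬ ShuffleTopOccurs τ ν σ ↔
      ((AvoidsWord τ α ∧ ¬ ShuffleTopOccurs τ ν β) ∨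
       (¬ AvoidsWord τ α ∧ ¬ ShuffleTopOccurs τ ν α ∧ SmallFree b ν β)) := by
  set L := α.length with hL
  have hτl : 1 ≤ τ.length := List.length_pos_iff.mpr hτ
  have hνl : 1 ≤ ν.length := List.length_pos_iff.mpr hν
  have hσlen : σ.length = L + 1 + β.length := length_split h
  have hσb : ∀ x ∈ σ, x ≤ b := by
    subst h
    intro x hx
    rcases List.mem_append.mp hx with hx | hx
    · exact le_of_lt (hαb x hx)
    · rcases List.mem_cons.mp hx with rfl | hx
      · exact le_rfl
      · exact hβb x hx
  constructor
  · intro hno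
    have hnoα : ¬ ShuffleTopOccurs τ ν α := fun hocc => hno (occ_of_prefix h hν hocc)
    by_cases hav : AvoidsWord τ α
    · exact Or.inl ⟨hav, fun hocc => hno (occ_of_suffix h hocc)⟩
    · refine Or.inr ⟨hav, hnoα, ?_⟩
      obtain ⟨i0, hti⟩ : ∃ i0, WordIsoAt τ α i0 := by
        by_contra hc
        push_neg at hc
        exact hav fun i => hc i
      rintro j0 ⟨hvj, hsm⟩
      apply hno
      refine ⟨i0, L, L + 1 + j0, (wordIso_left h hti.1).mpr hti, hti.1, by omega,
        (wordIso_right h).mpr hvj, fun s hs => ?_, fun t ht => ?_⟩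
      · rw [getD_mid h, getD_left h (by have := hti.1; omega)]
        exact hαb _ (getD_mem (by have := hti.1; omega))
      · rw [getD_mid h, show L + 1 + j0 + t = L + 1 + (j0 + t) by omega, getD_right h]
        exact hsm t ht
  · rintro hcase ⟨i, p, j, hti, hip, hpj, hvj, hts, hvs⟩
    have hjν : j + ν.length ≤ σ.length := hvj.1
    have hplt : p < σ.length := by omega
    have hpb : σ.getD p 0 ≤ b := getD_le_of_mem hσb hplt
    have hτsplit : i + τ.length ≤ L ∨ ∃ i', i = L + 1 + i' :=
      block_split h hτl (fun s hs => lt_of_lt_of_le (hts s hs) hpb)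
    have hνsplit : j + ν.length ≤ L ∨ ∃ j', j = L + 1 + j' :=
      block_split h hνl (fun t ht => lt_of_lt_of_le (hvs t ht) hpb)
    rcases hcase with ⟨hav, hnoβ⟩ | ⟨hnav, hnoα, hsf⟩
    · -- α avoids τ, β avoids φ
      rcases hτsplit with hle | ⟨i', rfl⟩
      · exact hav i ((wordIso_left h hle).mp hti)
      · -- τ factor inside β, so everything is inside β
        rcases hνsplit with hle | ⟨j', rfl⟩
        · omega
        · apply hnoβ
          have hpL : L + 1 ≤ p := by omega
          refine ⟨i', p - (L + 1), j', (wordIso_right h).mp hti, by omega, by omega,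
            (wordIso_right h).mp hvj, fun s hs => ?_, fun t ht => ?_⟩
          · rw [← getD_right h (i' + s), ← getD_right h (p - (L + 1)),
              show L + 1 + (i' + s) = L + 1 + i' + s by omega,
              show L + 1 + (p - (L + 1)) = p by omega]
            exact hts s hs
          · rw [← getD_right h (j' + t), ← getD_right h (p - (L + 1)),
              show L + 1 + (j' + t) = L + 1 + j' + t by omega,
              show L + 1 + (p - (L + 1)) = p by omega]
            exact hvs t ht
    · -- α contains τ but avoids φ, β has no small ν factor
      rcases hτsplit with hleτ | ⟨i', rfl⟩
      · rcases hνsplit with hleν | ⟨j', rfl⟩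
        · -- everything inside α
          apply hnoα
          have hpL : p < L := by omega
          refine ⟨i, p, j, (wordIso_left h hleτ).mp hti, hip, hpj,
            (wordIso_left h hleν).mp hvj, fun s hs => ?_, fun t ht => ?_⟩
          · rw [← getD_left h (show i + s < L by omega), ← getD_left h hpL]
            exact hts s hs
          · rw [← getD_left h (show j + t < L by omega), ← getD_left h hpL]
            exact hvs t ht
        · -- ν factor inside β
          refine hsf j' ⟨(wordIso_right h).mp hvj, fun t ht => ?_⟩
          have := hvs t ht
          rw [show L + 1 + j' + t = L + 1 + (j' + t) by omega, getD_right h] at this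
          omega
      · -- τ factor inside β, hence ν factor inside β
        rcases hνsplit with hleν | ⟨j', rfl⟩
        · omega
        · refine hsf j' ⟨(wordIso_right h).mp hvj, fun t ht => ?_⟩
          have := hvs t ht
          rw [show L + 1 + j' + t = L + 1 + (j' + t) by omega, getD_right h] at this
          omega

end Stmt5Aux

open Stmt5Aux

open MvPowerSeries in
theorem stmt5 (τ ν : List ℕ) (hτ : τ ≠ []) (hν : ν ≠ [])
    (hτpos : ∀ x ∈ τ, 0 < x) (hνpos : ∀ x ∈ ν, 0 < x)
    (A : Finset ℕ) (hcard : 2 ≤ A.card) (hpos : ∀ a ∈ A, 0 < a)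
    (hA : A.Nonempty) (ak : ℕ) (hak : ak = A.max' hA) (A' : Finset ℕ)
    (hA' : A' = A.erase ak)
    (Cφ Cφ' Cτ' Cν' : MvPowerSeries (Fin 2) ℚ)
    (hCφ : ∀ n m : ℕ,
      (MvPowerSeries.coeff (Finsupp.single 0 n + Finsupp.single 1 m)) Cφ
        = (Set.ncard {σ : List ℕ | IsCompOf A n m σ ∧ ¬ ShuffleTopOccurs τ ν σ} : ℚ))
    (hCφ' : ∀ n m : ℕ,
      (MvPowerSeries.coeff (Finsupp.single 0 n + Finsupp.single 1 m)) Cφ'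
        = (Set.ncard {σ : List ℕ | IsCompOf A' n m σ ∧ ¬ ShuffleTopOccurs τ ν σ} : ℚ))
    (hCτ' : ∀ n m : ℕ,
      (MvPowerSeries.coeff (Finsupp.single 0 n + Finsupp.single 1 m)) Cτ'
        = (Set.ncard {σ : List ℕ | IsCompOf A' n m σ ∧ AvoidsWord τ σ} : ℚ))
    (hCν' : ∀ n m : ℕ,
      (MvPowerSeries.coeff (Finsupp.single 0 n + Finsupp.single 1 m)) Cν'
        = (Set.ncard {σ : List ℕ | IsCompOf A' n m σ ∧ AvoidsWord ν σ} : ℚ)) :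
    Cφ * (1 - (X 0 : MvPowerSeries (Fin 2) ℚ) ^ ak * X 1 * Cτ')
        * (1 - (X 0 : MvPowerSeries (Fin 2) ℚ) ^ ak * X 1 * Cν')
      = Cφ' - (X 0 : MvPowerSeries (Fin 2) ℚ) ^ ak * X 1 * Cτ' * Cν' := by
  classical
  -- basic facts about A, A', ak
  have hmemak : ak ∈ A := hak ▸ A.max'_mem hA
  have hle : ∀ x ∈ A, x ≤ ak := fun x hx => hak ▸ A.le_max' x hx
  have hA'A : ∀ x ∈ A', x ∈ A := fun x hx => Finset.mem_of_mem_erase (hA' ▸ hx)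
  have hA'ne : ∀ x ∈ A', x ≠ ak := fun x hx => Finset.ne_of_mem_erase (hA' ▸ hx)
  have hlt : ∀ x ∈ A', x < ak := fun x hx => lt_of_le_of_ne (hle x (hA'A x hx)) (hA'ne x hx)
  have hmemA' : ∀ x, x ∈ A → x ≠ ak → x ∈ A' := fun x hx hne => hA' ▸ Finset.mem_erase.mpr ⟨hne, hx⟩
  -- the six sets
  set Sφ : Set (List ℕ) := {σ | (∀ x ∈ σ, x ∈ A) ∧ ¬ ShuffleTopOccurs τ ν σ} with hSφ
  set Sφ' : Set (List ℕ) := {σ | (∀ x ∈ σ, x ∈ A') ∧ ¬ ShuffleTopOccurs τ ν σ} with hSφ'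
  set Sτ' : Set (List ℕ) := {σ | (∀ x ∈ σ, x ∈ A') ∧ AvoidsWord τ σ} with hSτ'
  set Sν' : Set (List ℕ) := {σ | (∀ x ∈ σ, x ∈ A') ∧ AvoidsWord ν σ} with hSν'
  set SW : Set (List ℕ) := {σ | (∀ x ∈ σ, x ∈ A) ∧ SmallFree ak ν σ} with hSW
  set SH : Set (List ℕ) := {σ | (∀ x ∈ σ, x ∈ A') ∧ ¬ ShuffleTopOccurs τ ν σ ∧
    ¬ AvoidsWord τ σ} with hSH
  -- membership bounds
  have hSφA : ∀ σ ∈ Sφ, ∀ x ∈ σ, x ∈ A := fun σ h => h.1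
  have hSφ'A : ∀ σ ∈ Sφ', ∀ x ∈ σ, x ∈ A := fun σ h x hx => hA'A x (h.1 x hx)
  have hSτ'A : ∀ σ ∈ Sτ', ∀ x ∈ σ, x ∈ A := fun σ h x hx => hA'A x (h.1 x hx)
  have hSν'A : ∀ σ ∈ Sν', ∀ x ∈ σ, x ∈ A := fun σ h x hx => hA'A x (h.1 x hx)
  have hSWA : ∀ σ ∈ SW, ∀ x ∈ σ, x ∈ A := fun σ h => h.1
  have hSHA : ∀ σ ∈ SH, ∀ x ∈ σ, x ∈ A := fun σ h x hx => hA'A x (h.1 x hx)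
  have hSτ'ak : ∀ α ∈ Sτ', ak ∉ α := fun α h hmem => (hA'ne ak (h.1 ak hmem)) rfl
  have hSν'ak : ∀ α ∈ Sν', ak ∉ α := fun α h hmem => (hA'ne ak (h.1 ak hmem)) rfl
  have hSHak : ∀ α ∈ SH, ak ∉ α := fun α h hmem => (hA'ne ak (h.1 ak hmem)) rfl
  -- append sets over A
  have happA : ∀ (𝒜 ℬ : Set (List ℕ)), (∀ σ ∈ 𝒜, ∀ x ∈ σ, x ∈ A) →
      (∀ σ ∈ ℬ, ∀ x ∈ σ, x ∈ A) →
      ∀ σ ∈ {σ : List ℕ | ∃ α ∈ 𝒜, ∃ β ∈ ℬ, σ = α ++ ak :: β}, ∀ x ∈ σ, x ∈ A := by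
    rintro 𝒜 ℬ h1 h2 σ ⟨α, hα, β, hβ, rfl⟩ x hx
    rcases List.mem_append.mp hx with hx | hx
    · exact h1 α hα x hx
    · rcases List.mem_cons.mp hx with rfl | hx
      · exact hmemak
      · exact h2 β hβ x hx
  have hakmemapp : ∀ (𝒜 ℬ : Set (List ℕ)),
      ∀ σ ∈ {σ : List ℕ | ∃ α ∈ 𝒜, ∃ β ∈ ℬ, σ = α ++ ak :: β}, ak ∈ σ := by
    rintro 𝒜 ℬ σ ⟨α, hα, β, hβ, rfl⟩
    exact List.mem_append.mpr (Or.inr List.mem_cons_self)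
  -- the three set decompositions
  have E1 : Sφ = Sφ' ∪ ({σ | ∃ α ∈ Sτ', ∃ β ∈ Sφ, σ = α ++ ak :: β}
      ∪ {σ | ∃ α ∈ SH, ∃ β ∈ SW, σ = α ++ ak :: β}) := by
    ext σ
    constructor
    · rintro ⟨hEA, hno⟩
      by_cases hmem : ak ∈ σ
      · obtain ⟨α, β, hsplit, hαak⟩ := exists_split hmem
        have hEα : ∀ x ∈ α, x ∈ A' := fun x hx => hmemA' x
          (hEA x (hsplit ▸ List.mem_append.mpr (Or.inl hx)))
          (fun hxe => hαak (hxe ▸ hx))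
        have hEβ : ∀ x ∈ β, x ∈ A := fun x hx =>
          hEA x (hsplit ▸ List.mem_append.mpr (Or.inr (List.mem_cons_of_mem _ hx)))
        have hαlt : ∀ x ∈ α, x < ak := fun x hx => hlt x (hEα x hx)
        have hβle : ∀ x ∈ β, x ≤ ak := fun x hx => hle x (hEβ x hx)
        rcases (core1 hsplit hτ hν hαlt hβle).mp hno with ⟨hav, hnoβ⟩ | ⟨hnav, hnoα, hsf⟩
        · exact Or.inr (Or.inl ⟨α, ⟨hEα, hav⟩, β, ⟨hEβ, hnoβ⟩, hsplit⟩)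
        · exact Or.inr (Or.inr ⟨α, ⟨hEα, hnoα, hnav⟩, β, ⟨hEβ, hsf⟩, hsplit⟩)
      · exact Or.inl ⟨fun x hx => hmemA' x (hEA x hx) (fun hxe => hmem (hxe ▸ hx)), hno⟩
    · rintro (⟨hEA', hno⟩ | (⟨α, ⟨hEα, hav⟩, β, ⟨hEβ, hnoβ⟩, hsplit⟩
        | ⟨α, ⟨hEα, hnoα, hnav⟩, β, ⟨hEβ, hsf⟩, hsplit⟩))
      · exact ⟨fun x hx => hA'A x (hEA' x hx), hno⟩
      · refine ⟨?_, (core1 hsplit hτ hν (fun x hx => hlt x (hEα x hx))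
          (fun x hx => hle x (hEβ x hx))).mpr (Or.inl ⟨hav, hnoβ⟩)⟩
        exact fun x hx => happA Sτ' Sφ hSτ'A hSφA _ ⟨α, ⟨hEα, hav⟩, β, ⟨hEβ, hnoβ⟩, hsplit⟩ x hx
      · refine ⟨?_, (core1 hsplit hτ hν (fun x hx => hlt x (hEα x hx))
          (fun x hx => hle x (hEβ x hx))).mpr (Or.inr ⟨hnav, hnoα, hsf⟩)⟩
        exact fun x hx => happA SH SW hSHA hSWA _
          ⟨α, ⟨hEα, hnoα, hnav⟩, β, ⟨hEβ, hsf⟩, hsplit⟩ x hx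
  have E2 : SW = Sν' ∪ {σ | ∃ α ∈ Sν', ∃ β ∈ SW, σ = α ++ ak :: β} := by
    ext σ
    constructor
    · rintro ⟨hEA, hsf⟩
      by_cases hmem : ak ∈ σ
      · obtain ⟨α, β, hsplit, hαak⟩ := exists_split hmem
        have hEα : ∀ x ∈ α, x ∈ A' := fun x hx => hmemA' x
          (hEA x (hsplit ▸ List.mem_append.mpr (Or.inl hx)))
          (fun hxe => hαak (hxe ▸ hx))
        have hEβ : ∀ x ∈ β, x ∈ A := fun x hx =>
          hEA x (hsplit ▸ List.mem_append.mpr (Or.inr (List.mem_cons_of_mem _ hx)))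
        obtain ⟨hav, hsfβ⟩ := (core2 hsplit hν (fun x hx => hlt x (hEα x hx))).mp hsf
        exact Or.inr ⟨α, ⟨hEα, hav⟩, β, ⟨hEβ, hsfβ⟩, hsplit⟩
      · have hEA' : ∀ x ∈ σ, x ∈ A' := fun x hx => hmemA' x (hEA x hx)
          (fun hxe => hmem (hxe ▸ hx))
        exact Or.inl ⟨hEA', (smallFree_iff_avoids (fun x hx => hlt x (hEA' x hx))).mp hsf⟩
    · rintro (⟨hEA', hav⟩ | ⟨α, ⟨hEα, hav⟩, β, ⟨hEβ, hsfβ⟩, hsplit⟩)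
      · exact ⟨fun x hx => hA'A x (hEA' x hx),
          (smallFree_iff_avoids (fun x hx => hlt x (hEA' x hx))).mpr hav⟩
      · refine ⟨?_, (core2 hsplit hν (fun x hx => hlt x (hEα x hx))).mpr ⟨hav, hsfβ⟩⟩
        exact fun x hx => happA Sν' SW hSν'A hSWA _ ⟨α, ⟨hEα, hav⟩, β, ⟨hEβ, hsfβ⟩, hsplit⟩ x hx
  have E3 : Sφ' = Sτ' ∪ SH := by
    ext σ
    constructor
    · rintro ⟨hEA', hno⟩
      by_cases hav : AvoidsWord τ σ
      · exact Or.inl ⟨hEA', hav⟩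
      · exact Or.inr ⟨hEA', hno, hav⟩
    · rintro (⟨hEA', hav⟩ | ⟨hEA', hno, -⟩)
      · exact ⟨hEA', avoids_imp_noOcc hav⟩
      · exact ⟨hEA', hno⟩
  -- disjointness
  have noak : ∀ σ ∈ Sφ' ∪ (Sτ' ∪ (Sν' ∪ SH)), ak ∉ σ := by
    rintro σ (h | (h | (h | h))) hmem <;> exact hA'ne ak (h.1 ak hmem) rfl
  have D1 : Disjoint Sφ' ({σ | ∃ α ∈ Sτ', ∃ β ∈ Sφ, σ = α ++ ak :: β}
      ∪ {σ | ∃ α ∈ SH, ∃ β ∈ SW, σ = α ++ ak :: β}) := by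
    rw [Set.disjoint_left]
    rintro σ hσ (h | h)
    · exact noak σ (Or.inl hσ) (hakmemapp _ _ _ h)
    · exact noak σ (Or.inl hσ) (hakmemapp _ _ _ h)
  have D2 : Disjoint {σ | ∃ α ∈ Sτ', ∃ β ∈ Sφ, σ = α ++ ak :: β}
      {σ | ∃ α ∈ SH, ∃ β ∈ SW, σ = α ++ ak :: β} := by
    rw [Set.disjoint_left]
    rintro σ ⟨α1, hα1, β1, hβ1, rfl⟩ ⟨α2, hα2, β2, hβ2, heq⟩
    obtain ⟨h1, -⟩ := append_cons_inj (hSτ'ak α1 hα1) (hSHak α2 hα2) heq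
    exact hα2.2.2 (h1 ▸ hα1.2)
  have D3 : Disjoint Sν' {σ | ∃ α ∈ Sν', ∃ β ∈ SW, σ = α ++ ak :: β} := by
    rw [Set.disjoint_left]
    intro σ hσ h
    exact noak σ (Or.inr (Or.inr (Or.inl hσ))) (hakmemapp _ _ _ h)
  have D4 : Disjoint Sτ' SH := by
    rw [Set.disjoint_left]
    intro σ hσ h
    exact h.2.2 hσ.2
  -- generating function identities
  set e : Fin 2 →₀ ℕ := Finsupp.single 0 ak + Finsupp.single 1 1 with hedef
  set M : MvPowerSeries (Fin 2) ℚ := MvPowerSeries.monomial e 1 with hMdef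
  have hXM : (X 0 : MvPowerSeries (Fin 2) ℚ) ^ ak * X 1 = M := by
    rw [hMdef, hedef, MvPowerSeries.X_pow_eq,
      show (X 1 : MvPowerSeries (Fin 2) ℚ) = MvPowerSeries.monomial (Finsupp.single 1 1) 1
        from rfl,
      MvPowerSeries.monomial_mul_monomial, one_mul]
  have happ1A := happA Sτ' Sφ hSτ'A hSφA
  have happ2A := happA SH SW hSHA hSWA
  have happ3A := happA Sν' SW hSν'A hSWA
  have eq1 : gfL Sφ = gfL Sφ' + (M * (gfL Sτ' * gfL Sφ) + M * (gfL SH * gfL SW)) := by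
    conv_lhs => rw [E1]
    rw [gfL_union (B := A) hSφ'A
      (fun σ hσ => by
        rcases hσ with h | h
        exacts [happ1A σ h, happ2A σ h]) D1,
      gfL_union (B := A) happ1A happ2A D2,
      gfL_append (B := A) hSτ'A hSφA hSτ'ak, gfL_append (B := A) hSHA hSWA hSHak,
      ← hedef, ← hMdef]
  have eq2 : gfL SW = gfL Sν' + M * (gfL Sν' * gfL SW) := by
    conv_lhs => rw [E2]
    rw [gfL_union (B := A) hSν'A happ3A D3,
      gfL_append (B := A) hSν'A hSWA hSν'ak, ← hedef, ← hMdef]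
  have eq3 : gfL Sφ' = gfL Sτ' + gfL SH := by
    rw [E3, gfL_union (B := A) hSτ'A hSHA D4]
  -- identify the given series with the combinatorial generating functions
  have hφeq : Cφ = gfL Sφ := by
    apply MvPowerSeries.ext; intro d
    rw [gfL_coeff]
    have h := hCφ (d 0) (d 1)
    rw [← fin2_finsupp_decomp d] at h
    rw [h]
    have hxy : {σ : List ℕ | IsCompOf A (d 0) (d 1) σ ∧ ¬ ShuffleTopOccurs τ ν σ}
        = {σ | σ ∈ Sφ ∧ σ.sum = d 0 ∧ σ.length = d 1} := by
      ext σ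
      simp only [Set.mem_setOf_eq, IsCompOf, hSφ]
      tauto
    rw [hxy]
  have hφ'eq : Cφ' = gfL Sφ' := by
    apply MvPowerSeries.ext; intro d
    rw [gfL_coeff]
    have h := hCφ' (d 0) (d 1)
    rw [← fin2_finsupp_decomp d] at h
    rw [h]
    have hxy : {σ : List ℕ | IsCompOf A' (d 0) (d 1) σ ∧ ¬ ShuffleTopOccurs τ ν σ}
        = {σ | σ ∈ Sφ' ∧ σ.sum = d 0 ∧ σ.length = d 1} := by
      ext σ
      simp only [Set.mem_setOf_eq, IsCompOf, hSφ']
      tauto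
    rw [hxy]
  have hτ'eq : Cτ' = gfL Sτ' := by
    apply MvPowerSeries.ext; intro d
    rw [gfL_coeff]
    have h := hCτ' (d 0) (d 1)
    rw [← fin2_finsupp_decomp d] at h
    rw [h]
    have hxy : {σ : List ℕ | IsCompOf A' (d 0) (d 1) σ ∧ AvoidsWord τ σ}
        = {σ | σ ∈ Sτ' ∧ σ.sum = d 0 ∧ σ.length = d 1} := by
      ext σ
      simp only [Set.mem_setOf_eq, IsCompOf, hSτ']
      tauto
    rw [hxy]
  have hν'eq : Cν' = gfL Sν' := by
    apply MvPowerSeries.ext; intro d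
    rw [gfL_coeff]
    have h := hCν' (d 0) (d 1)
    rw [← fin2_finsupp_decomp d] at h
    rw [h]
    have hxy : {σ : List ℕ | IsCompOf A' (d 0) (d 1) σ ∧ AvoidsWord ν σ}
        = {σ | σ ∈ Sν' ∧ σ.sum = d 0 ∧ σ.length = d 1} := by
      ext σ
      simp only [Set.mem_setOf_eq, IsCompOf, hSν']
      tauto
    rw [hxy]
  rw [hφeq, hφ'eq, hτ'eq, hν'eq, hXM]
  linear_combination (1 - M * gfL Sν') * eq1 + (M * gfL SH) * eq2 - (M * gfL Sν') * eq3
end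

section
/- Let A = {a₁ < ⋯ < a_k} be a finite set of positive integers with k ≥ 2, let A' = A ∖ {a₁}, and let ψ = τ-1-ν be a shuffle pattern whose middle letter 1 is strictly smaller than every letter of the nonempty words τ and ν. Then in ℚ⟦x,y⟧: C_ψ^A(x,y)·(1 − x^{a₁} y·C_τ^{A'}(x,y))·(1 − x^{a₁} y·C_ν^{A'}(x,y)) = C_ψ^{A'}(x,y) − x^{a₁} y·C_τ^{A'}(x,y)·C_ν^{A'}(x,y). -/
/-- An occurrence of the shuffle pattern `τ-1-ν` (middle letter smaller than all
letters of `τ` and `ν`) in `σ`: a contiguous factor order-isomorphic to `τ`, then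
(strictly later) a single letter strictly smaller than every letter of the two
factors, then (strictly later) a contiguous factor order-isomorphic to `ν`. -/
def ShuffleBotOccurs (τ ν σ : List ℕ) : Prop :=
  ∃ i p j : ℕ, WordIsoAt τ σ i ∧ i + τ.length ≤ p ∧ p + 1 ≤ j ∧ WordIsoAt ν σ j ∧
    (∀ s : ℕ, s < τ.length → σ.getD p 0 < σ.getD (i + s) 0) ∧
    (∀ t : ℕ, t < ν.length → σ.getD p 0 < σ.getD (j + t) 0)

def PureNu (ν : List ℕ) (a1 : ℕ) (ρ : List ℕ) : Prop :=
  ∃ j, WordIsoAt ν ρ j ∧ ∀ t < ν.length, a1 < ρ.getD (j + t) 0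

namespace Stmt6Aux
open MvPowerSeries


lemma getD_mem_of_lt {l : List ℕ} {n : ℕ} (h : n < l.length) : l.getD n 0 ∈ l := by
  rw [List.getD_eq_getElem _ _ h]; exact List.getElem_mem h

variable {a1 : ℕ} {w ρ : List ℕ}

lemma len_split : (w ++ a1 :: ρ).length = w.length + 1 + ρ.length := by
  simp [List.length_append]; omega

lemma getD_split_left {p : ℕ} (h : p < w.length) :
    (w ++ a1 :: ρ).getD p 0 = w.getD p 0 := by
  simp [List.getD_eq_getElem?_getD, List.getElem?_append_left h]

lemma getD_split_mid : (w ++ a1 :: ρ).getD w.length 0 = a1 := by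
  simp [List.getD_eq_getElem?_getD, List.getElem?_append_right (le_refl w.length)]

lemma getD_split_right (j : ℕ) :
    (w ++ a1 :: ρ).getD (w.length + 1 + j) 0 = ρ.getD j 0 := by
  rw [List.getD_eq_getElem?_getD, List.getD_eq_getElem?_getD,
    List.getElem?_append_right (by omega)]
  congr 1
  have : w.length + 1 + j - w.length = j + 1 := by omega
  rw [this]
  simp

lemma wiso_left {v : List ℕ} {i : ℕ} (h : WordIsoAt v w i) :
    WordIsoAt v (w ++ a1 :: ρ) i := by
  obtain ⟨h1, h2⟩ := h
  refine ⟨by rw [len_split]; omega, fun s t hs ht => ?_⟩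
  rw [getD_split_left (by omega), getD_split_left (by omega)]
  exact h2 s t hs ht

lemma wiso_left_rev {v : List ℕ} {i : ℕ} (hl : i + v.length ≤ w.length)
    (h : WordIsoAt v (w ++ a1 :: ρ) i) : WordIsoAt v w i := by
  obtain ⟨_, h2⟩ := h
  refine ⟨hl, fun s t hs ht => ?_⟩
  rw [← getD_split_left (a1 := a1) (ρ := ρ) (w := w) (p := i + s) (by omega),
    ← getD_split_left (a1 := a1) (ρ := ρ) (w := w) (p := i + t) (by omega)]
  exact h2 s t hs ht

lemma wiso_right {v : List ℕ} {j : ℕ} (h : WordIsoAt v ρ j) :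
    WordIsoAt v (w ++ a1 :: ρ) (w.length + 1 + j) := by
  obtain ⟨h1, h2⟩ := h
  refine ⟨by rw [len_split]; omega, fun s t hs ht => ?_⟩
  have e1 : w.length + 1 + j + s = w.length + 1 + (j + s) := by omega
  have e2 : w.length + 1 + j + t = w.length + 1 + (j + t) := by omega
  rw [e1, e2, getD_split_right, getD_split_right]
  exact h2 s t hs ht

lemma wiso_right_rev {v : List ℕ} {i : ℕ} (hg : w.length + 1 ≤ i)
    (h : WordIsoAt v (w ++ a1 :: ρ) i) : WordIsoAt v ρ (i - (w.length + 1)) := by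
  obtain ⟨h1, h2⟩ := h
  rw [len_split] at h1
  refine ⟨by omega, fun s t hs ht => ?_⟩
  have e1 : i + s = w.length + 1 + (i - (w.length + 1) + s) := by omega
  have e2 : i + t = w.length + 1 + (i - (w.length + 1) + t) := by omega
  rw [← getD_split_right (a1 := a1) (w := w) (i - (w.length + 1) + s),
    ← getD_split_right (a1 := a1) (w := w) (i - (w.length + 1) + t), ← e1, ← e2]
  exact h2 s t hs ht

lemma factor_place {v : List ℕ} {i : ℕ} (hv : v ≠ [])
    (hlen : i + v.length ≤ (w ++ a1 :: ρ).length)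
    (hne : ∀ s < v.length, (w ++ a1 :: ρ).getD (i + s) 0 ≠ a1) :
    i + v.length ≤ w.length ∨ w.length + 1 ≤ i := by
  by_contra hc
  push_neg at hc
  obtain ⟨hc1, hc2⟩ := hc
  have hs : w.length - i < v.length := by omega
  have := hne _ hs
  rw [show i + (w.length - i) = w.length by omega, getD_split_mid] at this
  exact this rfl

lemma pure_append {ν : List ℕ} (hν : ν ≠ []) (hw : ∀ x ∈ w, a1 < x) :
    PureNu ν a1 (w ++ a1 :: ρ) ↔ (¬ AvoidsWord ν w) ∨ PureNu ν a1 ρ := by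
  constructor
  · rintro ⟨j, hj, hgt⟩
    rcases factor_place hν hj.1 (fun s hs => (hgt s hs).ne') with hL | hR
    · exact Or.inl (fun hav => hav j (wiso_left_rev hL hj))
    · refine Or.inr ⟨j - (w.length + 1), wiso_right_rev hR hj, fun t ht => ?_⟩
      have e : j + t = w.length + 1 + (j - (w.length + 1) + t) := by omega
      rw [← getD_split_right (a1 := a1) (w := w), ← e]
      exact hgt t ht
  · rintro (hav | ⟨j, hj, hgt⟩)
    · rw [AvoidsWord] at hav
      push_neg at hav
      obtain ⟨i, hi⟩ := hav
      refine ⟨i, wiso_left hi, fun t ht => ?_⟩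
      rw [getD_split_left (by have := hi.1; omega)]
      exact hw _ (getD_mem_of_lt (by have := hi.1; omega))
    · refine ⟨w.length + 1 + j, wiso_right hj, fun t ht => ?_⟩
      rw [show w.length + 1 + j + t = w.length + 1 + (j + t) by omega, getD_split_right]
      exact hgt t ht

lemma pure_of_occ {τ ν σ : List ℕ} (hν : ν ≠ []) (hσ : ∀ x ∈ σ, a1 ≤ x)
    (h : ShuffleBotOccurs τ ν σ) : PureNu ν a1 σ := by
  obtain ⟨i, p, j, hti, hip, hpj, hvj, hsm, htm⟩ := h
  have hνlen : 0 < ν.length := List.length_pos_iff.mpr hν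
  have hp : p < σ.length := by have := hvj.1; omega
  refine ⟨j, hvj, fun t ht => lt_of_le_of_lt ?_ (htm t ht)⟩
  exact hσ _ (getD_mem_of_lt hp)

lemma pure_iff_nonavoid {ν σ : List ℕ} (hσ : ∀ x ∈ σ, a1 < x) :
    PureNu ν a1 σ ↔ ¬ AvoidsWord ν σ := by
  constructor
  · rintro ⟨j, hj, _⟩ hav; exact hav j hj
  · intro hav
    rw [AvoidsWord] at hav; push_neg at hav
    obtain ⟨j, hj⟩ := hav
    exact ⟨j, hj, fun t ht => hσ _ (getD_mem_of_lt (by have := hj.1; omega))⟩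

lemma occ_append {τ ν : List ℕ} (hτ : τ ≠ []) (hν : ν ≠ [])
    (hw : ∀ x ∈ w, a1 < x) (hρ : ∀ x ∈ ρ, a1 ≤ x) :
    ShuffleBotOccurs τ ν (w ++ a1 :: ρ) ↔
      ShuffleBotOccurs τ ν w ∨ ShuffleBotOccurs τ ν ρ ∨
        (¬ AvoidsWord τ w ∧ PureNu ν a1 ρ) := by
  have hτlen : 0 < τ.length := List.length_pos_iff.mpr hτ
  have hνlen : 0 < ν.length := List.length_pos_iff.mpr hν
  have hσ : ∀ x ∈ w ++ a1 :: ρ, a1 ≤ x := by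
    intro x hx
    rcases List.mem_append.mp hx with h | h
    · exact (hw x h).le
    · rcases List.mem_cons.mp h with h | h
      · omega
      · exact hρ x h
  constructor
  · rintro ⟨i, p, j, hti, hip, hpj, hvj, hsm, htm⟩
    have hp : p < (w ++ a1 :: ρ).length := by have := hvj.1; omega
    have hc : a1 ≤ (w ++ a1 :: ρ).getD p 0 := hσ _ (getD_mem_of_lt hp)
    have hτplace := factor_place hτ hti.1 (fun s hs => by have := hsm s hs; omega)
    have hνplace := factor_place hν hvj.1 (fun t ht => by have := htm t ht; omega)
    rcases hτplace with hτL | hτR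
    · rcases hνplace with hνL | hνR
      · -- both in w
        left
        have hjw : j + ν.length ≤ w.length := hνL
        have hpw : p < w.length := by omega
        refine ⟨i, p, j, wiso_left_rev hτL hti, hip, hpj, wiso_left_rev hνL hvj,
          fun s hs => ?_, fun t ht => ?_⟩
        · rw [← getD_split_left (a1 := a1) (ρ := ρ) (w := w) (p := p) hpw,
            ← getD_split_left (a1 := a1) (ρ := ρ) (w := w) (p := i + s) (by omega)]
          exact hsm s hs
        · rw [← getD_split_left (a1 := a1) (ρ := ρ) (w := w) (p := p) hpw,
            ← getD_split_left (a1 := a1) (ρ := ρ) (w := w) (p := j + t) (by omega)]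
          exact htm t ht
      · -- τ in w, ν in ρ
        right; right
        refine ⟨fun hav => hav i (wiso_left_rev hτL hti), j - (w.length + 1),
          wiso_right_rev hνR hvj, fun t ht => ?_⟩
        have e : j + t = w.length + 1 + (j - (w.length + 1) + t) := by omega
        rw [← getD_split_right (a1 := a1) (w := w), ← e]
        exact lt_of_le_of_lt hc (htm t ht)
    · rcases hνplace with hνL | hνR
      · -- τ in ρ, ν in w: impossible
        exfalso; omega
      · -- both in ρ
        right; left
        have hpR : w.length + 1 ≤ p := by omega
        refine ⟨i - (w.length + 1), p - (w.length + 1), j - (w.length + 1),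
          wiso_right_rev hτR hti, by omega, by omega, wiso_right_rev hνR hvj,
          fun s hs => ?_, fun t ht => ?_⟩
        · have e1 : p = w.length + 1 + (p - (w.length + 1)) := by omega
          have e2 : i + s = w.length + 1 + (i - (w.length + 1) + s) := by omega
          rw [← getD_split_right (a1 := a1) (w := w) (p - (w.length + 1)),
            ← getD_split_right (a1 := a1) (w := w) (i - (w.length + 1) + s), ← e1, ← e2]
          exact hsm s hs
        · have e1 : p = w.length + 1 + (p - (w.length + 1)) := by omega
          have e2 : j + t = w.length + 1 + (j - (w.length + 1) + t) := by omega
          rw [← getD_split_right (a1 := a1) (w := w) (p - (w.length + 1)),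
            ← getD_split_right (a1 := a1) (w := w) (j - (w.length + 1) + t), ← e1, ← e2]
          exact htm t ht
  · rintro (⟨i, p, j, hti, hip, hpj, hvj, hsm, htm⟩ |
      ⟨i, p, j, hti, hip, hpj, hvj, hsm, htm⟩ | ⟨hav, j', hj', hgt⟩)
    · -- occurrence inside w
      have hjw : j + ν.length ≤ w.length := hvj.1
      have hpw : p < w.length := by omega
      refine ⟨i, p, j, wiso_left hti, hip, hpj, wiso_left hvj, fun s hs => ?_,
        fun t ht => ?_⟩
      · rw [getD_split_left (a1 := a1) (ρ := ρ) hpw,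
          getD_split_left (a1 := a1) (ρ := ρ) (by have := hti.1; omega)]
        exact hsm s hs
      · rw [getD_split_left (a1 := a1) (ρ := ρ) hpw,
          getD_split_left (a1 := a1) (ρ := ρ) (by omega)]
        exact htm t ht
    · -- occurrence inside ρ
      refine ⟨w.length + 1 + i, w.length + 1 + p, w.length + 1 + j, wiso_right hti,
        by omega, by omega, wiso_right hvj, fun s hs => ?_, fun t ht => ?_⟩
      · rw [show w.length + 1 + i + s = w.length + 1 + (i + s) by omega,
          getD_split_right, getD_split_right]
        exact hsm s hs
      · rw [show w.length + 1 + j + t = w.length + 1 + (j + t) by omega,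
          getD_split_right, getD_split_right]
        exact htm t ht
    · -- cross occurrence
      rw [AvoidsWord] at hav; push_neg at hav
      obtain ⟨i, hi⟩ := hav
      refine ⟨i, w.length, w.length + 1 + j', wiso_left hi, by have := hi.1; omega,
        by omega, wiso_right hj', fun s hs => ?_, fun t ht => ?_⟩
      · rw [getD_split_mid, getD_split_left (a1 := a1) (ρ := ρ) (by have := hi.1; omega)]
        exact hw _ (getD_mem_of_lt (by have := hi.1; omega))
      · rw [getD_split_mid,
          show w.length + 1 + j' + t = w.length + 1 + (j' + t) by omega, getD_split_right]
        exact hgt t ht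



lemma finite_len_eq (n : ℕ) : ∀ m : ℕ, {l : List ℕ | l.length = m ∧ ∀ x ∈ l, x ≤ n}.Finite := by
  intro m
  induction m with
  | zero =>
    apply Set.Finite.subset (Set.finite_singleton ([] : List ℕ))
    rintro l ⟨hl, -⟩
    simp [List.length_eq_zero_iff.mp hl]
  | succ m ih =>
    apply Set.Finite.subset (((Set.finite_Iic n).prod ih).image (fun p => p.1 :: p.2))
    rintro l ⟨hl, hb⟩
    cases l with
    | nil => simp at hl
    | cons a t =>
      refine ⟨(a, t), ⟨?_, ?_, ?_⟩, rfl⟩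
      · exact hb a (List.mem_cons_self (a := a) (l := t))
      · simpa using hl
      · exact fun x hx => hb x (List.mem_cons_of_mem a hx)

lemma finite_comp (A : Finset ℕ) (n m : ℕ) (P : List ℕ → Prop) :
    {σ : List ℕ | IsCompOf A n m σ ∧ P σ}.Finite := by
  apply Set.Finite.subset (finite_len_eq n m)
  rintro σ ⟨⟨hmem, hsum, hlen⟩, -⟩
  exact ⟨hlen, fun x hx => hsum ▸ List.single_le_sum (fun y _ => Nat.zero_le y) x hx⟩

lemma ncard_prod {α β : Type*} (s : Set α) (t : Set β) :
    (s ×ˢ t).ncard = s.ncard * t.ncard := by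
  rw [← Nat.card_coe_set_eq, ← Nat.card_coe_set_eq, ← Nat.card_coe_set_eq,
    Nat.card_congr (Equiv.Set.prod s t), Nat.card_prod]

lemma ncard_eq_sum_fiber {α β : Type*} [DecidableEq β] {s : Set α} (hs : s.Finite)
    (k : α → β) (K : Finset β) (hK : ∀ a ∈ s, k a ∈ K) :
    s.ncard = ∑ b ∈ K, {a ∈ s | k a = b}.ncard := by
  classical
  rw [Set.ncard_eq_toFinset_card s hs]
  rw [Finset.card_eq_sum_card_fiberwise (f := k) (t := K)
    (fun a ha => hK a (hs.mem_toFinset.mp ha))]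
  refine Finset.sum_congr rfl (fun b _ => ?_)
  rw [Set.ncard_eq_toFinset_card _ (hs.subset (Set.sep_subset _ _))]
  congr 1
  ext x
  simp [Set.Finite.mem_toFinset, Finset.mem_filter]

lemma join_inj {a1 : ℕ} : ∀ (w1 : List ℕ) {w2 ρ1 ρ2 : List ℕ}, a1 ∉ w1 → a1 ∉ w2 →
    w1 ++ a1 :: ρ1 = w2 ++ a1 :: ρ2 → w1 = w2 ∧ ρ1 = ρ2 := by
  intro w1
  induction w1 with
  | nil =>
    intro w2 ρ1 ρ2 _ h2 he
    cases w2 with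
    | nil => simpa using he
    | cons b w2' =>
      simp only [List.nil_append, List.cons_append, List.cons.injEq] at he
      exact absurd (he.1 ▸ List.mem_cons_self (a := b) (l := w2')) (by simpa [he.1] using h2)
  | cons a w1' ih =>
    intro w2 ρ1 ρ2 h1 h2 he
    cases w2 with
    | nil =>
      simp only [List.cons_append, List.nil_append, List.cons.injEq] at he
      exact absurd (he.1 ▸ List.mem_cons_self (a := a) (l := w1')) (by simpa [he.1] using h1)
    | cons b w2' =>
      simp only [List.cons_append, List.cons.injEq] at he
      have := ih (fun h => h1 (List.mem_cons_of_mem a h))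
        (fun h => h2 (he.1 ▸ List.mem_cons_of_mem a h)) he.2
      exact ⟨by rw [he.1, this.1], this.2⟩

lemma exists_split {a1 : ℕ} {σ : List ℕ} (h : a1 ∈ σ) :
    ∃ w ρ : List ℕ, a1 ∉ w ∧ σ = w ++ a1 :: ρ := by
  induction σ with
  | nil => cases h
  | cons x t ih =>
    by_cases hx : x = a1
    · exact ⟨[], t, by simp, by rw [hx]; rfl⟩
    · have ht : a1 ∈ t := by
        rcases List.mem_cons.mp h with h' | h'
        · exact absurd h'.symm hx
        · exact h'
      obtain ⟨w, ρ, hw, he⟩ := ih ht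
      exact ⟨x :: w, ρ, by simp [hw, Ne.symm hx], by rw [he]; rfl⟩

lemma split_count {a1 : ℕ} {A A' : Finset ℕ} (hA1 : a1 ∈ A)
    (hA'sub : ∀ x, x ∈ A' ↔ x ∈ A ∧ x ≠ a1)
    (P : List ℕ → Prop) (C : List ℕ → List ℕ → Prop)
    (hsplit : ∀ w ρ : List ℕ, (∀ x ∈ w, x ∈ A') → (∀ x ∈ ρ, x ∈ A) →
      (P (w ++ a1 :: ρ) ↔ C w ρ)) (n m : ℕ) :
    ({σ : List ℕ | IsCompOf A n m σ ∧ P σ}.ncard : ℚ)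
      = ({σ : List ℕ | IsCompOf A' n m σ ∧ P σ}.ncard : ℚ)
        + (if a1 ≤ n ∧ 1 ≤ m then
            ∑ q ∈ Finset.HasAntidiagonal.antidiagonal (n - a1) ×ˢ Finset.HasAntidiagonal.antidiagonal (m - 1),
              ({pr : List ℕ × List ℕ | IsCompOf A' q.1.1 q.2.1 pr.1 ∧
                IsCompOf A q.1.2 q.2.2 pr.2 ∧ C pr.1 pr.2}.ncard : ℚ)
          else 0) := by
  classical
  set S := {σ : List ℕ | IsCompOf A n m σ ∧ P σ} with hS
  have hSfin : S.Finite := finite_comp A n m P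
  have hdecomp : S = {σ ∈ S | a1 ∉ σ} ∪ {σ ∈ S | a1 ∈ σ} := by
    ext σ; by_cases h : a1 ∈ σ <;> simp [h, hS]
  have hS0 : {σ ∈ S | a1 ∉ σ} = {σ : List ℕ | IsCompOf A' n m σ ∧ P σ} := by
    ext σ
    simp only [Set.mem_setOf_eq, Set.mem_sep_iff, hS, IsCompOf]
    constructor
    · rintro ⟨⟨⟨hmem, hsum, hlen⟩, hP⟩, hne⟩
      exact ⟨⟨fun x hx => (hA'sub x).mpr ⟨hmem x hx, fun he => hne (he ▸ hx)⟩, hsum, hlen⟩, hP⟩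
    · rintro ⟨⟨hmem, hsum, hlen⟩, hP⟩
      refine ⟨⟨⟨fun x hx => ((hA'sub x).mp (hmem x hx)).1, hsum, hlen⟩, hP⟩, fun hc => ?_⟩
      exact ((hA'sub a1).mp (hmem a1 hc)).2 rfl
  have hcard : (S.ncard : ℚ)
      = ({σ : List ℕ | IsCompOf A' n m σ ∧ P σ}.ncard : ℚ) + ({σ ∈ S | a1 ∈ σ}.ncard : ℚ) := by
    rw [← hS0, ← Nat.cast_add, ← Set.ncard_union_eq (by
        rw [Set.disjoint_left]; rintro σ ⟨-, h1⟩ ⟨-, h2⟩; exact h1 h2)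
      (hSfin.subset (Set.sep_subset _ _)) (hSfin.subset (Set.sep_subset _ _)), ← hdecomp]
  rw [hcard]
  congr 1
  by_cases hif : a1 ≤ n ∧ 1 ≤ m
  · rw [if_pos hif]
    -- S1 as image
    set T := {pr : List ℕ × List ℕ | (∀ x ∈ pr.1, x ∈ A') ∧ (∀ x ∈ pr.2, x ∈ A) ∧
      pr.1.sum + pr.2.sum = n - a1 ∧ pr.1.length + pr.2.length = m - 1 ∧ C pr.1 pr.2} with hT
    have hima : {σ ∈ S | a1 ∈ σ} = (fun pr : List ℕ × List ℕ => pr.1 ++ a1 :: pr.2) '' T := by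
      ext σ
      constructor
      · rintro ⟨⟨⟨hmem, hsum, hlen⟩, hP⟩, hin⟩
        obtain ⟨w, ρ, hw, he⟩ := exists_split hin
        have hwA' : ∀ x ∈ w, x ∈ A' := fun x hx => (hA'sub x).mpr
          ⟨hmem x (he ▸ List.mem_append_left _ hx), fun hxe => hw (hxe ▸ hx)⟩
        have hρA : ∀ x ∈ ρ, x ∈ A := fun x hx =>
          hmem x (he ▸ List.mem_append_right _ (List.mem_cons_of_mem _ hx))
        rw [he] at hsum hlen hP
        simp only [List.sum_append, List.sum_cons, List.length_append, List.length_cons] at hsum hlen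
        refine ⟨(w, ρ), ⟨hwA', hρA, ?_, ?_, (hsplit w ρ hwA' hρA).mp hP⟩, he.symm⟩
        · show w.sum + ρ.sum = n - a1; omega
        · show w.length + ρ.length = m - 1; omega
      · rintro ⟨⟨w, ρ⟩, ⟨hwA', hρA, hsum, hlen, hC⟩, he⟩
        dsimp only at hsum hlen
        have hmem : ∀ x ∈ w ++ a1 :: ρ, x ∈ A := by
          intro x hx
          rcases List.mem_append.mp hx with h | h
          · exact ((hA'sub x).mp (hwA' x h)).1
          · rcases List.mem_cons.mp h with h | h
            · exact h ▸ hA1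
            · exact hρA x h
        refine ⟨⟨⟨he ▸ hmem, ?_, ?_⟩, he ▸ (hsplit w ρ hwA' hρA).mpr hC⟩,
          he ▸ List.mem_append_right _ (List.mem_cons_self)⟩
        · rw [← he]; simp only [List.sum_append, List.sum_cons]; omega
        · rw [← he]; simp only [List.length_append, List.length_cons]; omega
    have hinj : Set.InjOn (fun pr : List ℕ × List ℕ => pr.1 ++ a1 :: pr.2) T := by
      rintro ⟨w1, ρ1⟩ h1 ⟨w2, ρ2⟩ h2 he
      have hn1 : a1 ∉ w1 := fun hc => ((hA'sub a1).mp (h1.1 a1 hc)).2 rfl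
      have hn2 : a1 ∉ w2 := fun hc => ((hA'sub a1).mp (h2.1 a1 hc)).2 rfl
      have := join_inj w1 hn1 hn2 he
      exact Prod.ext_iff.mpr ⟨this.1, this.2⟩
    have hTfin : T.Finite := Set.Finite.of_finite_image (hima ▸ hSfin.subset (Set.sep_subset _ _)) hinj
    rw [hima, Set.ncard_image_of_injOn hinj]
    -- fiberwise
    have hfib := ncard_eq_sum_fiber hTfin
      (fun pr => ((pr.1.sum, n - a1 - pr.1.sum), (pr.1.length, m - 1 - pr.1.length)))
      (Finset.HasAntidiagonal.antidiagonal (n - a1) ×ˢ Finset.HasAntidiagonal.antidiagonal (m - 1))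
      (by
        rintro ⟨w, ρ⟩ ⟨-, -, hsum, hlen, -⟩
        simp only [Finset.mem_product, Finset.HasAntidiagonal.mem_antidiagonal]
        dsimp only at hsum hlen ⊢
        omega)
    rw [hfib, Nat.cast_sum]
    refine Finset.sum_congr rfl (fun q hq => ?_)
    simp only [Finset.mem_product, Finset.HasAntidiagonal.mem_antidiagonal] at hq
    congr 2
    ext ⟨w, ρ⟩
    simp only [Set.mem_sep_iff, Set.mem_setOf_eq, hT, Prod.ext_iff, IsCompOf]
    constructor
    · rintro ⟨⟨hwA', hρA, hsum, hlen, hC⟩, ⟨hk11, hk12⟩, hk21, hk22⟩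
      exact ⟨⟨hwA', by omega, by omega⟩, ⟨hρA, by omega, by omega⟩, hC⟩
    · rintro ⟨⟨hwA', hws, hwl⟩, ⟨hρA, hρs, hρl⟩, hC⟩
      exact ⟨⟨hwA', hρA, by omega, by omega, hC⟩, ⟨by omega, by omega⟩, by omega, by omega⟩
  · rw [if_neg hif]
    have : {σ ∈ S | a1 ∈ σ} = ∅ := by
      ext σ
      simp only [Set.mem_sep_iff, Set.mem_empty_iff_false, iff_false, not_and, hS,
        Set.mem_setOf_eq, IsCompOf]
      rintro ⟨⟨hmem, hsum, hlen⟩, -⟩ hin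
      have h1 : a1 ≤ σ.sum := List.single_le_sum (fun y _ => Nat.zero_le y) a1 hin
      have h2 : 0 < σ.length := List.length_pos_iff.mpr (fun hc => by simp [hc] at hin)
      omega
    simp [this]




/-- abbreviation for the exponent finsupp -/
noncomputable def sf (n m : ℕ) : Fin 2 →₀ ℕ := Finsupp.single 0 n + Finsupp.single 1 m

lemma sf_apply0 (n m : ℕ) : sf n m 0 = n := by simp [sf]
lemma sf_apply1 (n m : ℕ) : sf n m 1 = m := by
  simp [sf, Finsupp.single_apply]

lemma fin2_cases (i : Fin 2) : i = 0 ∨ i = 1 := by omega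

lemma eq_sf (d : Fin 2 →₀ ℕ) : d = sf (d 0) (d 1) := by
  ext i
  rcases fin2_cases i with h | h <;> subst h
  · simp [sf_apply0]
  · simp [sf_apply1]

lemma sf_add (a b c d : ℕ) : sf a c + sf b d = sf (a + b) (c + d) := by
  ext i
  rcases fin2_cases i with h | h <;> subst h
  · simp [Finsupp.add_apply, sf_apply0]
  · simp [Finsupp.add_apply, sf_apply1]

lemma sf_inj {a b c d : ℕ} (h : sf a c = sf b d) : a = b ∧ c = d := by
  constructor
  · have := congrArg (fun f => f 0) h; simpa [sf_apply0] using this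
  · have := congrArg (fun f => f 1) h; simpa [sf_apply1] using this

lemma coeff_mul_sf (f g : MvPowerSeries (Fin 2) ℚ) (n m : ℕ) :
    coeff (R := ℚ) (sf n m) (f * g) =
      ∑ q ∈ Finset.HasAntidiagonal.antidiagonal n ×ˢ Finset.HasAntidiagonal.antidiagonal m,
        coeff (R := ℚ) (sf q.1.1 q.2.1) f * coeff (R := ℚ) (sf q.1.2 q.2.2) g := by
  rw [coeff_mul]
  refine Finset.sum_nbij' (i := fun p => ((p.1 0, p.2 0), (p.1 1, p.2 1)))
    (j := fun q => (sf q.1.1 q.2.1, sf q.1.2 q.2.2)) ?_ ?_ ?_ ?_ ?_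
  · intro p hp
    rw [Finset.HasAntidiagonal.mem_antidiagonal] at hp
    simp only [Finset.mem_product, Finset.HasAntidiagonal.mem_antidiagonal]
    constructor
    · have := congrArg (fun h => h 0) hp
      simpa [sf_apply0, Finsupp.add_apply] using this
    · have := congrArg (fun h => h 1) hp
      simpa [sf_apply1, Finsupp.add_apply] using this
  · intro q hq
    simp only [Finset.mem_product, Finset.HasAntidiagonal.mem_antidiagonal] at hq
    rw [Finset.HasAntidiagonal.mem_antidiagonal, sf_add, hq.1, hq.2]
  · intro p hp
    have h1 := eq_sf p.1
    have h2 := eq_sf p.2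
    exact Prod.ext_iff.mpr ⟨h1.symm, h2.symm⟩
  · intro q hq
    simp only [Prod.ext_iff]
    exact ⟨⟨sf_apply0 _ _, sf_apply0 _ _⟩, sf_apply1 _ _, sf_apply1 _ _⟩
  · intro p hp
    rw [← eq_sf p.1, ← eq_sf p.2]

lemma z_eq_monomial (a1 : ℕ) : (X 0 : MvPowerSeries (Fin 2) ℚ) ^ a1 * X 1
    = monomial (R := ℚ) (sf a1 1) 1 := by
  rw [X_pow_eq, X_def, monomial_mul_monomial, mul_one]
  rfl

lemma coeff_z_mul (a1 : ℕ) (f : MvPowerSeries (Fin 2) ℚ) (n m : ℕ) :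
    coeff (R := ℚ) (sf n m) (monomial (R := ℚ) (sf a1 1) 1 * f)
      = if a1 ≤ n ∧ 1 ≤ m then coeff (R := ℚ) (sf (n - a1) (m - 1)) f else 0 := by
  rw [coeff_monomial_mul]
  have hle : sf a1 1 ≤ sf n m ↔ a1 ≤ n ∧ 1 ≤ m := by
    rw [Finsupp.le_def]
    constructor
    · intro h
      exact ⟨by simpa [sf_apply0] using h 0, by simpa [sf_apply1] using h 1⟩
    · rintro ⟨h1, h2⟩ i
      rcases fin2_cases i with h | h <;> subst h
      · simpa [sf_apply0] using h1
      · simpa [sf_apply1] using h2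
  by_cases h : a1 ≤ n ∧ 1 ≤ m
  · rw [if_pos (hle.mpr h), if_pos h, one_mul]
    have hsub : sf n m - sf a1 1 = sf (n - a1) (m - 1) := by
      ext i
      rcases fin2_cases i with hi | hi <;> subst hi
      · simp [Finsupp.tsub_apply, sf_apply0]
      · simp [Finsupp.tsub_apply, sf_apply1]
    rw [hsub]
  · rw [if_neg (fun hc => h (hle.mp hc)), if_neg h]


end Stmt6Aux

open MvPowerSeries in
theorem stmt6 (τ ν : List ℕ) (hτ : τ ≠ []) (hν : ν ≠ [])
    (hτpos : ∀ x ∈ τ, 0 < x) (hνpos : ∀ x ∈ ν, 0 < x)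
    (A : Finset ℕ) (hcard : 2 ≤ A.card) (hpos : ∀ a ∈ A, 0 < a)
    (hA : A.Nonempty) (a1 : ℕ) (ha1 : a1 = A.min' hA) (A' : Finset ℕ)
    (hA' : A' = A.erase a1)
    (Cφ Cφ' Cτ' Cν' : MvPowerSeries (Fin 2) ℚ)
    (hCφ : ∀ n m : ℕ,
      (MvPowerSeries.coeff (R := ℚ) (Finsupp.single 0 n + Finsupp.single 1 m)) Cφ
        = (Set.ncard {σ : List ℕ | IsCompOf A n m σ ∧ ¬ ShuffleBotOccurs τ ν σ} : ℚ))
    (hCφ' : ∀ n m : ℕ,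
      (MvPowerSeries.coeff (R := ℚ) (Finsupp.single 0 n + Finsupp.single 1 m)) Cφ'
        = (Set.ncard {σ : List ℕ | IsCompOf A' n m σ ∧ ¬ ShuffleBotOccurs τ ν σ} : ℚ))
    (hCτ' : ∀ n m : ℕ,
      (MvPowerSeries.coeff (R := ℚ) (Finsupp.single 0 n + Finsupp.single 1 m)) Cτ'
        = (Set.ncard {σ : List ℕ | IsCompOf A' n m σ ∧ AvoidsWord τ σ} : ℚ))
    (hCν' : ∀ n m : ℕ,
      (MvPowerSeries.coeff (R := ℚ) (Finsupp.single 0 n + Finsupp.single 1 m)) Cν'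
        = (Set.ncard {σ : List ℕ | IsCompOf A' n m σ ∧ AvoidsWord ν σ} : ℚ)) :
    Cφ * (1 - (X 0 : MvPowerSeries (Fin 2) ℚ) ^ a1 * X 1 * Cτ')
        * (1 - (X 0 : MvPowerSeries (Fin 2) ℚ) ^ a1 * X 1 * Cν')
      = Cφ' - (X 0 : MvPowerSeries (Fin 2) ℚ) ^ a1 * X 1 * Cτ' * Cν' := by
  classical
  open Stmt6Aux in
  have hA1 : a1 ∈ A := ha1 ▸ A.min'_mem hA
  have hmin : ∀ x ∈ A, a1 ≤ x := fun x hx => ha1 ▸ A.min'_le x hx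
  have hA'sub : ∀ x, x ∈ A' ↔ x ∈ A ∧ x ≠ a1 := by
    intro x; rw [hA', Finset.mem_erase]; tauto
  have hA'lt : ∀ x ∈ A', a1 < x := fun x hx =>
    lt_of_le_of_ne (hmin x ((hA'sub x).mp hx).1) (Ne.symm ((hA'sub x).mp hx).2)
  -- the auxiliary series H
  set H : MvPowerSeries (Fin 2) ℚ :=
    (fun d => (Set.ncard {σ : List ℕ | IsCompOf A (d 0) (d 1) σ ∧ ¬ PureNu ν a1 σ} : ℚ))
    with hHdef
  have hH : ∀ n m : ℕ, coeff (R := ℚ) (Stmt6Aux.sf n m) H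
      = (Set.ncard {σ : List ℕ | IsCompOf A n m σ ∧ ¬ PureNu ν a1 σ} : ℚ) := by
    intro n m
    rw [coeff_apply, hHdef]
    simp only [Stmt6Aux.sf_apply0, Stmt6Aux.sf_apply1]
  have hCφsf : ∀ n m : ℕ, coeff (R := ℚ) (Stmt6Aux.sf n m) Cφ
      = (Set.ncard {σ : List ℕ | IsCompOf A n m σ ∧ ¬ ShuffleBotOccurs τ ν σ} : ℚ) :=
    fun n m => hCφ n m
  have hCφ'sf : ∀ n m : ℕ, coeff (R := ℚ) (Stmt6Aux.sf n m) Cφ'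
      = (Set.ncard {σ : List ℕ | IsCompOf A' n m σ ∧ ¬ ShuffleBotOccurs τ ν σ} : ℚ) :=
    fun n m => hCφ' n m
  have hCτ'sf : ∀ n m : ℕ, coeff (R := ℚ) (Stmt6Aux.sf n m) Cτ'
      = (Set.ncard {σ : List ℕ | IsCompOf A' n m σ ∧ AvoidsWord τ σ} : ℚ) :=
    fun n m => hCτ' n m
  have hCν'sf : ∀ n m : ℕ, coeff (R := ℚ) (Stmt6Aux.sf n m) Cν'
      = (Set.ncard {σ : List ℕ | IsCompOf A' n m σ ∧ AvoidsWord ν σ} : ℚ) :=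
    fun n m => hCν' n m
  set z : MvPowerSeries (Fin 2) ℚ := monomial (R := ℚ) (Stmt6Aux.sf a1 1) 1 with hzdef
  -- First recurrence : H = Cν' + z * (Cν' * H)
  have hR1 : Cν' + z * (Cν' * H) = H := by
    apply MvPowerSeries.ext
    intro d
    obtain ⟨n, m, rfl⟩ : ∃ n m, d = Stmt6Aux.sf n m := ⟨d 0, d 1, Stmt6Aux.eq_sf d⟩
    have key := Stmt6Aux.split_count hA1 hA'sub (fun σ => ¬ PureNu ν a1 σ)
      (fun w ρ => AvoidsWord ν w ∧ ¬ PureNu ν a1 ρ)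
      (by
        intro w ρ hw hρ
        have hwlt : ∀ x ∈ w, a1 < x := fun x hx => hA'lt x (hw x hx)
        show ¬ PureNu ν a1 (w ++ a1 :: ρ) ↔ _
        rw [Stmt6Aux.pure_append hν hwlt]
        tauto) n m
    rw [map_add, hH, key, Stmt6Aux.coeff_z_mul, Stmt6Aux.coeff_mul_sf]
    have hset : {σ : List ℕ | IsCompOf A' n m σ ∧ ¬ PureNu ν a1 σ}
        = {σ : List ℕ | IsCompOf A' n m σ ∧ AvoidsWord ν σ} := by
      ext σ
      simp only [Set.mem_setOf_eq]
      constructor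
      · rintro ⟨hc, hp⟩
        refine ⟨hc, ?_⟩
        have := Stmt6Aux.pure_iff_nonavoid (ν := ν) (a1 := a1)
          (σ := σ) (fun x hx => hA'lt x (hc.1 x hx))
        rw [this, not_not] at hp
        exact hp
      · rintro ⟨hc, hp⟩
        refine ⟨hc, ?_⟩
        have := Stmt6Aux.pure_iff_nonavoid (ν := ν) (a1 := a1)
          (σ := σ) (fun x hx => hA'lt x (hc.1 x hx))
        rw [this, not_not]
        exact hp
    rw [hset, ← hCν'sf n m]
    congr 1
    by_cases hif : a1 ≤ n ∧ 1 ≤ m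
    · rw [if_pos hif, if_pos hif]
      refine Finset.sum_congr rfl (fun q hq => ?_)
      rw [hCν'sf, hH]
      have hprodset : {pr : List ℕ × List ℕ | IsCompOf A' q.1.1 q.2.1 pr.1 ∧
            IsCompOf A q.1.2 q.2.2 pr.2 ∧
            (AvoidsWord ν pr.1 ∧ ¬ PureNu ν a1 pr.2)}
          = {w : List ℕ | IsCompOf A' q.1.1 q.2.1 w ∧ AvoidsWord ν w} ×ˢ
            {ρ : List ℕ | IsCompOf A q.1.2 q.2.2 ρ ∧ ¬ PureNu ν a1 ρ} := by
        ext ⟨w, ρ⟩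
        simp only [Set.mem_setOf_eq, Set.mem_prod]
        tauto
      rw [hprodset, Stmt6Aux.ncard_prod, Nat.cast_mul]
    · rw [if_neg hif, if_neg hif]
  -- Second recurrence : Cφ = Cφ' + z * (Cτ' * Cφ + (Cφ' - Cτ') * H)
  have hR2 : Cφ' + z * (Cτ' * Cφ + (Cφ' - Cτ') * H) = Cφ := by
    apply MvPowerSeries.ext
    intro d
    obtain ⟨n, m, rfl⟩ : ∃ n m, d = Stmt6Aux.sf n m := ⟨d 0, d 1, Stmt6Aux.eq_sf d⟩
    have key := Stmt6Aux.split_count hA1 hA'sub (fun σ => ¬ ShuffleBotOccurs τ ν σ)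
      (fun w ρ => ¬ ShuffleBotOccurs τ ν w ∧ ¬ ShuffleBotOccurs τ ν ρ ∧
        ¬ (¬ AvoidsWord τ w ∧ PureNu ν a1 ρ))
      (by
        intro w ρ hw hρ
        have hwlt : ∀ x ∈ w, a1 < x := fun x hx => hA'lt x (hw x hx)
        have hρge : ∀ x ∈ ρ, a1 ≤ x := fun x hx => hmin x (hρ x hx)
        show ¬ ShuffleBotOccurs τ ν (w ++ a1 :: ρ) ↔ _
        rw [Stmt6Aux.occ_append hτ hν hwlt hρge]
        tauto) n m
    rw [map_add, hCφsf, key, Stmt6Aux.coeff_z_mul, ← hCφ'sf n m]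
    congr 1
    by_cases hif : a1 ≤ n ∧ 1 ≤ m
    · rw [if_pos hif, if_pos hif, map_add, Stmt6Aux.coeff_mul_sf, Stmt6Aux.coeff_mul_sf,
        ← Finset.sum_add_distrib]
      refine Finset.sum_congr rfl (fun q hq => ?_)
      obtain ⟨⟨n1, n2⟩, m1, m2⟩ := q
      dsimp only
      -- inclusion-exclusion computation for the pair count
      set Wψ := {w : List ℕ | IsCompOf A' n1 m1 w ∧ ¬ ShuffleBotOccurs τ ν w} with hWψ
      set Wτ := {w : List ℕ | IsCompOf A' n1 m1 w ∧ AvoidsWord τ w} with hWτ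
      set Rψ := {ρ : List ℕ | IsCompOf A n2 m2 ρ ∧ ¬ ShuffleBotOccurs τ ν ρ} with hRψ
      set Rh := {ρ : List ℕ | IsCompOf A n2 m2 ρ ∧ ¬ PureNu ν a1 ρ} with hRh
      have hWψfin : Wψ.Finite := Stmt6Aux.finite_comp A' n1 m1 _
      have hWτfin : Wτ.Finite := Stmt6Aux.finite_comp A' n1 m1 _
      have hRψfin : Rψ.Finite := Stmt6Aux.finite_comp A n2 m2 _
      have hRhfin : Rh.Finite := Stmt6Aux.finite_comp A n2 m2 _
      have hWsub : Wτ ⊆ Wψ := by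
        rintro w ⟨hc, hav⟩
        refine ⟨hc, fun hocc => ?_⟩
        obtain ⟨i, p, j, hti, -⟩ := hocc
        exact hav i hti
      have hRsub : Rh ⊆ Rψ := by
        rintro ρ ⟨hc, hnp⟩
        exact ⟨hc, fun hocc => hnp (Stmt6Aux.pure_of_occ hν
          (fun x hx => hmin x (hc.1 x hx)) hocc)⟩
      have hseteq : {pr : List ℕ × List ℕ | IsCompOf A' n1 m1 pr.1 ∧
            IsCompOf A n2 m2 pr.2 ∧
            (¬ ShuffleBotOccurs τ ν pr.1 ∧ ¬ ShuffleBotOccurs τ ν pr.2 ∧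
              ¬ (¬ AvoidsWord τ pr.1 ∧ PureNu ν a1 pr.2))}
          = (Wψ ×ˢ Rψ) \ ((Wψ \ Wτ) ×ˢ (Rψ \ Rh)) := by
        ext ⟨w, ρ⟩
        simp only [Set.mem_setOf_eq, Set.mem_prod, Set.mem_diff, hWψ, hWτ, hRψ, hRh]
        tauto
      have hsub2 : (Wψ \ Wτ) ×ˢ (Rψ \ Rh) ⊆ Wψ ×ˢ Rψ :=
        Set.prod_mono Set.diff_subset Set.diff_subset
      rw [hseteq, Set.ncard_diff hsub2 (hWψfin.diff.prod hRψfin.diff),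
        Nat.cast_sub (Set.ncard_le_ncard hsub2 (hWψfin.prod hRψfin)),
        Stmt6Aux.ncard_prod, Stmt6Aux.ncard_prod,
        Set.ncard_diff hWsub hWτfin, Set.ncard_diff hRsub hRhfin,
        Nat.cast_mul, Nat.cast_mul,
        Nat.cast_sub (Set.ncard_le_ncard hWsub hWψfin),
        Nat.cast_sub (Set.ncard_le_ncard hRsub hRψfin)]
      rw [hCτ'sf, hCφsf, map_sub, hCφ'sf, hCτ'sf, hH]
      rw [← hWψ, ← hWτ, ← hRψ, ← hRh]
      ring
    · rw [if_neg hif, if_neg hif]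
  -- finish by algebra
  rw [Stmt6Aux.z_eq_monomial a1, ← hzdef]
  linear_combination (z * Cν' - 1) * hR2 + (z * Cτ' - z * Cφ') * hR1
end

section
/- Let τ and ν be nonempty words over the positive integers and let f₁, f₂ ∈ {R, I} be trivial bijections. Then the shuffle pattern τ-ℓ-ν is equivalent to the shuffle pattern f₁(τ)-ℓ-f₂(ν), and the shuffle pattern τ-1-ν is equivalent to the shuffle pattern f₁(τ)-1-f₂(ν); that is, for every finite set A of positive integers and all n, m ≥ 0 the corresponding avoiding sets in C_{n;m}^A have equal cardinalities. -/
/-! ### Auxiliary definitions -/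

/-- `σ` has a contiguous factor order-isomorphic to `w`. -/
def HF (w σ : List ℕ) : Prop := ∃ i, WordIsoAt w σ i

/-- `σ` has a contiguous factor order-isomorphic to `w` avoiding the letter `M`. -/
def FreeF (M : ℕ) (w σ : List ℕ) : Prop :=
  ∃ i, WordIsoAt w σ i ∧ ∀ s < w.length, σ.getD (i + s) 0 ≠ M

/-! ### getD basics -/

lemma getD_mem {σ : List ℕ} {n : ℕ} (h : n < σ.length) : σ.getD n 0 ∈ σ := by
  rw [List.getD_eq_getElem _ _ h]; exact List.getElem_mem h

lemma wordIsoAt_self (w : List ℕ) : WordIsoAt w w 0 := by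
  refine ⟨by omega, fun s t hs ht => by simp⟩

lemma HF_self (w : List ℕ) : HF w w := ⟨0, wordIsoAt_self w⟩

/-! ### WordIsoAt and append -/

lemma wordIsoAt_append_left {w b : List ℕ} {i : ℕ} (c : List ℕ) (h : WordIsoAt w b i) :
    WordIsoAt w (b ++ c) i := by
  obtain ⟨h1, h2⟩ := h
  refine ⟨by simp; omega, fun s t hs ht => ?_⟩
  rw [List.getD_append _ _ _ _ (by omega), List.getD_append _ _ _ _ (by omega)]
  exact h2 s t hs ht

lemma wordIsoAt_of_append_left {w b c : List ℕ} {i : ℕ} (h : WordIsoAt w (b ++ c) i)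
    (hle : i + w.length ≤ b.length) : WordIsoAt w b i := by
  obtain ⟨h1, h2⟩ := h
  refine ⟨hle, fun s t hs ht => ?_⟩
  have := h2 s t hs ht
  rwa [List.getD_append _ _ _ _ (by omega), List.getD_append _ _ _ _ (by omega)] at this

lemma wordIsoAt_append_right {w c : List ℕ} {i : ℕ} (b : List ℕ) (h : WordIsoAt w c i) :
    WordIsoAt w (b ++ c) (b.length + i) := by
  obtain ⟨h1, h2⟩ := h
  refine ⟨by simp; omega, fun s t hs ht => ?_⟩
  rw [List.getD_append_right _ _ _ _ (by omega), List.getD_append_right _ _ _ _ (by omega)]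
  have e1 : b.length + i + s - b.length = i + s := by omega
  have e2 : b.length + i + t - b.length = i + t := by omega
  rw [e1, e2]
  exact h2 s t hs ht

lemma wordIsoAt_of_append_right {w b c : List ℕ} {i : ℕ} (h : WordIsoAt w (b ++ c) i)
    (hge : b.length ≤ i) : WordIsoAt w c (i - b.length) := by
  obtain ⟨h1, h2⟩ := h
  rw [List.length_append] at h1
  refine ⟨by omega, fun s t hs ht => ?_⟩
  have := h2 s t hs ht
  rwa [List.getD_append_right _ _ _ _ (by omega), List.getD_append_right _ _ _ _ (by omega),
    show i + s - b.length = i - b.length + s by omega,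
    show i + t - b.length = i - b.length + t by omega] at this

/-- a factor avoiding `M` in `b ++ M :: r` lies entirely in `b` or entirely in `r`. -/
lemma factor_side {w b r : List ℕ} {M i : ℕ} (hw : w ≠ [])
    (h : WordIsoAt w (b ++ M :: r) i)
    (hfree : ∀ s < w.length, (b ++ M :: r).getD (i + s) 0 ≠ M) :
    i + w.length ≤ b.length ∨ b.length + 1 ≤ i := by
  by_contra hcon
  push_neg at hcon
  obtain ⟨hc1, hc2⟩ := hcon
  have hlen : 0 < w.length := List.length_pos_iff.mpr hw
  have hs : b.length - i < w.length := by omega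
  have := hfree (b.length - i) hs
  rw [show i + (b.length - i) = b.length by omega] at this
  apply this
  rw [List.getD_append_right _ _ _ _ le_rfl, Nat.sub_self]
  rfl

lemma getD_middle (b r : List ℕ) (M : ℕ) : (b ++ M :: r).getD b.length 0 = M := by
  rw [List.getD_append_right _ _ _ _ le_rfl, Nat.sub_self]; rfl

/-! ### Basic facts about occurrences -/

lemma getD_split_left {b r : List ℕ} {M n : ℕ} (h : n < b.length) :
    (b ++ M :: r).getD n 0 = b.getD n 0 := List.getD_append _ _ _ _ h

lemma getD_split_right {b r : List ℕ} {M n : ℕ} (h : b.length + 1 ≤ n) :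
    (b ++ M :: r).getD n 0 = r.getD (n - (b.length + 1)) 0 := by
  have : b ++ M :: r = (b ++ [M]) ++ r := by simp
  rw [this, List.getD_append_right _ _ _ _ (by simp; omega)]
  congr 1
  simp

lemma wordIsoAt_split_right {w b r : List ℕ} {M i : ℕ} (h : WordIsoAt w (b ++ M :: r) i)
    (hge : b.length + 1 ≤ i) : WordIsoAt w r (i - (b.length + 1)) := by
  have : b ++ M :: r = (b ++ [M]) ++ r := by simp
  rw [this] at h
  have := wordIsoAt_of_append_right h (by simp; omega)
  simpa using this

lemma wordIsoAt_split_right' {w b r : List ℕ} {M i : ℕ} (h : WordIsoAt w r i) :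
    WordIsoAt w (b ++ M :: r) (b.length + 1 + i) := by
  have e : b ++ M :: r = (b ++ [M]) ++ r := by simp
  rw [e]
  have := wordIsoAt_append_right (b ++ [M]) h
  simpa [Nat.add_assoc] using this

lemma Occ_imp_HF {τ ν σ : List ℕ} (h : ShuffleTopOccurs τ ν σ) : HF τ σ := by
  obtain ⟨i, p, j, h1, _⟩ := h; exact ⟨i, h1⟩

lemma not_Occ_of_not_HF {τ ν σ : List ℕ} (h : ¬ HF τ σ) : ¬ ShuffleTopOccurs τ ν σ :=
  fun hc => h (Occ_imp_HF hc)

lemma Occ_imp_FreeF {τ ν σ : List ℕ} {M : ℕ} (hν : ν ≠ []) (hσ : ∀ x ∈ σ, x ≤ M)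
    (h : ShuffleTopOccurs τ ν σ) : FreeF M ν σ := by
  obtain ⟨i, p, j, h1, h2, h3, h4, h5, h6⟩ := h
  have hνl : 0 < ν.length := List.length_pos_iff.mpr hν
  have hp : p < σ.length := by have := h4.1; omega
  have hpM : σ.getD p 0 ≤ M := hσ _ (getD_mem hp)
  exact ⟨j, h4, fun t ht => by have := h6 t ht; omega⟩

lemma not_Occ_of_not_FreeF {τ ν σ : List ℕ} {M : ℕ} (hν : ν ≠ []) (hσ : ∀ x ∈ σ, x ≤ M)
    (h : ¬ FreeF M ν σ) : ¬ ShuffleTopOccurs τ ν σ :=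
  fun hc => h (Occ_imp_FreeF hν hσ hc)

/-! ### The splitting lemmas -/

lemma FreeF_of_not_mem {w σ : List ℕ} {M : ℕ} (h : M ∉ σ) : FreeF M w σ ↔ HF w σ := by
  constructor
  · rintro ⟨i, hi, -⟩; exact ⟨i, hi⟩
  · rintro ⟨i, hi⟩
    refine ⟨i, hi, fun s hs => ?_⟩
    intro hc
    exact h (hc ▸ getD_mem (by have := hi.1; omega))

lemma FreeF_split {w b r : List ℕ} {M : ℕ} (hw : w ≠ []) (hb : M ∉ b) :
    FreeF M w (b ++ M :: r) ↔ HF w b ∨ FreeF M w r := by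
  constructor
  · rintro ⟨i, hi, hfree⟩
    rcases factor_side hw hi hfree with hL | hR
    · exact Or.inl ⟨i, wordIsoAt_of_append_left hi hL⟩
    · right
      refine ⟨i - (b.length + 1), wordIsoAt_split_right hi hR, fun s hs => ?_⟩
      have := hfree s hs
      rwa [getD_split_right (by omega), show i + s - (b.length + 1) = i - (b.length+1) + s by omega]
        at this
  · rintro (⟨i, hi⟩ | ⟨i, hi, hfree⟩)
    · refine ⟨i, wordIsoAt_append_left _ hi, fun s hs => ?_⟩
      rw [getD_split_left (by have := hi.1; omega)]
      intro hc
      exact hb (hc ▸ getD_mem (by have := hi.1; omega))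
    · refine ⟨b.length + 1 + i, wordIsoAt_split_right' hi, fun s hs => ?_⟩
      rw [show b.length + 1 + i + s = b.length + 1 + (i + s) by omega,
        getD_split_right (by omega), show b.length + 1 + (i+s) - (b.length+1) = i + s by omega]
      exact hfree s hs

lemma Occ_split {τ ν b r : List ℕ} {M : ℕ} (hτ : τ ≠ []) (hν : ν ≠ []) (hb : M ∉ b)
    (hle : ∀ x ∈ b ++ M :: r, x ≤ M) :
    ShuffleTopOccurs τ ν (b ++ M :: r) ↔
      ShuffleTopOccurs τ ν b ∨ (HF τ b ∧ FreeF M ν r) ∨ ShuffleTopOccurs τ ν r := by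
  have hble : ∀ x ∈ b, x ≤ M := fun x hx => hle x (by simp [hx])
  have hrle : ∀ x ∈ r, x ≤ M := fun x hx => hle x (by simp [hx])
  have hτl : 0 < τ.length := List.length_pos_iff.mpr hτ
  have hνl : 0 < ν.length := List.length_pos_iff.mpr hν
  constructor
  · rintro ⟨i, p, j, h1, h2, h3, h4, h5, h6⟩
    set σ := b ++ M :: r with hσ
    have hp : p < σ.length := by have := h4.1; omega
    have hpM : σ.getD p 0 ≤ M := hle _ (getD_mem hp)
    have hτfree : ∀ s < τ.length, σ.getD (i + s) 0 ≠ M := fun s hs => by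
      have := h5 s hs; omega
    have hνfree : ∀ t < ν.length, σ.getD (j + t) 0 ≠ M := fun t ht => by
      have := h6 t ht; omega
    rcases factor_side hν h4 hνfree with hνL | hνR
    · -- everything inside b
      left
      have hpb : p < b.length := by omega
      have hτb : i + τ.length ≤ b.length := by omega
      refine ⟨i, p, j, wordIsoAt_of_append_left h1 hτb, h2, h3,
        wordIsoAt_of_append_left h4 hνL, fun s hs => ?_, fun t ht => ?_⟩
      · have := h5 s hs
        rwa [getD_split_left (by omega), getD_split_left (by omega)] at this
      · have := h6 t ht
        rwa [getD_split_left (by omega), getD_split_left (by omega)] at this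
    · rcases factor_side hτ h1 hτfree with hτL | hτR
      · -- τ in b, ν in r
        right; left
        refine ⟨⟨i, wordIsoAt_of_append_left h1 hτL⟩,
          j - (b.length + 1), wordIsoAt_split_right h4 hνR, fun t ht => ?_⟩
        have := hνfree t ht
        rwa [getD_split_right (by omega),
          show j + t - (b.length + 1) = j - (b.length+1) + t by omega] at this
      · -- everything in r
        right; right
        have hpr : b.length + 1 ≤ p := by omega
        refine ⟨i - (b.length+1), p - (b.length+1), j - (b.length+1),
          wordIsoAt_split_right h1 hτR, by omega, by omega,
          wordIsoAt_split_right h4 hνR, fun s hs => ?_, fun t ht => ?_⟩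
        · have := h5 s hs
          rwa [getD_split_right (M := M) (by omega), getD_split_right (M := M) (by omega),
            show i + s - (b.length + 1) = i - (b.length+1) + s by omega] at this
        · have := h6 t ht
          rwa [getD_split_right (M := M) (by omega), getD_split_right (M := M) (by omega),
            show j + t - (b.length + 1) = j - (b.length+1) + t by omega] at this
  · rintro (⟨i, p, j, h1, h2, h3, h4, h5, h6⟩ | ⟨⟨i, hi⟩, ⟨j, hj, hjfree⟩⟩ |
      ⟨i, p, j, h1, h2, h3, h4, h5, h6⟩)
    · -- from b
      have hjb : j + ν.length ≤ b.length := h4.1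
      have hpb : p < b.length := by omega
      refine ⟨i, p, j, wordIsoAt_append_left _ h1, h2, h3, wordIsoAt_append_left _ h4,
        fun s hs => ?_, fun t ht => ?_⟩
      · rw [getD_split_left (by have := h1.1; omega), getD_split_left hpb]
        exact h5 s hs
      · rw [getD_split_left (by omega), getD_split_left hpb]
        exact h6 t ht
    · -- middle occurrence with p at the separator M
      refine ⟨i, b.length, b.length + 1 + j, wordIsoAt_append_left _ hi, hi.1, by omega,
        wordIsoAt_split_right' hj, fun s hs => ?_, fun t ht => ?_⟩
      · rw [getD_split_left (by have := hi.1; omega), getD_middle]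
        have hmem : b.getD (i+s) 0 ∈ b := getD_mem (by have := hi.1; omega)
        have h1 := hble _ hmem
        have h2 : b.getD (i+s) 0 ≠ M := fun hc => hb (hc ▸ hmem)
        omega
      · rw [show b.length + 1 + j + t = b.length + 1 + (j + t) by omega,
          getD_split_right (by omega),
          show b.length + 1 + (j+t) - (b.length+1) = j + t by omega, getD_middle]
        have hmem : r.getD (j+t) 0 ∈ r := getD_mem (by have := hj.1; omega)
        have h1 := hrle _ hmem
        have h2 := hjfree t ht
        omega
    · -- from r
      refine ⟨b.length + 1 + i, b.length + 1 + p, b.length + 1 + j,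
        wordIsoAt_split_right' h1, by omega, by omega, wordIsoAt_split_right' h4,
        fun s hs => ?_, fun t ht => ?_⟩
      · rw [show b.length + 1 + i + s = b.length + 1 + (i + s) by omega,
          getD_split_right (by omega), getD_split_right (by omega),
          show b.length + 1 + (i+s) - (b.length+1) = i + s by omega,
          show b.length + 1 + p - (b.length+1) = p by omega]
        exact h5 s hs
      · rw [show b.length + 1 + j + t = b.length + 1 + (j + t) by omega,
          getD_split_right (by omega), getD_split_right (by omega),
          show b.length + 1 + (j+t) - (b.length+1) = j + t by omega,
          show b.length + 1 + p - (b.length+1) = p by omega]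
        exact h6 t ht

/-! ### Splitting a list at the first occurrence of M -/

lemma takeWhile_split {M : ℕ} {σ : List ℕ} (h : M ∈ σ) :
    σ = σ.takeWhile (· ≠ M) ++ M :: (σ.dropWhile (· ≠ M)).tail ∧
      M ∉ σ.takeWhile (· ≠ M) := by
  have hd : σ.dropWhile (· ≠ M) ≠ [] := by
    rw [Ne, List.dropWhile_eq_nil_iff]
    push_neg
    exact ⟨M, h, by simp⟩
  have hhead : (σ.dropWhile (· ≠ M)).head hd = M := by
    have := List.head_dropWhile_not (p := fun x => decide (x ≠ M)) (l := σ) hd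
    simpa using this
  have hd2 : σ.dropWhile (· ≠ M) = M :: (σ.dropWhile (· ≠ M)).tail := by
    conv_lhs => rw [← List.cons_head_tail hd]
    rw [hhead]
  constructor
  · conv_lhs => rw [← List.takeWhile_append_dropWhile (p := fun x => decide (x ≠ M)) (l := σ),
      hd2]
  · intro hc
    have := List.mem_takeWhile_imp hc
    simp at this

lemma split_takeWhile_eq {M : ℕ} {b r : List ℕ} (hb : M ∉ b) :
    (b ++ M :: r).takeWhile (· ≠ M) = b ∧ (b ++ M :: r).dropWhile (· ≠ M) = M :: r := by
  induction b with
  | nil => simp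
  | cons x xs ih =>
    have hx : x ≠ M := fun hc => hb (by simp [hc])
    have hih := ih (fun hc => hb (by simp [hc]))
    simp only [List.cons_append]
    rw [List.takeWhile_cons_of_pos (by simpa using hx),
      List.dropWhile_cons_of_pos (by simpa using hx)]
    exact ⟨by rw [hih.1], hih.2⟩

lemma length_tail_dropWhile_lt {M : ℕ} {σ : List ℕ} (h : M ∈ σ) :
    ((σ.dropWhile (· ≠ M)).tail).length < σ.length := by
  obtain ⟨he, -⟩ := takeWhile_split h
  have := congrArg List.length he
  rw [List.length_append, List.length_cons] at this
  omega

/-! ### Reverse transports factor-containment -/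

lemma getD_reverse_eq {l : List ℕ} {n : ℕ} (h : n < l.length) :
    l.reverse.getD n 0 = l.getD (l.length - 1 - n) 0 := by
  have h1 : n < l.reverse.length := by rw [List.length_reverse]; omega
  have h2 : l.length - 1 - n < l.length := by omega
  rw [List.getD_eq_getElem _ _ h1, List.getD_eq_getElem _ _ h2]
  exact List.getElem_reverse h1

lemma wordIsoAt_reverse {w σ : List ℕ} {i : ℕ} (h : WordIsoAt w σ i) :
    WordIsoAt w.reverse σ.reverse (σ.length - (i + w.length)) := by
  obtain ⟨h1, h2⟩ := h
  refine ⟨by rw [List.length_reverse, List.length_reverse]; omega, fun s t hs ht => ?_⟩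
  rw [List.length_reverse] at hs ht
  have hws : w.length - 1 - s < w.length := by omega
  have hwt : w.length - 1 - t < w.length := by omega
  rw [getD_reverse_eq hs, getD_reverse_eq ht,
    getD_reverse_eq (show σ.length - (i + w.length) + s < σ.length by omega),
    getD_reverse_eq (show σ.length - (i + w.length) + t < σ.length by omega),
    show σ.length - 1 - (σ.length - (i + w.length) + s) = i + (w.length - 1 - s) by omega,
    show σ.length - 1 - (σ.length - (i + w.length) + t) = i + (w.length - 1 - t) by omega]
  exact h2 _ _ hws hwt

lemma HF_reverse {w σ : List ℕ} : HF w.reverse σ.reverse ↔ HF w σ := by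
  constructor
  · rintro ⟨i, hi⟩
    exact ⟨_, by simpa using wordIsoAt_reverse hi⟩
  · rintro ⟨i, hi⟩
    exact ⟨_, wordIsoAt_reverse hi⟩

/-! ### Finiteness and cardinality helpers -/

lemma finite_lists (A : Finset ℕ) (m : ℕ) :
    {l : List ℕ | (∀ x ∈ l, x ∈ A) ∧ l.length = m}.Finite := by
  induction m with
  | zero =>
    apply Set.Finite.subset (Set.finite_singleton ([] : List ℕ))
    rintro l ⟨-, hl⟩
    simp [List.length_eq_zero_iff.mp hl]
  | succ m ih =>
    apply Set.Finite.subset (Set.Finite.image2 List.cons A.finite_toSet ih)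
    rintro l ⟨hmem, hlen⟩
    match l with
    | x :: xs =>
      exact ⟨x, hmem x (by simp), xs, ⟨fun y hy => hmem y (by simp [hy]), by simpa using hlen⟩, rfl⟩

lemma finite_comp_set {A : Finset ℕ} {n m : ℕ} (P : List ℕ → Prop) :
    {σ : List ℕ | IsCompOf A n m σ ∧ P σ}.Finite := by
  apply Set.Finite.subset (finite_lists A m)
  rintro σ ⟨⟨h1, h2, h3⟩, -⟩
  exact ⟨h1, h3⟩

lemma ncard_eq_of_inverse {S S' : Set (List ℕ)} (f g : List ℕ → List ℕ)
    (hf : ∀ σ ∈ S, f σ ∈ S') (hg : ∀ σ ∈ S', g σ ∈ S)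
    (hgf : ∀ σ ∈ S, g (f σ) = σ) (hfg : ∀ σ ∈ S', f (g σ) = σ) :
    S.ncard = S'.ncard := by
  have himg : f '' S = S' := by
    apply Set.Subset.antisymm
    · rintro _ ⟨σ, hσ, rfl⟩; exact hf σ hσ
    · intro σ' hσ'
      exact ⟨g σ', hg σ' hσ', hfg σ' hσ'⟩
  rw [← himg]
  exact (Set.ncard_image_of_injOn fun x hx y hy hxy => by
    rw [← hgf x hx, hxy, hgf y hy]).symm

/-! ### The blockwise maps -/

attribute [local instance] Classical.propDecidable

def MapU (M : ℕ) (u : List ℕ → List ℕ) (r : List ℕ) : List ℕ :=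
  if h : M ∈ r then
    u (r.takeWhile (· ≠ M)) ++ M :: MapU M u ((r.dropWhile (· ≠ M)).tail)
  else u r
termination_by r.length
decreasing_by exact length_tail_dropWhile_lt h

noncomputable def Phi (M : ℕ) (τ : List ℕ) (t u g : List ℕ → List ℕ) (σ : List ℕ) : List ℕ :=
  if h : M ∈ σ then
    if HF τ (σ.takeWhile (· ≠ M)) then
      g (σ.takeWhile (· ≠ M)) ++ M :: MapU M u ((σ.dropWhile (· ≠ M)).tail)
    else
      t (σ.takeWhile (· ≠ M)) ++ M :: Phi M τ t u g ((σ.dropWhile (· ≠ M)).tail)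
  else if HF τ σ then g σ else t σ
termination_by σ.length
decreasing_by exact length_tail_dropWhile_lt h

lemma MapU_not_mem {M : ℕ} {u : List ℕ → List ℕ} {r : List ℕ} (h : M ∉ r) :
    MapU M u r = u r := by
  rw [MapU, dif_neg h]

lemma MapU_split {M : ℕ} {u : List ℕ → List ℕ} {b r : List ℕ} (hb : M ∉ b) :
    MapU M u (b ++ M :: r) = u b ++ M :: MapU M u r := by
  rw [MapU, dif_pos (by simp : M ∈ b ++ M :: r), (split_takeWhile_eq hb).1,
    (split_takeWhile_eq hb).2]
  rfl

lemma Phi_not_mem {M : ℕ} {τ : List ℕ} {t u g : List ℕ → List ℕ} {σ : List ℕ} (h : M ∉ σ) :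
    Phi M τ t u g σ = if HF τ σ then g σ else t σ := by
  rw [Phi, dif_neg h]

lemma Phi_split {M : ℕ} {τ : List ℕ} {t u g : List ℕ → List ℕ} {b r : List ℕ} (hb : M ∉ b) :
    Phi M τ t u g (b ++ M :: r) =
      if HF τ b then g b ++ M :: MapU M u r
      else t b ++ M :: Phi M τ t u g r := by
  rw [Phi, dif_pos (by simp : M ∈ b ++ M :: r), (split_takeWhile_eq hb).1,
    (split_takeWhile_eq hb).2]
  rfl

lemma MapU_spec {M : ℕ} {ν ν' : List ℕ} {u : List ℕ → List ℕ}
    (hν : ν ≠ []) (hν' : ν' ≠ [])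
    (hu1 : ∀ σ, (u σ).Perm σ) (hu2 : ∀ σ, u (u σ) = σ)
    (hu3 : ∀ σ, HF ν' (u σ) ↔ HF ν σ) :
    ∀ r : List ℕ, (MapU M u r).Perm r ∧ MapU M u (MapU M u r) = r ∧
      (¬ FreeF M ν r → ¬ FreeF M ν' (MapU M u r)) := by
  suffices H : ∀ L r, r.length ≤ L → (MapU M u r).Perm r ∧ MapU M u (MapU M u r) = r ∧
      (¬ FreeF M ν r → ¬ FreeF M ν' (MapU M u r)) by
    exact fun r => H r.length r le_rfl
  intro L
  induction L with
  | zero =>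
    intro r hr
    have : r = [] := List.length_eq_zero_iff.mp (by omega)
    subst this
    have hnm : M ∉ ([] : List ℕ) := by simp
    refine ⟨by rw [MapU_not_mem hnm]; exact hu1 [], ?_, ?_⟩
    · rw [MapU_not_mem hnm, MapU_not_mem (by rw [(hu1 []).mem_iff]; exact hnm), hu2]
    · rw [MapU_not_mem hnm]
      intro h1 h2
      rw [FreeF_of_not_mem hnm] at h1
      rw [FreeF_of_not_mem (by rw [(hu1 []).mem_iff]; exact hnm), hu3] at h2
      exact h1 h2
  | succ L ih =>
    intro r hr
    by_cases h : M ∈ r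
    · obtain ⟨he, hbnm⟩ := takeWhile_split h
      set b := r.takeWhile (· ≠ M) with hB
      set r' := (r.dropWhile (· ≠ M)).tail with hR
      clear_value b r'
      have hlen : r'.length ≤ L := by
        have := congrArg List.length he
        rw [List.length_append, List.length_cons] at this
        omega
      obtain ⟨ih1, ih2, ih3⟩ := ih r' hlen
      have hub : M ∉ u b := by rw [(hu1 b).mem_iff]; exact hbnm
      rw [he, MapU_split hbnm]
      refine ⟨List.Perm.append (hu1 b) (List.Perm.cons M ih1), ?_, ?_⟩
      · rw [MapU_split hub, hu2, ih2]
      · rw [FreeF_split hν hbnm, FreeF_split hν' hub]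
        push_neg
        rintro ⟨h1, h2⟩
        exact ⟨fun hc => h1 ((hu3 b).mp hc), ih3 h2⟩
    · have hun : M ∉ u r := by rw [(hu1 r).mem_iff]; exact h
      refine ⟨by rw [MapU_not_mem h]; exact hu1 r, ?_, ?_⟩
      · rw [MapU_not_mem h, MapU_not_mem hun, hu2]
      · rw [MapU_not_mem h]
        intro h1 h2
        rw [FreeF_of_not_mem h] at h1
        rw [FreeF_of_not_mem hun, hu3] at h2
        exact h1 h2

/-! ### The main bijection lemma -/

section PhiSpec

variable {M : ℕ} {A : Finset ℕ} {τ ν τ' ν' : List ℕ} {t u g g' : List ℕ → List ℕ}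

lemma Phi_spec (hAle : ∀ a ∈ A, a ≤ M)
    (hτ : τ ≠ []) (hν : ν ≠ []) (hτ' : τ' ≠ []) (hν' : ν' ≠ [])
    (ht1 : ∀ σ, (t σ).Perm σ) (ht2 : ∀ σ, t (t σ) = σ) (ht3 : ∀ σ, HF τ' (t σ) ↔ HF τ σ)
    (hu1 : ∀ σ, (u σ).Perm σ) (hu2 : ∀ σ, u (u σ) = σ) (hu3 : ∀ σ, HF ν' (u σ) ↔ HF ν σ)
    (hg : ∀ b, (∀ x ∈ b, x ∈ A ∧ x ≠ M) → ¬ ShuffleTopOccurs τ ν b → HF τ b →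
      (∀ x ∈ g b, x ∈ A ∧ x ≠ M) ∧ (g b).sum = b.sum ∧ (g b).length = b.length ∧
        ¬ ShuffleTopOccurs τ' ν' (g b) ∧ HF τ' (g b) ∧ g' (g b) = b) :
    ∀ σ, (∀ x ∈ σ, x ∈ A) → ¬ ShuffleTopOccurs τ ν σ →
      (∀ x ∈ Phi M τ t u g σ, x ∈ A) ∧ (Phi M τ t u g σ).sum = σ.sum ∧
        (Phi M τ t u g σ).length = σ.length ∧
        ¬ ShuffleTopOccurs τ' ν' (Phi M τ t u g σ) ∧
        Phi M τ' t u g' (Phi M τ t u g σ) = σ := by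
  -- the M-free case, needed twice
  have nomem : ∀ σ, M ∉ σ → (∀ x ∈ σ, x ∈ A) → ¬ ShuffleTopOccurs τ ν σ →
      (∀ x ∈ Phi M τ t u g σ, x ∈ A) ∧ (Phi M τ t u g σ).sum = σ.sum ∧
        (Phi M τ t u g σ).length = σ.length ∧
        ¬ ShuffleTopOccurs τ' ν' (Phi M τ t u g σ) ∧
        Phi M τ' t u g' (Phi M τ t u g σ) = σ := by
    intro σ hm hlet hav
    by_cases hHF : HF τ σ
    · obtain ⟨hg1, hg2, hg3, hg4, hg5, hg6⟩ :=
        hg σ (fun x hx => ⟨hlet x hx, fun hc => hm (hc ▸ hx)⟩) hav hHF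
      rw [Phi_not_mem hm, if_pos hHF]
      refine ⟨fun x hx => (hg1 x hx).1, hg2, hg3, hg4, ?_⟩
      rw [Phi_not_mem (fun hc => (hg1 M hc).2 rfl), if_pos hg5, hg6]
    · rw [Phi_not_mem hm, if_neg hHF]
      have htm : M ∉ t σ := fun hc => hm ((ht1 σ).mem_iff.mp hc)
      refine ⟨fun x hx => hlet x ((ht1 σ).mem_iff.mp hx), (ht1 σ).sum_eq,
        (ht1 σ).length_eq, not_Occ_of_not_HF (fun hc => hHF ((ht3 σ).mp hc)), ?_⟩
      rw [Phi_not_mem htm, if_neg (fun hc => hHF ((ht3 σ).mp hc)), ht2]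
  suffices H : ∀ L σ, σ.length ≤ L → (∀ x ∈ σ, x ∈ A) → ¬ ShuffleTopOccurs τ ν σ →
      (∀ x ∈ Phi M τ t u g σ, x ∈ A) ∧ (Phi M τ t u g σ).sum = σ.sum ∧
        (Phi M τ t u g σ).length = σ.length ∧
        ¬ ShuffleTopOccurs τ' ν' (Phi M τ t u g σ) ∧
        Phi M τ' t u g' (Phi M τ t u g σ) = σ by
    exact fun σ => H σ.length σ le_rfl
  intro L
  induction L with
  | zero =>
    intro σ hσ hlet hav
    have : σ = [] := List.length_eq_zero_iff.mp (by omega)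
    exact nomem σ (by simp [this]) hlet hav
  | succ L ih =>
    intro σ hσ hlet hav
    by_cases h : M ∈ σ
    · obtain ⟨he, hbnm⟩ := takeWhile_split h
      set b := σ.takeWhile (· ≠ M) with hB
      set r := (σ.dropWhile (· ≠ M)).tail with hR
      clear_value b r
      have hlen : r.length ≤ L := by
        have := congrArg List.length he
        rw [List.length_append, List.length_cons] at this
        omega
      subst he
      have hbA : ∀ x ∈ b, x ∈ A := fun x hx => hlet x (by simp [hx])
      have hrA : ∀ x ∈ r, x ∈ A := fun x hx => hlet x (by simp [hx])
      have hMA : M ∈ A := hlet M (by simp)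
      have hble : ∀ x ∈ b ++ M :: r, x ≤ M := fun x hx => hAle x (hlet x hx)
      rw [Occ_split hτ hν hbnm hble] at hav
      push_neg at hav
      obtain ⟨havb, havmid, havr⟩ := hav
      by_cases hHF : HF τ b
      · have hFree : ¬ FreeF M ν r := havmid hHF
        obtain ⟨hg1, hg2, hg3, hg4, hg5, hg6⟩ :=
          hg b (fun x hx => ⟨hbA x hx, fun hc => hbnm (hc ▸ hx)⟩) havb hHF
        obtain ⟨hm1, hm2, hm3⟩ := MapU_spec (M := M) hν hν' hu1 hu2 hu3 r
        have hgm : M ∉ g b := fun hc => (hg1 M hc).2 rfl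
        rw [Phi_split hbnm, if_pos hHF]
        have hletout : ∀ x ∈ g b ++ M :: MapU M u r, x ∈ A := by
          intro x hx
          rcases List.mem_append.mp hx with hx | hx
          · exact (hg1 x hx).1
          · rcases List.mem_cons.mp hx with rfl | hx
            · exact hMA
            · exact hrA x (hm1.mem_iff.mp hx)
        refine ⟨hletout, ?_, ?_, ?_, ?_⟩
        · simp only [List.sum_append, List.sum_cons, hg2, hm1.sum_eq]
        · simp only [List.length_append, List.length_cons, hg3, hm1.length_eq]
        · rw [Occ_split hτ' hν' hgm (fun x hx => hAle x (hletout x hx))]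
          push_neg
          have hFree' := hm3 hFree
          refine ⟨hg4, fun _ => hFree', ?_⟩
          exact not_Occ_of_not_FreeF hν'
            (fun x hx => hAle x (hrA x (hm1.mem_iff.mp hx))) hFree'
        · rw [Phi_split hgm, if_pos hg5, hg6, hm2]
      · obtain ⟨ih1, ih2, ih3, ih4, ih5⟩ := ih r hlen hrA havr
        have htm : M ∉ t b := fun hc => hbnm ((ht1 b).mem_iff.mp hc)
        have hHF' : ¬ HF τ' (t b) := fun hc => hHF ((ht3 b).mp hc)
        rw [Phi_split hbnm, if_neg hHF]
        have hletout : ∀ x ∈ t b ++ M :: Phi M τ t u g r, x ∈ A := by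
          intro x hx
          rcases List.mem_append.mp hx with hx | hx
          · exact hbA x ((ht1 b).mem_iff.mp hx)
          · rcases List.mem_cons.mp hx with rfl | hx
            · exact hMA
            · exact ih1 x hx
        refine ⟨hletout, ?_, ?_, ?_, ?_⟩
        · simp only [List.sum_append, List.sum_cons, (ht1 b).sum_eq, ih2]
        · simp only [List.length_append, List.length_cons, (ht1 b).length_eq, ih3]
        · rw [Occ_split hτ' hν' htm (fun x hx => hAle x (hletout x hx))]
          push_neg
          exact ⟨not_Occ_of_not_HF hHF', fun hc => absurd hc hHF', ih4⟩
        · rw [Phi_split htm, if_neg hHF', ht2, ih5]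
    · exact nomem σ h hlet hav
end PhiSpec

/-! ### Gluing fiberwise equivalences -/

def Fib (P : List ℕ → Prop) (n m : ℕ) : Set (List ℕ) := {b | P b ∧ b.sum = n ∧ b.length = m}

noncomputable def gFun (P Q : List ℕ → Prop) (E : ∀ n m, Fib P n m ≃ Fib Q n m)
    (b : List ℕ) : List ℕ :=
  if h : P b then (E b.sum b.length ⟨b, h, rfl, rfl⟩ : Fib Q b.sum b.length).val else b

lemma gFun_spec (P Q : List ℕ → Prop) (E : ∀ n m, Fib P n m ≃ Fib Q n m)
    (b : List ℕ) (h : P b) :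
    Q (gFun P Q E b) ∧ (gFun P Q E b).sum = b.sum ∧ (gFun P Q E b).length = b.length ∧
      gFun Q P (fun n m => (E n m).symm) (gFun P Q E b) = b := by
  set y := E b.sum b.length ⟨b, h, rfl, rfl⟩ with hy
  obtain ⟨hyQ, hysum, hylen⟩ := y.2
  have hgb : gFun P Q E b = y.val := by rw [gFun, dif_pos h]
  rw [hgb]
  refine ⟨hyQ, hysum, hylen, ?_⟩
  rw [gFun, dif_pos hyQ]
  have H : ∀ (n m : ℕ) (e1 : n = b.sum) (e2 : m = b.length) (hc : y.val ∈ Fib Q n m),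
      ((E n m).symm ⟨y.val, hc⟩).val = b := by
    rintro n m rfl rfl hc
    have : (⟨y.val, hc⟩ : Fib Q b.sum b.length) = y := Subtype.ext rfl
    rw [this, hy, Equiv.symm_apply_apply]
  exact H y.val.sum y.val.length hysum hylen ⟨hyQ, rfl, rfl⟩

lemma not_Occ_nil {τ ν : List ℕ} (hτ : τ ≠ []) : ¬ ShuffleTopOccurs τ ν [] := by
  rintro ⟨i, p, j, h1, -⟩
  have h2 := h1.1
  have h3 := List.length_pos_iff.mpr hτ
  simp only [List.length_nil] at h2
  omega

/-! ### The master theorem (top patterns) -/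

theorem master (τ ν τ' ν' : List ℕ) (hτ : τ ≠ []) (hν : ν ≠ []) (hτ' : τ' ≠ [])
    (hν' : ν' ≠ []) (t u : List ℕ → List ℕ)
    (ht1 : ∀ σ, (t σ).Perm σ) (ht2 : ∀ σ, t (t σ) = σ) (ht3 : ∀ σ, HF τ' (t σ) ↔ HF τ σ)
    (hu1 : ∀ σ, (u σ).Perm σ) (hu2 : ∀ σ, u (u σ) = σ) (hu3 : ∀ σ, HF ν' (u σ) ↔ HF ν σ) :
    ∀ A : Finset ℕ, ∀ n m : ℕ,
      {σ : List ℕ | IsCompOf A n m σ ∧ ¬ ShuffleTopOccurs τ ν σ}.ncard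
        = {σ : List ℕ | IsCompOf A n m σ ∧ ¬ ShuffleTopOccurs τ' ν' σ}.ncard := by
  have ht3' : ∀ σ, HF τ (t σ) ↔ HF τ' σ := fun σ => by
    have := ht3 (t σ); rw [ht2] at this; exact this.symm
  have hu3' : ∀ σ, HF ν (u σ) ↔ HF ν' σ := fun σ => by
    have := hu3 (u σ); rw [hu2] at this; exact this.symm
  intro A
  induction A using Finset.strongInduction with
  | _ A IH =>
  rcases Finset.eq_empty_or_nonempty A with rfl | hne
  · intro n m
    have empt : ∀ (w1 w2 : List ℕ), w1 ≠ [] →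
        {σ : List ℕ | IsCompOf ∅ n m σ ∧ ¬ ShuffleTopOccurs w1 w2 σ}
          = {σ : List ℕ | IsCompOf ∅ n m σ} := by
      intro w1 w2 hw1
      ext σ
      simp only [Set.mem_setOf_eq, and_iff_left_iff_imp]
      rintro ⟨hmem, -, -⟩
      have : σ = [] := by
        cases σ with
        | nil => rfl
        | cons x xs => exact absurd (hmem x (by simp)) (by simp)
      rw [this]
      exact not_Occ_nil hw1
    rw [empt τ ν hτ, empt τ' ν' hτ']
  · set M := A.max' hne with hM
    set A' := A.erase M with hA'
    have hMA : M ∈ A := A.max'_mem hne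
    have hAle : ∀ a ∈ A, a ≤ M := fun a ha => A.le_max' a ha
    have IH' := IH A' (Finset.erase_ssubset hMA)
    -- counting compositions avoiding a single consecutive pattern: `t` is a bijection
    have tcount : ∀ n m : ℕ,
        {σ : List ℕ | IsCompOf A' n m σ ∧ ¬ HF τ σ}.ncard
          = {σ : List ℕ | IsCompOf A' n m σ ∧ ¬ HF τ' σ}.ncard := by
      intro n m
      apply ncard_eq_of_inverse t t
      · rintro σ ⟨⟨hc1, hc2, hc3⟩, hHFσ⟩
        exact ⟨⟨fun x hx => hc1 x ((ht1 σ).mem_iff.mp hx), by rw [(ht1 σ).sum_eq, hc2],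
          by rw [(ht1 σ).length_eq, hc3]⟩, fun hc => hHFσ ((ht3 σ).mp hc)⟩
      · rintro σ ⟨⟨hc1, hc2, hc3⟩, hHFσ⟩
        exact ⟨⟨fun x hx => hc1 x ((ht1 σ).mem_iff.mp hx), by rw [(ht1 σ).sum_eq, hc2],
          by rw [(ht1 σ).length_eq, hc3]⟩, fun hc => hHFσ ((ht3' σ).mp hc)⟩
      · exact fun σ _ => ht2 σ
      · exact fun σ _ => ht2 σ
    set P : List ℕ → Prop :=
      fun b => (∀ x ∈ b, x ∈ A') ∧ ¬ ShuffleTopOccurs τ ν b ∧ HF τ b with hP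
    set Q : List ℕ → Prop :=
      fun b => (∀ x ∈ b, x ∈ A') ∧ ¬ ShuffleTopOccurs τ' ν' b ∧ HF τ' b with hQ
    have fibfin : ∀ (R : List ℕ → Prop) (hR : ∀ b, R b → ∀ x ∈ b, x ∈ A') (n m : ℕ),
        (Fib R n m).Finite := by
      intro R hR n m
      apply Set.Finite.subset (finite_lists A' m)
      rintro b ⟨hb1, hb2, hb3⟩
      exact ⟨hR b hb1, hb3⟩
    have fibeq : ∀ n m : ℕ, (Fib P n m).ncard = (Fib Q n m).ncard := by
      intro n m
      have he1 : Fib P n m = {σ : List ℕ | IsCompOf A' n m σ ∧ ¬ ShuffleTopOccurs τ ν σ}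
          \ {σ : List ℕ | IsCompOf A' n m σ ∧ ¬ HF τ σ} := by
        ext σ
        simp only [Fib, IsCompOf, Set.mem_setOf_eq, Set.mem_diff, hP]
        tauto
      have he2 : Fib Q n m = {σ : List ℕ | IsCompOf A' n m σ ∧ ¬ ShuffleTopOccurs τ' ν' σ}
          \ {σ : List ℕ | IsCompOf A' n m σ ∧ ¬ HF τ' σ} := by
        ext σ
        simp only [Fib, IsCompOf, Set.mem_setOf_eq, Set.mem_diff, hQ]
        tauto
      have hsub1 : {σ : List ℕ | IsCompOf A' n m σ ∧ ¬ HF τ σ}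
          ⊆ {σ : List ℕ | IsCompOf A' n m σ ∧ ¬ ShuffleTopOccurs τ ν σ} :=
        fun σ hσ => ⟨hσ.1, not_Occ_of_not_HF hσ.2⟩
      have hsub2 : {σ : List ℕ | IsCompOf A' n m σ ∧ ¬ HF τ' σ}
          ⊆ {σ : List ℕ | IsCompOf A' n m σ ∧ ¬ ShuffleTopOccurs τ' ν' σ} :=
        fun σ hσ => ⟨hσ.1, not_Occ_of_not_HF hσ.2⟩
      rw [he1, he2, Set.ncard_diff hsub1 (finite_comp_set _),
        Set.ncard_diff hsub2 (finite_comp_set _), IH' n m, tcount n m]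
    have Eex : ∀ n m : ℕ, Nonempty (Fib P n m ≃ Fib Q n m) := by
      intro n m
      have h1 := fibfin P (fun b hb => hb.1) n m
      have h2 := fibfin Q (fun b hb => hb.1) n m
      haveI := h1.to_subtype
      haveI := h2.to_subtype
      exact Finite.card_eq.mp
        (by rw [Nat.card_coe_set_eq, Nat.card_coe_set_eq, fibeq n m])
    set E : ∀ n m : ℕ, Fib P n m ≃ Fib Q n m := fun n m => Classical.choice (Eex n m) with hE
    set g : List ℕ → List ℕ := gFun P Q E with hgdef
    set g' : List ℕ → List ℕ := gFun Q P (fun n m => (E n m).symm) with hg'def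
    have memA' : ∀ x : ℕ, x ∈ A' ↔ x ∈ A ∧ x ≠ M := by
      intro x
      rw [hA', Finset.mem_erase]
      tauto
    have hg : ∀ b, (∀ x ∈ b, x ∈ A ∧ x ≠ M) → ¬ ShuffleTopOccurs τ ν b → HF τ b →
        (∀ x ∈ g b, x ∈ A ∧ x ≠ M) ∧ (g b).sum = b.sum ∧ (g b).length = b.length ∧
          ¬ ShuffleTopOccurs τ' ν' (g b) ∧ HF τ' (g b) ∧ g' (g b) = b := by
      intro b hb hOcc hHFb
      have hPb : P b := ⟨fun x hx => (memA' x).mpr (hb x hx), hOcc, hHFb⟩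
      obtain ⟨hQgb, hsum, hlen, hround⟩ := gFun_spec P Q E b hPb
      exact ⟨fun x hx => (memA' x).mp (hQgb.1 x hx), hsum, hlen, hQgb.2.1, hQgb.2.2, hround⟩
    have hg' : ∀ b, (∀ x ∈ b, x ∈ A ∧ x ≠ M) → ¬ ShuffleTopOccurs τ' ν' b → HF τ' b →
        (∀ x ∈ g' b, x ∈ A ∧ x ≠ M) ∧ (g' b).sum = b.sum ∧ (g' b).length = b.length ∧
          ¬ ShuffleTopOccurs τ ν (g' b) ∧ HF τ (g' b) ∧ g (g' b) = b := by
      intro b hb hOcc hHFb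
      have hQb : Q b := ⟨fun x hx => (memA' x).mpr (hb x hx), hOcc, hHFb⟩
      obtain ⟨hPgb, hsum, hlen, hround⟩ :=
        gFun_spec Q P (fun n m => (E n m).symm) b hQb
      have hback : gFun P Q (fun n m => ((E n m).symm).symm) (g' b) = b := hround
      simp only [Equiv.symm_symm] at hback
      exact ⟨fun x hx => (memA' x).mp (hPgb.1 x hx), hsum, hlen, hPgb.2.1, hPgb.2.2, hback⟩
    have spec1 := Phi_spec hAle hτ hν hτ' hν' ht1 ht2 ht3 hu1 hu2 hu3 hg
    have spec2 := Phi_spec hAle hτ' hν' hτ hν ht1 ht2 ht3' hu1 hu2 hu3' hg'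
    intro n m
    apply ncard_eq_of_inverse (Phi M τ t u g) (Phi M τ' t u g')
    · rintro σ ⟨⟨hc1, hc2, hc3⟩, hav⟩
      obtain ⟨s1, s2, s3, s4, s5⟩ := spec1 σ hc1 hav
      exact ⟨⟨s1, by rw [s2, hc2], by rw [s3, hc3]⟩, s4⟩
    · rintro σ ⟨⟨hc1, hc2, hc3⟩, hav⟩
      obtain ⟨s1, s2, s3, s4, s5⟩ := spec2 σ hc1 hav
      exact ⟨⟨s1, by rw [s2, hc2], by rw [s3, hc3]⟩, s4⟩
    · rintro σ ⟨⟨hc1, hc2, hc3⟩, hav⟩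
      exact (spec1 σ hc1 hav).2.2.2.2
    · rintro σ ⟨⟨hc1, hc2, hc3⟩, hav⟩
      exact (spec2 σ hc1 hav).2.2.2.2

/-! ### The complement map: bottom patterns reduce to top patterns -/

section Complement

variable {K : ℕ}

lemma getD_map_c {σ : List ℕ} {n : ℕ} (h : n < σ.length) :
    (σ.map (fun x => K + 1 - x)).getD n 0 = K + 1 - σ.getD n 0 := by
  rw [List.getD_eq_getElem _ _ (by simpa using h), List.getD_eq_getElem _ _ h, List.getElem_map]

lemma map_c_sum : ∀ σ : List ℕ, (∀ x ∈ σ, x ≤ K + 1) →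
    (σ.map (fun x => K + 1 - x)).sum + σ.sum = σ.length * (K + 1) := by
  intro σ h
  induction σ with
  | nil => simp
  | cons x xs ih =>
    have hx := h x (by simp)
    have hxs := ih (fun y hy => h y (by simp [hy]))
    simp only [List.map_cons, List.sum_cons, List.length_cons]
    ring_nf
    ring_nf at hxs
    omega

lemma map_c_map_c : ∀ σ : List ℕ, (∀ x ∈ σ, x ≤ K + 1) →
    ((σ.map (fun x => K + 1 - x)).map (fun x => K + 1 - x)) = σ := by
  intro σ h
  induction σ with
  | nil => simp
  | cons x xs ih =>
    have hx := h x (by simp)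
    simp only [List.map_cons]
    rw [ih (fun y hy => h y (by simp [hy]))]
    congr 1
    omega

lemma compl_lt_compl_iff {a b : ℕ} (K : ℕ) (ha : a ≤ K) (hb : b ≤ K) :
    K + 1 - a < K + 1 - b ↔ b < a := by omega

lemma wordIso_map_c {w σ : List ℕ} {i : ℕ} (hw : ∀ x ∈ w, x ≤ K) (hσ : ∀ x ∈ σ, x ≤ K) :
    WordIsoAt (w.map (fun x => K + 1 - x)) (σ.map (fun x => K + 1 - x)) i
      ↔ WordIsoAt w σ i := by
  constructor
  · rintro ⟨h1, h2⟩
    rw [List.length_map, List.length_map] at h1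
    refine ⟨h1, fun s t hs ht => ?_⟩
    have e := h2 t s (by rw [List.length_map]; exact ht) (by rw [List.length_map]; exact hs)
    rw [getD_map_c (by omega), getD_map_c (by omega), getD_map_c (by omega),
      getD_map_c (by omega)] at e
    have b1 := hw _ (getD_mem hs)
    have b2 := hw _ (getD_mem ht)
    have b3 := hσ _ (getD_mem (show i + s < σ.length by omega))
    have b4 := hσ _ (getD_mem (show i + t < σ.length by omega))
    rwa [compl_lt_compl_iff K b2 b1, compl_lt_compl_iff K b4 b3] at e
  · rintro ⟨h1, h2⟩
    refine ⟨by rw [List.length_map, List.length_map]; exact h1, fun s t hs ht => ?_⟩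
    rw [List.length_map] at hs ht
    have b1 := hw _ (getD_mem hs)
    have b2 := hw _ (getD_mem ht)
    have b3 := hσ _ (getD_mem (show i + s < σ.length by omega))
    have b4 := hσ _ (getD_mem (show i + t < σ.length by omega))
    rw [getD_map_c (by omega), getD_map_c (by omega), getD_map_c (by omega),
      getD_map_c (by omega), compl_lt_compl_iff K b1 b2, compl_lt_compl_iff K b3 b4]
    exact h2 t s ht hs

lemma Bot_iff_Top_map {τ ν σ : List ℕ} (hν : ν ≠ []) (hτK : ∀ x ∈ τ, x ≤ K)
    (hνK : ∀ x ∈ ν, x ≤ K) (hσK : ∀ x ∈ σ, x ≤ K) :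
    ShuffleBotOccurs τ ν σ ↔
      ShuffleTopOccurs (τ.map (fun x => K + 1 - x)) (ν.map (fun x => K + 1 - x))
        (σ.map (fun x => K + 1 - x)) := by
  have hνl : 0 < ν.length := List.length_pos_iff.mpr hν
  constructor
  · rintro ⟨i, p, j, h1, h2, h3, h4, h5, h6⟩
    have hp : p < σ.length := by have := h4.1; omega
    refine ⟨i, p, j, (wordIso_map_c hτK hσK).mpr h1, by simpa using h2, h3,
      (wordIso_map_c hνK hσK).mpr h4, fun s hs => ?_, fun t ht => ?_⟩
    · rw [List.length_map] at hs
      rw [getD_map_c (by have := h1.1; omega), getD_map_c hp]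
      have b1 := hσK _ (getD_mem (show i + s < σ.length by have := h1.1; omega))
      have b2 := hσK _ (getD_mem hp)
      have := h5 s hs
      omega
    · rw [List.length_map] at ht
      rw [getD_map_c (by have := h4.1; omega), getD_map_c hp]
      have b1 := hσK _ (getD_mem (show j + t < σ.length by have := h4.1; omega))
      have b2 := hσK _ (getD_mem hp)
      have := h6 t ht
      omega
  · rintro ⟨i, p, j, h1, h2, h3, h4, h5, h6⟩
    have hp : p < σ.length := by
      have := h4.1
      rw [List.length_map, List.length_map] at this
      omega
    refine ⟨i, p, j, (wordIso_map_c hτK hσK).mp h1, by simpa using h2, h3,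
      (wordIso_map_c hνK hσK).mp h4, fun s hs => ?_, fun t ht => ?_⟩
    · have hs' : s < (τ.map (fun x => K + 1 - x)).length := by simpa using hs
      have := h5 s hs'
      have hisl : i + s < σ.length := by
        have := h1.1; rw [List.length_map, List.length_map] at this; omega
      rw [getD_map_c hisl, getD_map_c hp] at this
      have b1 := hσK _ (getD_mem hisl)
      have b2 := hσK _ (getD_mem hp)
      omega
    · have ht' : t < (ν.map (fun x => K + 1 - x)).length := by simpa using ht
      have := h6 t ht'
      have hjtl : j + t < σ.length := by
        have := h4.1; rw [List.length_map, List.length_map] at this; omega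
      rw [getD_map_c hjtl, getD_map_c hp] at this
      have b1 := hσK _ (getD_mem hjtl)
      have b2 := hσK _ (getD_mem hp)
      omega

end Complement

theorem stmt7 (τ ν : List ℕ) (hτ : τ ≠ []) (hν : ν ≠ [])
    (hτpos : ∀ x ∈ τ, 0 < x) (hνpos : ∀ x ∈ ν, 0 < x)
    (f₁ f₂ : List ℕ → List ℕ)
    (hf₁ : f₁ = List.reverse ∨ f₁ = id) (hf₂ : f₂ = List.reverse ∨ f₂ = id) :
    ∀ (A : Finset ℕ), (∀ a ∈ A, 0 < a) → ∀ n m : ℕ,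
      (Set.ncard {σ : List ℕ | IsCompOf A n m σ ∧ ¬ ShuffleTopOccurs τ ν σ}
        = Set.ncard {σ : List ℕ | IsCompOf A n m σ ∧ ¬ ShuffleTopOccurs (f₁ τ) (f₂ ν) σ}) ∧
      (Set.ncard {σ : List ℕ | IsCompOf A n m σ ∧ ¬ ShuffleBotOccurs τ ν σ}
        = Set.ncard {σ : List ℕ | IsCompOf A n m σ ∧ ¬ ShuffleBotOccurs (f₁ τ) (f₂ ν) σ}) := by
  intro A hA n m
  have hf₁1 : ∀ σ : List ℕ, (f₁ σ).Perm σ := by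
    rcases hf₁ with rfl | rfl
    · exact fun σ => σ.reverse_perm
    · exact fun σ => List.Perm.refl σ
  have hf₁2 : ∀ σ : List ℕ, f₁ (f₁ σ) = σ := by
    rcases hf₁ with rfl | rfl
    · exact fun σ => σ.reverse_reverse
    · exact fun σ => rfl
  have hf₂1 : ∀ σ : List ℕ, (f₂ σ).Perm σ := by
    rcases hf₂ with rfl | rfl
    · exact fun σ => σ.reverse_perm
    · exact fun σ => List.Perm.refl σ
  have hf₂2 : ∀ σ : List ℕ, f₂ (f₂ σ) = σ := by
    rcases hf₂ with rfl | rfl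
    · exact fun σ => σ.reverse_reverse
    · exact fun σ => rfl
  have hτ1 : f₁ τ ≠ [] := by
    rcases hf₁ with rfl | rfl
    · simpa using hτ
    · exact hτ
  have hν1 : f₂ ν ≠ [] := by
    rcases hf₂ with rfl | rfl
    · simpa using hν
    · exact hν
  have hf₁3 : ∀ σ : List ℕ, HF (f₁ τ) (f₁ σ) ↔ HF τ σ := by
    rcases hf₁ with rfl | rfl
    · exact fun σ => HF_reverse
    · exact fun σ => Iff.rfl
  have hf₂3 : ∀ σ : List ℕ, HF (f₂ ν) (f₂ σ) ↔ HF ν σ := by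
    rcases hf₂ with rfl | rfl
    · exact fun σ => HF_reverse
    · exact fun σ => Iff.rfl
  constructor
  · exact master τ ν (f₁ τ) (f₂ ν) hτ hν hτ1 hν1 f₁ f₂ hf₁1 hf₁2 hf₁3 hf₂1 hf₂2 hf₂3 A n m
  · -- bottom patterns: reduce to top patterns via the complement map
    set K := A.sup id + τ.sum + ν.sum with hK
    have hAK : ∀ a ∈ A, a ≤ K := fun a ha => by
      have : a ≤ A.sup id := Finset.le_sup (f := id) ha
      omega
    have hτK : ∀ x ∈ τ, x ≤ K := fun x hx => by
      have : x ≤ τ.sum := List.single_le_sum (fun y _ => Nat.zero_le y) x hx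
      omega
    have hνK : ∀ x ∈ ν, x ≤ K := fun x hx => by
      have : x ≤ ν.sum := List.single_le_sum (fun y _ => Nat.zero_le y) x hx
      omega
    have hfτK : ∀ x ∈ f₁ τ, x ≤ K := fun x hx => hτK x ((hf₁1 τ).mem_iff.mp hx)
    have hfνK : ∀ x ∈ f₂ ν, x ≤ K := fun x hx => hνK x ((hf₂1 ν).mem_iff.mp hx)
    by_cases hn : n ≤ m * (K + 1)
    · have transfer : ∀ (w1 w2 : List ℕ), w1 ≠ [] → w2 ≠ [] →
          (∀ x ∈ w1, x ≤ K) → (∀ x ∈ w2, x ≤ K) →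
          {σ : List ℕ | IsCompOf A n m σ ∧ ¬ ShuffleBotOccurs w1 w2 σ}.ncard
            = {σ : List ℕ | IsCompOf (A.image (fun x => K + 1 - x)) (m * (K+1) - n) m σ ∧
                ¬ ShuffleTopOccurs (w1.map (fun x => K + 1 - x))
                  (w2.map (fun x => K + 1 - x)) σ}.ncard := by
        intro w1 w2 hw1 hw2 hw1K hw2K
        apply ncard_eq_of_inverse (List.map (fun x => K + 1 - x)) (List.map (fun x => K + 1 - x))
        · rintro σ ⟨⟨h1, h2, h3⟩, hav⟩
          have hσK : ∀ x ∈ σ, x ≤ K := fun x hx => hAK x (h1 x hx)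
          refine ⟨⟨?_, ?_, by simpa using h3⟩, ?_⟩
          · intro x hx
            rw [List.mem_map] at hx
            obtain ⟨a, ha, rfl⟩ := hx
            exact Finset.mem_image_of_mem _ (h1 a ha)
          · have hsum := map_c_sum (K := K) σ (fun x hx => by have := hσK x hx; omega)
            rw [h2, h3] at hsum
            omega
          · exact fun hcon => hav ((Bot_iff_Top_map hw2 hw1K hw2K hσK).mpr hcon)
        · rintro σ' ⟨⟨h1, h2, h3⟩, hav⟩
          have hmem : ∀ x ∈ σ', ∃ a ∈ A, K + 1 - a = x := fun x hx => by
            simpa using Finset.mem_image.mp (h1 x hx)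
          have hσ'K1 : ∀ x ∈ σ', x ≤ K + 1 := fun x hx => by
            obtain ⟨a, -, rfl⟩ := hmem x hx
            omega
          have hσ'cK : ∀ y ∈ σ'.map (fun x => K + 1 - x), y ≤ K := by
            intro y hy
            rw [List.mem_map] at hy
            obtain ⟨x, hx, rfl⟩ := hy
            obtain ⟨a, ha, rfl⟩ := hmem x hx
            have := hAK a ha
            omega
          refine ⟨⟨?_, ?_, by simpa using h3⟩, ?_⟩
          · intro y hy
            rw [List.mem_map] at hy
            obtain ⟨x, hx, rfl⟩ := hy
            obtain ⟨a, ha, rfl⟩ := hmem x hx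
            have haK := hAK a ha
            have he : K + 1 - (K + 1 - a) = a := by omega
            show K + 1 - (K + 1 - a) ∈ A
            rw [he]
            exact ha
          · have hsum := map_c_sum (K := K) σ' hσ'K1
            rw [h2, h3] at hsum
            omega
          · intro hcon
            apply hav
            have := (Bot_iff_Top_map hw2 hw1K hw2K hσ'cK).mp hcon
            rwa [map_c_map_c (K := K) σ' hσ'K1] at this
        · rintro σ ⟨⟨h1, -, -⟩, -⟩
          exact map_c_map_c (K := K) σ (fun x hx => by have := hAK x (h1 x hx); omega)
        · rintro σ' ⟨⟨h1, -, -⟩, -⟩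
          apply map_c_map_c (K := K) σ'
          intro x hx
          obtain ⟨a, -, ha⟩ := by simpa using Finset.mem_image.mp (h1 x hx)
          omega
      rw [transfer τ ν hτ hν hτK hνK, transfer (f₁ τ) (f₂ ν) hτ1 hν1 hfτK hfνK]
      have hm1 : ∀ (w : List ℕ), w ≠ [] → w.map (fun x => K + 1 - x) ≠ [] := by
        intro w hw
        simpa using hw
      have ht3 : ∀ σ : List ℕ, HF ((f₁ τ).map (fun x => K + 1 - x)) (f₁ σ)
          ↔ HF (τ.map (fun x => K + 1 - x)) σ := by
        rcases hf₁ with rfl | rfl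
        · intro σ
          rw [List.map_reverse]
          exact HF_reverse
        · exact fun σ => Iff.rfl
      have hu3 : ∀ σ : List ℕ, HF ((f₂ ν).map (fun x => K + 1 - x)) (f₂ σ)
          ↔ HF (ν.map (fun x => K + 1 - x)) σ := by
        rcases hf₂ with rfl | rfl
        · intro σ
          rw [List.map_reverse]
          exact HF_reverse
        · exact fun σ => Iff.rfl
      exact master (τ.map (fun x => K + 1 - x)) (ν.map (fun x => K + 1 - x))
        ((f₁ τ).map (fun x => K + 1 - x)) ((f₂ ν).map (fun x => K + 1 - x))
        (hm1 τ hτ) (hm1 ν hν) (hm1 _ hτ1) (hm1 _ hν1) f₁ f₂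
        hf₁1 hf₁2 ht3 hf₂1 hf₂2 hu3 (A.image (fun x => K + 1 - x)) (m * (K+1) - n) m
    · have hempty : ∀ (w1 w2 : List ℕ),
          {σ : List ℕ | IsCompOf A n m σ ∧ ¬ ShuffleBotOccurs w1 w2 σ} = ∅ := by
        intro w1 w2
        ext σ
        simp only [Set.mem_setOf_eq, Set.mem_empty_iff_false, iff_false, not_and]
        rintro ⟨h1, h2, h3⟩
        have hsum := map_c_sum (K := K) σ (fun x hx => by have := hAK x (h1 x hx); omega)
        rw [h2, h3] at hsum
        omega
      rw [hempty τ ν, hempty (f₁ τ) (f₂ ν)]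
end
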